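/- arXiv:math/0411292 — 13 statements merged into one kernel-verified Lean document; each statement's English description precedes it below -/
import Mathlib

section
/- If g : S¹ → S¹ is a continuous map homotopic to the angle-doubling map d(θ) = 2θ, then there exists a continuous surjective map α : S¹ → S¹ of degree one such that α ∘ g = d ∘ α. -/
open Function Set

/-- **Semiconjugacy to angle doubling** (Franks).  If `g` is a continuous map of the
circle `ℝ/ℤ` homotopic to the angle-doubling map `d θ = 2θ` (equivalently, `g` has a
continuous lift `g'` with `g' (x+1) = g' x + 2`), then there is a continuous surjective
degree-one map `α` with `α ∘ g = d ∘ α`. -/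
theorem stmt0
    (g : AddCircle (1 : ℝ) → AddCircle (1 : ℝ)) (hg : Continuous g)
    (g' : ℝ → ℝ) (hg' : Continuous g')
    (hlift : ∀ x : ℝ, g (x : AddCircle (1 : ℝ)) = ((g' x : ℝ) : AddCircle (1 : ℝ)))
    (hdeg : ∀ x : ℝ, g' (x + 1) = g' x + 2) :
    ∃ α : AddCircle (1 : ℝ) → AddCircle (1 : ℝ),
      Continuous α ∧ Function.Surjective α ∧
      (∃ α' : ℝ → ℝ, Continuous α' ∧ (∀ x : ℝ, α' (x + 1) = α' x + 1) ∧
        ∀ x : ℝ, α (x : AddCircle (1 : ℝ)) = ((α' x : ℝ) : AddCircle (1 : ℝ))) ∧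
      (∀ θ : AddCircle (1 : ℝ), α (g θ) = α θ + α θ) := by
  classical
  -- the displacement function
  set φ : ℝ → ℝ := fun x => g' x - 2 * x with hφdef
  have hφc : Continuous φ := hg'.sub (continuous_const.mul continuous_id)
  have hφp : Function.Periodic φ 1 := by
    intro x; simp only [hφdef, hdeg x]; ring
  -- a uniform bound on φ
  obtain ⟨C, hC⟩ := isCompact_Icc.exists_bound_of_continuousOn
    (s := Icc (0:ℝ) 1) hφc.continuousOn
  have hCb : ∀ y : ℝ, ‖φ y‖ ≤ C := by
    intro y
    have h1 : φ (y - (⌊y⌋ : ℝ) * 1) = φ y := hφp.sub_int_mul_eq ⌊y⌋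
    have h2 : Int.fract y ∈ Icc (0:ℝ) 1 :=
      ⟨Int.fract_nonneg y, (Int.fract_lt_one y).le⟩
    have : φ (Int.fract y) = φ y := by
      rw [Int.fract]; simpa using h1
    rw [← this]; exact hC _ h2
  have hC0 : (0:ℝ) ≤ C := le_trans (norm_nonneg _) (hCb 0)
  -- the series terms
  set f : ℕ → ℝ → ℝ := fun n x => φ (g'^[n] x) / 2 ^ (n + 1) with hfdef
  have hfc : ∀ n, Continuous (f n) :=
    fun n => (hφc.comp (hg'.iterate n)).div_const _
  set u : ℕ → ℝ := fun n => C / 2 ^ (n + 1) with hudef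
  have hu : Summable u := by
    have : u = fun n => (C / 2) * (1 / 2) ^ n := by
      funext n; simp [hudef, pow_succ, div_pow]; ring
    rw [this]; exact summable_geometric_two.mul_left _
  have hfu : ∀ n x, ‖f n x‖ ≤ u n := by
    intro n x
    have h2 : (0:ℝ) < 2 ^ (n + 1) := by positivity
    simp only [hfdef, hudef, norm_div, norm_pow, Real.norm_ofNat]
    exact div_le_div_of_nonneg_right (hCb _) h2.le
  have hsum : ∀ x, Summable (fun n => f n x) :=
    fun x => Summable.of_norm_bounded hu (fun n => hfu n x)
  set T : ℝ → ℝ := fun x => ∑' n, f n x with hTdef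
  have hTc : Continuous T := continuous_tsum hfc hu hfu
  set α' : ℝ → ℝ := fun x => x + T x with hα'def
  have hα'c : Continuous α' := continuous_id.add hTc
  -- iterate lemmas
  have hnat : ∀ (m : ℕ) (y : ℝ), g' (y + m) = g' y + 2 * m := by
    intro m
    induction m with
    | zero => simp
    | succ k ih =>
      intro y
      have : y + (k + 1 : ℕ) = (y + k) + 1 := by push_cast; ring
      rw [this, hdeg, ih]; push_cast; ring
  have hiter : ∀ (n : ℕ) (x : ℝ), g'^[n] (x + 1) = g'^[n] x + (2 ^ n : ℕ) := by
    intro n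
    induction n with
    | zero => simp
    | succ k ih =>
      intro x
      rw [Function.iterate_succ_apply', Function.iterate_succ_apply', ih, hnat]
      push_cast; ring
  -- periodicity of T
  have hT1 : ∀ x, T (x + 1) = T x := by
    intro x
    apply tsum_congr
    intro n
    have hper : φ (g'^[n] x + ((2 ^ n : ℕ) : ℝ) * 1) = φ (g'^[n] x) :=
      (hφp.nat_mul (2 ^ n)) (g'^[n] x)
    simp only [hfdef, hiter n x]
    rw [show g'^[n] x + ((2 ^ n : ℕ) : ℝ) = g'^[n] x + ((2 ^ n : ℕ) : ℝ) * 1 by ring, hper]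
  have hα1 : ∀ x, α' (x + 1) = α' x + 1 := by
    intro x; show (x+1) + T (x+1) = (x + T x) + 1; rw [hT1 x]; ring
  -- integer translations
  have hαint : ∀ (k : ℤ) (x : ℝ), α' (x + k) = α' x + k := by
    have hper : Function.Periodic (fun x => α' x - x) 1 := by
      intro x; show α' (x + 1) - (x + 1) = α' x - x; rw [hα1 x]; ring
    intro k x
    have := (hper.int_mul k) x
    simp only [mul_one] at this
    have h' : α' (x + k) - (x + k) = α' x - x := this
    linarith
  -- the doubling functional equation
  have hTfe : ∀ x, T x = (φ x + T (g' x)) / 2 := by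
    intro x
    have h0 : T x = f 0 x + ∑' n, f (n + 1) x := Summable.tsum_eq_zero_add (hsum x)
    have h1 : ∀ n, f (n + 1) x = f n (g' x) / 2 := by
      intro n
      simp only [hfdef, Function.iterate_succ_apply, pow_succ]
      ring
    rw [h0]
    simp only [h1]
    rw [tsum_div_const]
    simp only [hfdef, Function.iterate_zero, id_eq, pow_one]
    ring
  have hfe : ∀ x, α' (g' x) = 2 * α' x := by
    intro x
    have hgx : g' x = 2 * x + φ x := by simp [hφdef]
    show g' x + T (g' x) = 2 * (x + T x)
    linarith [hTfe x]
  -- descend to the circle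
  have hwd : ∀ a b : ℝ, @Setoid.r ℝ (QuotientAddGroup.leftRel (AddSubgroup.zmultiples (1:ℝ))) a b →
      ((α' a : ℝ) : AddCircle (1:ℝ)) = ((α' b : ℝ) : AddCircle (1:ℝ)) := by
    intro a b hab
    rw [QuotientAddGroup.leftRel_apply] at hab
    obtain ⟨k, hk⟩ := AddSubgroup.mem_zmultiples_iff.mp hab
    have hb : b = a + k := by
      have : -a + b = (k : ℝ) := by rw [← hk]; simp
      linarith
    rw [hb, hαint k a]
    symm
    rw [QuotientAddGroup.eq_iff_sub_mem]
    rw [show α' a + (k:ℝ) - α' a = k • (1:ℝ) by simp]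
    exact AddSubgroup.zsmul_mem_zmultiples _ k
  set α : AddCircle (1:ℝ) → AddCircle (1:ℝ) :=
    fun θ => Quotient.liftOn' θ (fun x => ((α' x : ℝ) : AddCircle (1:ℝ))) hwd with hαdef
  have hαmk : ∀ x : ℝ, α ((x : ℝ) : AddCircle (1:ℝ)) = ((α' x : ℝ) : AddCircle (1:ℝ)) :=
    fun x => rfl
  have hαc : Continuous α :=
    Continuous.quotient_liftOn' (continuous_quotient_mk'.comp hα'c) hwd
  -- surjectivity via IVT
  have hsurj : Function.Surjective α := by
    intro θ
    obtain ⟨y, hy⟩ : ∃ y : ℝ, y ∈ Ico (α' 0) (α' 0 + 1) ∧ ((y : ℝ) : AddCircle (1:ℝ)) = θ := by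
      refine ⟨(AddCircle.equivIco 1 (α' 0) θ : ℝ), (AddCircle.equivIco 1 (α' 0) θ).2, ?_⟩
      exact (AddCircle.equivIco 1 (α' 0)).symm_apply_apply θ
    have h01 : (0:ℝ) ≤ 1 := zero_le_one
    have hIVT : Icc (α' 0) (α' 1) ⊆ α' '' Icc 0 1 :=
      intermediate_value_Icc h01 hα'c.continuousOn
    have hy' : y ∈ Icc (α' 0) (α' 1) := by
      rw [show α' (1:ℝ) = α' 0 + 1 by simpa using hα1 0]
      exact ⟨hy.1.1, hy.1.2.le⟩
    obtain ⟨x, _, hx⟩ := hIVT hy'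
    exact ⟨(x : AddCircle (1:ℝ)), by rw [hαmk, hx, hy.2]⟩
  refine ⟨α, hαc, hsurj, ⟨α', hα'c, hα1, hαmk⟩, ?_⟩
  intro θ
  induction θ using QuotientAddGroup.induction_on with
  | H x =>
    rw [show ((x : ℝ) : AddCircle (1:ℝ)) = ((x:ℝ) : AddCircle (1:ℝ)) from rfl]
    rw [hlift x, hαmk, hαmk, hfe x, two_mul, AddCircle.coe_add]
end

section
/- Let g̃ : ℝ → ℝ be a lift of a continuous degree-two circle map, and let B₁ be the space of lifts of continuous degree-one circle maps (continuous f : ℝ → ℝ with f(x+1) = f(x)+1) equipped with the sup metric on f - id. Then the operator F(f) = (f ∘ g̃)/2 maps B₁ to B₁ and is a contraction with contraction constant 1/2; in particular F has a unique fixed point α̃ satisfying α̃ ∘ g̃ = 2·α̃. -/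
open BoundedContinuousFunction

lemma periodic_bdd {f : ℝ → ℝ} (hf : Continuous f) (hp : ∀ x, f (x + 1) = f x) :
    ∃ C, ∀ x, |f x| ≤ C := by
  obtain ⟨C, hC⟩ := (isCompact_Icc (a := (0:ℝ)) (b := 1)).exists_bound_of_continuousOn
    hf.continuousOn
  refine ⟨C, fun x => ?_⟩
  have hper : Function.Periodic f 1 := hp
  have h1 : f (Int.fract x) = f x := by
    have h2 := hper.sub_int_mul_eq (x := x) (n := ⌊x⌋)
    rw [mul_one] at h2
    rw [Int.fract, h2]
  rw [← h1]
  simpa using hC (Int.fract x) ⟨Int.fract_nonneg x, (Int.fract_lt_one x).le⟩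

/-- The operator `F f = (f ∘ g̃)/2` preserves the space `B₁` of lifts of degree-one
circle maps, is a `1/2`-contraction for the sup metric on `B₁`, and hence has a unique
fixed point `α̃` in `B₁`, which satisfies `α̃ ∘ g̃ = 2 α̃`. -/
theorem stmt1
    (g' : ℝ → ℝ) (hg' : Continuous g') (hdeg : ∀ x : ℝ, g' (x + 1) = g' x + 2)
    (B1 : Set (ℝ → ℝ)) (hB1 : B1 = {f | Continuous f ∧ ∀ x : ℝ, f (x + 1) = f x + 1})
    (F : (ℝ → ℝ) → (ℝ → ℝ)) (hF : F = fun f x => f (g' x) / 2) :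
    (∀ f ∈ B1, F f ∈ B1) ∧
    (∀ f₁ ∈ B1, ∀ f₂ ∈ B1, ∀ x : ℝ,
      |F f₁ x - F f₂ x| ≤ (1 / 2) * ⨆ y : ℝ, |f₁ y - f₂ y|) ∧
    (∃! a : ℝ → ℝ, a ∈ B1 ∧ ∀ x : ℝ, a (g' x) = 2 * a x) := by
  subst hB1; subst hF
  refine ⟨?_, ?_, ?_⟩
  · rintro f ⟨hfc, hfp⟩
    refine ⟨(hfc.comp hg').div_const 2, fun x => ?_⟩
    simp only [hdeg]
    rw [show g' x + 2 = g' x + 1 + 1 by ring, hfp, hfp]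
    ring
  · rintro f₁ ⟨h1c, h1p⟩ f₂ ⟨h2c, h2p⟩ x
    have hbdd : BddAbove (Set.range fun y => |f₁ y - f₂ y|) := by
      obtain ⟨C, hC⟩ := periodic_bdd (f := fun y => f₁ y - f₂ y) (h1c.sub h2c)
        (fun y => by show f₁ (y + 1) - f₂ (y + 1) = f₁ y - f₂ y; rw [h1p, h2p]; ring)
      refine ⟨C, ?_⟩
      rintro _ ⟨y, rfl⟩
      simpa using hC y
    have h := le_ciSup hbdd (g' x)
    have heq : |f₁ (g' x) / 2 - f₂ (g' x) / 2| = |f₁ (g' x) - f₂ (g' x)| / 2 := by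
      rw [show f₁ (g' x) / 2 - f₂ (g' x) / 2 = (f₁ (g' x) - f₂ (g' x)) / 2 by ring,
        abs_div, abs_two]
    simp only [heq]
    linarith
  · -- Part 3: fixed point via contraction on bounded continuous periodic functions
    obtain ⟨C, hC⟩ := periodic_bdd (f := fun x => g' x - 2 * x)
      (hg'.sub (continuous_const.mul continuous_id))
      (fun x => by show g' (x + 1) - 2 * (x + 1) = g' x - 2 * x; rw [hdeg]; ring)
    set Y : Set (BoundedContinuousFunction ℝ ℝ) := {p | ∀ x, p (x + 1) = p x} with hY
    have hYc : IsClosed Y := by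
      have : Y = ⋂ x : ℝ, {p : BoundedContinuousFunction ℝ ℝ | p (x + 1) = p x} := by
        ext p; simp [hY, Set.mem_iInter]
      rw [this]
      exact isClosed_iInter fun x =>
        isClosed_eq (continuous_eval_const (x + 1))
          (continuous_eval_const x)
    haveI : CompleteSpace Y := hYc.completeSpace_coe
    haveI : Nonempty Y := ⟨⟨0, fun x => rfl⟩⟩
    have Tcont : ∀ p : BoundedContinuousFunction ℝ ℝ,
        Continuous (fun x => (g' x + p (g' x)) / 2 - x) := fun p =>
      ((hg'.add (p.continuous.comp hg')).div_const 2).sub continuous_id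
    have Tbd : ∀ p : BoundedContinuousFunction ℝ ℝ, ∀ x,
        ‖(g' x + p (g' x)) / 2 - x‖ ≤ C / 2 + ‖p‖ / 2 := by
      intro p x
      have h1 := hC x
      have h2 := p.norm_coe_le_norm (g' x)
      rw [Real.norm_eq_abs]
      rw [Real.norm_eq_abs] at h2
      rw [show (g' x + p (g' x)) / 2 - x = (g' x - 2 * x) / 2 + p (g' x) / 2 by ring]
      calc |(g' x - 2 * x) / 2 + p (g' x) / 2|
          ≤ |(g' x - 2 * x) / 2| + |p (g' x) / 2| := abs_add_le _ _
        _ = |g' x - 2 * x| / 2 + |p (g' x)| / 2 := by rw [abs_div, abs_div, abs_two]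
        _ ≤ C / 2 + ‖p‖ / 2 := by linarith
    have Tper : ∀ p : Y, ∀ x : ℝ,
        (g' (x + 1) + (p : BoundedContinuousFunction ℝ ℝ) (g' (x + 1))) / 2 - (x + 1)
          = (g' x + (p : BoundedContinuousFunction ℝ ℝ) (g' x)) / 2 - x := by
      intro p x
      have hp2 : (p : BoundedContinuousFunction ℝ ℝ) (g' x + 2)
          = (p : BoundedContinuousFunction ℝ ℝ) (g' x) := by
        rw [show g' x + 2 = g' x + 1 + 1 by ring, p.2, p.2]
      rw [hdeg, hp2]
      ring
    set T : Y → Y := fun p =>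
      ⟨ofNormedAddCommGroup (fun x => (g' x + (p : BoundedContinuousFunction ℝ ℝ) (g' x)) / 2 - x)
        (Tcont p) (C / 2 + ‖(p : BoundedContinuousFunction ℝ ℝ)‖ / 2) (Tbd p),
        fun x => by simpa using Tper p x⟩ with hT
    have hTapp : ∀ (p : Y) (x : ℝ), ((T p : Y) : BoundedContinuousFunction ℝ ℝ) x
        = (g' x + (p : BoundedContinuousFunction ℝ ℝ) (g' x)) / 2 - x := by
      intro p x; simp [hT]
    have hcontr : ContractingWith (1 / 2 : NNReal) T := by
      constructor
      · norm_num
      · apply LipschitzWith.of_dist_le_mul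
        intro p q
        rw [Subtype.dist_eq]
        have h0 : (0 : ℝ) ≤ (1 / 2 : NNReal) * dist p q := by positivity
        rw [BoundedContinuousFunction.dist_le h0]
        intro x
        rw [hTapp, hTapp]
        have hd : dist ((p : BoundedContinuousFunction ℝ ℝ) (g' x))
            ((q : BoundedContinuousFunction ℝ ℝ) (g' x))
            ≤ dist (p : BoundedContinuousFunction ℝ ℝ) (q : BoundedContinuousFunction ℝ ℝ) :=
          BoundedContinuousFunction.dist_coe_le_dist _
        rw [Subtype.dist_eq] at *
        rw [Real.dist_eq] at *
        rw [show (g' x + (p : BoundedContinuousFunction ℝ ℝ) (g' x)) / 2 - x -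
            ((g' x + (q : BoundedContinuousFunction ℝ ℝ) (g' x)) / 2 - x)
            = ((p : BoundedContinuousFunction ℝ ℝ) (g' x) -
              (q : BoundedContinuousFunction ℝ ℝ) (g' x)) / 2 by ring, abs_div, abs_two]
        push_cast
        linarith
    set p := hcontr.fixedPoint T with hp
    have hfix : T p = p := hcontr.fixedPoint_isFixedPt
    have hfixapp : ∀ x : ℝ, (g' x + (p : BoundedContinuousFunction ℝ ℝ) (g' x)) / 2 - x
        = (p : BoundedContinuousFunction ℝ ℝ) x := by
      intro x
      rw [← hTapp p x, hfix]
    refine ⟨fun x => x + (p : BoundedContinuousFunction ℝ ℝ) x, ⟨⟨?_, ?_⟩, ?_⟩, ?_⟩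
    · exact continuous_id.add (map_continuous _)
    · intro x
      show x + 1 + (p : BoundedContinuousFunction ℝ ℝ) (x + 1)
        = x + (p : BoundedContinuousFunction ℝ ℝ) x + 1
      rw [p.2 x]; ring
    · intro x
      show g' x + (p : BoundedContinuousFunction ℝ ℝ) (g' x)
        = 2 * (x + (p : BoundedContinuousFunction ℝ ℝ) x)
      have h := hfixapp x
      linarith
    · rintro b ⟨⟨hbc, hbp⟩, hbeq⟩
      have hqper : ∀ x : ℝ, b (x + 1) - (x + 1) = b x - x := by
        intro x; rw [hbp]; ring
      obtain ⟨D, hD⟩ := periodic_bdd (f := fun x => b x - x)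
        (hbc.sub continuous_id) hqper
      set qB : BoundedContinuousFunction ℝ ℝ :=
        ofNormedAddCommGroup (fun x => b x - x) (hbc.sub continuous_id) D
          (fun x => by simpa [Real.norm_eq_abs] using hD x) with hqB
      have hqBapp : ∀ x, qB x = b x - x := fun x => rfl
      have hqY : qB ∈ Y := fun x => by rw [hqBapp, hqBapp]; exact hqper x
      have hfixq : T ⟨qB, hqY⟩ = ⟨qB, hqY⟩ := by
        apply Subtype.ext
        apply BoundedContinuousFunction.ext
        intro x
        have := hTapp ⟨qB, hqY⟩ x
        rw [this]
        rw [hqBapp, hqBapp, hbeq x]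
        ring
      have : (⟨qB, hqY⟩ : Y) = p := hcontr.fixedPoint_unique hfixq
      funext x
      have hx : qB x = (p : BoundedContinuousFunction ℝ ℝ) x := by rw [← this]
      rw [hqBapp] at hx
      linarith
end

section
/- Let g̃ = 2·id + φ be a lift of a continuous degree-two circle map, where φ : ℝ → ℝ is continuous and 1-periodic. Then the unique lift α̃ of the degree-one semiconjugacy satisfying α̃ ∘ g̃ = 2·α̃ is given by α̃(x) = x + Σ_{i=0}^{∞} φ(g̃^i(x))/2^{i+1}, with the series converging uniformly. -/
/-- If `g̃ = 2·id + φ` with `φ` continuous and 1-periodic, then the degree-one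
semiconjugacy lift `α̃` (with `α̃ ∘ g̃ = 2 α̃`) is given by the uniformly convergent
series `α̃ x = x + ∑_{i≥0} φ(g̃^i x)/2^{i+1}`. -/
theorem stmt2
    (φ : ℝ → ℝ) (hφ : Continuous φ) (hper : ∀ x : ℝ, φ (x + 1) = φ x)
    (g' : ℝ → ℝ) (hg' : g' = fun x => 2 * x + φ x)
    (a : ℝ → ℝ) (ha : Continuous a) (hadeg : ∀ x : ℝ, a (x + 1) = a x + 1)
    (hsemi : ∀ x : ℝ, a (g' x) = 2 * a x) :
    TendstoUniformly
      (fun n x => x + ∑ i ∈ Finset.range n, φ (g'^[i] x) / 2 ^ (i + 1))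
      a Filter.atTop := by
  set h : ℝ → ℝ := fun x => a x - x with hh
  have hhc : Continuous h := ha.sub continuous_id
  have hhper : Function.Periodic h 1 := by
    intro x; simp only [hh, hadeg x]; ring
  -- bound on h
  obtain ⟨C, hC⟩ := (isCompact_Icc (a := (0:ℝ)) (b := 1)).exists_bound_of_continuousOn
    hhc.continuousOn
  have hbound : ∀ x, |h x| ≤ C := by
    intro x
    have hfr : h (Int.fract x) = h x := by
      rw [Int.fract]
      have := hhper.sub_int_mul_eq (x := x) ⌊x⌋
      simpa using this
    rw [← hfr]
    exact hC _ ⟨Int.fract_nonneg x, le_of_lt (Int.fract_lt_one x)⟩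
  have hC0 : 0 ≤ C := le_trans (abs_nonneg _) (hbound 0)
  -- key identity
  have key : ∀ n x, a x - (x + ∑ i ∈ Finset.range n, φ (g'^[i] x) / 2 ^ (i + 1))
      = h (g'^[n] x) / 2 ^ n := by
    intro n x
    induction n with
    | zero => simp [hh]
    | succ n ih =>
        rw [Finset.sum_range_succ, Function.iterate_succ_apply']
        set y := g'^[n] x with hy
        have hgy : g' y = 2 * y + φ y := by rw [hg']
        have hstep : h (g' y) = 2 * h y - φ y := by
          simp only [hh]
          rw [hsemi y, hgy]; ring
        rw [hstep, pow_succ]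
        have e1 : (2 * h y - φ y) / (2 ^ n * 2) = h y / 2 ^ n - φ y / (2 ^ n * 2) := by
          have : (2:ℝ) ^ n ≠ 0 := by positivity
          field_simp
        rw [e1]
        linarith [ih]
  rw [Metric.tendstoUniformly_iff]
  intro ε hε
  obtain ⟨N, hN⟩ := pow_unbounded_of_one_lt (C / ε) (one_lt_two (α := ℝ))
  filter_upwards [Filter.eventually_ge_atTop N] with n hn x
  have h2n : (C / ε) < 2 ^ n :=
    lt_of_lt_of_le hN (pow_le_pow_right₀ one_le_two hn)
  have hpow : (0:ℝ) < 2 ^ n := pow_pos two_pos n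
  have hd : dist (a x) (x + ∑ i ∈ Finset.range n, φ (g'^[i] x) / 2 ^ (i + 1))
      = |h (g'^[n] x)| / 2 ^ n := by
    rw [Real.dist_eq, key n x, abs_div, abs_of_pos hpow]
  rw [hd, div_lt_iff₀ hpow]
  have hCe : C < ε * 2 ^ n := by
    rw [div_lt_iff₀ hε] at h2n; linarith
  exact lt_of_le_of_lt (hbound _) hCe
end

section
/- Let g̃ be a lift of a continuous degree-two circle map with α̃ its degree-one semiconjugacy lift (α̃ ∘ g̃ = 2·α̃, α̃(x+1) = α̃(x)+1). Then the iterates g̃ⁿ(x)/2ⁿ converge uniformly to α̃(x) as n → ∞. -/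
/-- The iterates `g̃ⁿ(x)/2ⁿ` converge uniformly to the lift `α̃` of the semiconjugacy. -/
theorem stmt3
    (g' : ℝ → ℝ) (hg' : Continuous g') (hdeg : ∀ x : ℝ, g' (x + 1) = g' x + 2)
    (a : ℝ → ℝ) (ha : Continuous a) (hadeg : ∀ x : ℝ, a (x + 1) = a x + 1)
    (hsemi : ∀ x : ℝ, a (g' x) = 2 * a x) :
    TendstoUniformly (fun n x => g'^[n] x / 2 ^ n) a Filter.atTop := by
  set h : ℝ → ℝ := fun x => a x - x with hh
  have hper : Function.Periodic h 1 := by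
    intro x; simp only [hh, hadeg x]; ring
  have hcont : Continuous h := ha.sub continuous_id
  obtain ⟨M, hM⟩ : ∃ M, ∀ x ∈ Set.Icc (0:ℝ) 1, |h x| ≤ M :=
    isCompact_Icc.exists_bound_of_continuousOn hcont.continuousOn
  have hbound : ∀ x : ℝ, |h x| ≤ M := by
    intro x
    have h1 : h (Int.fract x) = h x := by
      unfold Int.fract
      simpa using hper.sub_int_mul_eq (x := x) (n := ⌊x⌋)
    rw [← h1]
    exact hM _ ⟨Int.fract_nonneg x, (Int.fract_lt_one x).le⟩
  have hiter : ∀ n : ℕ, ∀ x : ℝ, a (g'^[n] x) = 2 ^ n * a x := by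
    intro n
    induction n with
    | zero => intro x; simp
    | succ n ih =>
      intro x
      rw [Function.iterate_succ_apply', hsemi, ih]; ring
  have key : ∀ n : ℕ, ∀ x : ℝ, |g'^[n] x / 2 ^ n - a x| ≤ M / 2 ^ n := by
    intro n x
    have h2 : (0:ℝ) < 2 ^ n := by positivity
    have h3 : -(h (g'^[n] x)) = g'^[n] x - 2 ^ n * a x := by
      simp only [hh]; rw [hiter n x]; ring
    have heq : g'^[n] x / 2 ^ n - a x = -(h (g'^[n] x)) / 2 ^ n := by
      rw [h3]; field_simp
    rw [heq, abs_div, abs_neg, abs_of_pos h2]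
    gcongr
    exact hbound _
  rw [Metric.tendstoUniformly_iff]
  intro ε hε
  have hlim : Filter.Tendsto (fun n : ℕ => M / 2 ^ n) Filter.atTop (nhds 0) := by
    apply Filter.Tendsto.div_atTop tendsto_const_nhds
    exact tendsto_pow_atTop_atTop_of_one_lt one_lt_two
  filter_upwards [hlim.eventually (gt_mem_nhds hε)] with n hn x
  rw [Real.dist_eq]
  calc |a x - g'^[n] x / 2 ^ n| = |g'^[n] x / 2 ^ n - a x| := abs_sub_comm _ _
    _ ≤ M / 2 ^ n := key n x
    _ < ε := hn
end

section
/- Let g̃ = 2·id + φ be a lift of a continuous degree-two circle map (φ continuous, 1-periodic) and α̃ its degree-one semiconjugacy lift. Then for all x ∈ ℝ and all n ≥ 0, |g̃ⁿ(x) − 2ⁿ·α̃(x)| ≤ ‖φ‖_∞ (global shadowing of the g̃-orbit of x by the doubling orbit of α̃(x)). -/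
lemma per_max (f : ℝ → ℝ) (hf : Continuous f) (hp : ∀ x, f (x + 1) = f x) :
    ∃ x0 ∈ Set.Icc (0:ℝ) 1, ∀ x, |f x| ≤ |f x0| := by
  have hper : Function.Periodic f 1 := hp
  obtain ⟨x0, hx0, hmax⟩ := (isCompact_Icc (a := (0:ℝ)) (b := 1)).exists_isMaxOn
    (Set.nonempty_Icc.2 zero_le_one) (hf.abs.continuousOn)
  refine ⟨x0, hx0, fun x => ?_⟩
  have hfr : f (Int.fract x) = f x := by
    have h : Int.fract x = x - (⌊x⌋ : ℝ) * 1 := by rw [Int.fract]; ring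
    rw [h]; exact hper.sub_int_mul_eq ⌊x⌋
  have hmem : Int.fract x ∈ Set.Icc (0:ℝ) 1 :=
    ⟨Int.fract_nonneg x, (Int.fract_lt_one x).le⟩
  have := hmax hmem
  simpa [hfr] using this

/-- Global shadowing: `|g̃ⁿ(x) − 2ⁿ α̃(x)| ≤ ‖φ‖_∞` for all `x` and `n`. -/
theorem stmt4
    (φ : ℝ → ℝ) (hφ : Continuous φ) (hper : ∀ x : ℝ, φ (x + 1) = φ x)
    (g' : ℝ → ℝ) (hg' : g' = fun x => 2 * x + φ x)
    (a : ℝ → ℝ) (ha : Continuous a) (hadeg : ∀ x : ℝ, a (x + 1) = a x + 1)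
    (hsemi : ∀ x : ℝ, a (g' x) = 2 * a x) :
    ∀ (x : ℝ) (n : ℕ), |g'^[n] x - 2 ^ n * a x| ≤ ⨆ y : ℝ, |φ y| := by
  set γ : ℝ → ℝ := fun x => a x - x with hγ
  have hγc : Continuous γ := ha.sub continuous_id
  have hγp : ∀ x, γ (x + 1) = γ x := by
    intro x; simp only [hγ]; rw [hadeg]; ring
  obtain ⟨x0, _, hγmax⟩ := per_max γ hγc hγp
  obtain ⟨y0, _, hφmax⟩ := per_max φ hφ hper
  -- sup of |φ| bounds
  have hbdd : BddAbove (Set.range fun y => |φ y|) := ⟨|φ y0|, by rintro _ ⟨y, rfl⟩; exact hφmax y⟩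
  have hsup : ∀ y, |φ y| ≤ ⨆ y : ℝ, |φ y| := fun y => le_ciSup hbdd y
  -- functional equation for γ
  have hfe : ∀ x, γ x = (γ (g' x) + φ x) / 2 := by
    intro x
    have : a (g' x) = 2 * a x := hsemi x
    simp only [hγ, hg'] at *
    linarith [this]
  -- γ bounded by sup |φ|
  have hγb : ∀ x, |γ x| ≤ ⨆ y : ℝ, |φ y| := by
    have h0 : |γ x0| ≤ |φ x0| := by
      have h1 : |γ x0| ≤ (|γ (g' x0)| + |φ x0|) / 2 := by
        rw [hfe x0, abs_div]
        have := abs_add_le (γ (g' x0)) (φ x0)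
        have h2 : |(2:ℝ)| = 2 := by norm_num
        rw [h2]; linarith
      have h2 : |γ (g' x0)| ≤ |γ x0| := hγmax _
      linarith
    intro x
    exact (hγmax x).trans (h0.trans (hsup x0))
  -- orbit identity
  intro x n
  have horb : a (g'^[n] x) = 2 ^ n * a x := by
    induction n with
    | zero => simp
    | succ k ih =>
      rw [Function.iterate_succ_apply', hsemi, ih]; ring
  have : g'^[n] x - 2 ^ n * a x = -(γ (g'^[n] x)) := by
    rw [← horb]; simp [hγ]
  rw [this, abs_neg]
  exact hγb _
end

section
/- If g is a continuous degree-two circle map whose semiconjugacy α to the doubling map is light (every point preimage of α is totally disconnected), then g is locally eventually onto: for every nonempty open set U ⊆ S¹ there exists n > 0 with gⁿ(U) = S¹. -/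
open Set

private lemma circ_eq_iff {x y : ℝ} (h : (x : AddCircle (1:ℝ)) = (y : AddCircle (1:ℝ))) :
    ∃ k : ℤ, x - y = k := by
  rw [QuotientAddGroup.eq_iff_sub_mem, AddSubgroup.mem_zmultiples_iff] at h
  obtain ⟨k, hk⟩ := h
  exact ⟨k, by simpa using hk.symm⟩

private lemma lift_int {α' : ℝ → ℝ} (hαdeg : ∀ x, α' (x + 1) = α' x + 1) :
    ∀ (k : ℤ) (x : ℝ), α' (x + k) = α' x + k := by
  intro k
  induction k using Int.induction_on with
  | zero => simp
  | succ n ih =>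
    intro x
    have h1 : x + (((n : ℤ) + 1 : ℤ) : ℝ) = (x + ((n : ℤ) : ℝ)) + 1 := by push_cast; ring
    rw [h1, hαdeg, ih x]; push_cast; ring
  | pred n ih =>
    intro x
    have h1 : x + ((-(n : ℤ) - 1 : ℤ) : ℝ) = (x - 1) + ((-(n : ℤ) : ℤ) : ℝ) := by
      push_cast; ring
    have h2 : α' x = α' (x - 1) + 1 := by
      have := hαdeg (x - 1); rw [sub_add_cancel] at this; rw [this]
    rw [h1, ih (x - 1), h2]; push_cast; ring

/-- If the semiconjugacy `α` of a continuous degree-two circle map `g` to the doubling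
map is light, then `g` is locally eventually onto. -/
theorem stmt5
    (g : AddCircle (1 : ℝ) → AddCircle (1 : ℝ)) (hg : Continuous g)
    (g' : ℝ → ℝ) (hg' : Continuous g')
    (hglift : ∀ x : ℝ, g (x : AddCircle (1 : ℝ)) = ((g' x : ℝ) : AddCircle (1 : ℝ)))
    (hgdeg : ∀ x : ℝ, g' (x + 1) = g' x + 2)
    (α : AddCircle (1 : ℝ) → AddCircle (1 : ℝ)) (hα : Continuous α)
    (α' : ℝ → ℝ) (hα' : Continuous α')
    (hαlift : ∀ x : ℝ, α (x : AddCircle (1 : ℝ)) = ((α' x : ℝ) : AddCircle (1 : ℝ)))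
    (hαdeg : ∀ x : ℝ, α' (x + 1) = α' x + 1)
    (hsemi : ∀ θ, α (g θ) = α θ + α θ)
    (hlight : ∀ θ : AddCircle (1 : ℝ), IsTotallyDisconnected (α ⁻¹' {θ})) :
    ∀ U : Set (AddCircle (1 : ℝ)), IsOpen U → U.Nonempty →
      ∃ n : ℕ, 0 < n ∧ g^[n] '' U = Set.univ := by
  -- bound on α' x - x
  obtain ⟨z, hz0, hzmax⟩ := isCompact_Icc.exists_isMaxOn
    (⟨0, by norm_num⟩ : (Icc (0:ℝ) 1).Nonempty)
    ((continuous_abs.comp (hα'.sub continuous_id)).continuousOn)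
  set C := |α' z - z| with hCdef
  have hC0 : 0 ≤ C := abs_nonneg _
  have hCb : ∀ x : ℝ, |α' x - x| ≤ C := by
    intro x
    have hfr : Int.fract x = x - (⌊x⌋ : ℝ) := rfl
    have h1 := lift_int hαdeg ⌊x⌋ (Int.fract x)
    rw [Int.fract_add_floor] at h1
    have h2 : α' x - x = α' (Int.fract x) - Int.fract x := by rw [h1, hfr]; ring
    rw [h2]
    exact hzmax ⟨Int.fract_nonneg x, (Int.fract_lt_one x).le⟩
  -- the semiconjugacy constant
  set h : ℝ → ℝ := fun x => α' (g' x) - 2 * α' x with hh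
  have hhc : Continuous h := (hα'.comp hg').sub (continuous_const.mul hα')
  have hint : ∀ x : ℝ, ∃ k : ℤ, h x = k := by
    intro x
    have h1 := hsemi (x : AddCircle (1:ℝ))
    rw [hglift, hαlift, hαlift] at h1
    have h2 : ((α' x + α' x : ℝ) : AddCircle (1:ℝ)) = ((α' (g' x) : ℝ) : AddCircle (1:ℝ)) := by
      rw [AddCircle.coe_add, ← h1]
    obtain ⟨k, hk⟩ := circ_eq_iff h2.symm
    exact ⟨k, by simp only [hh]; linarith⟩
  have key : ∀ x : ℝ, h x = h 0 := by
    intro x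
    by_contra hne
    obtain ⟨k0, hk0⟩ := hint 0
    obtain ⟨kx, hkx⟩ := hint x
    have hiv := intermediate_value_uIcc (hhc.continuousOn : ContinuousOn h (uIcc 0 x))
    rcases lt_or_gt_of_ne hne with hlt | hgt
    · -- h x < h 0 : pick value k0 - 1/2
      have hklt : kx < k0 := by exact_mod_cast hk0 ▸ hkx ▸ hlt
      have hmem : (k0 : ℝ) - 1/2 ∈ uIcc (h 0) (h x) := by
        rw [uIcc_of_ge hlt.le]
        constructor
        · rw [hkx]
          have : (kx : ℝ) + 1 ≤ (k0 : ℝ) := by exact_mod_cast Int.lt_iff_add_one_le.mp hklt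
          linarith
        · rw [hk0]; linarith
      obtain ⟨y, _, hy⟩ := hiv hmem
      obtain ⟨ky, hky⟩ := hint y
      have : ((2 * ky : ℤ) : ℝ) = ((2 * k0 - 1 : ℤ) : ℝ) := by
        push_cast; rw [← hky, hy]; ring
      have := (by exact_mod_cast this : 2 * ky = 2 * k0 - 1)
      omega
    · -- h 0 < h x : pick value k0 + 1/2
      have hklt : k0 < kx := by exact_mod_cast hk0 ▸ hkx ▸ hgt
      have hmem : (k0 : ℝ) + 1/2 ∈ uIcc (h 0) (h x) := by
        rw [uIcc_of_le hgt.le]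
        constructor
        · rw [hk0]; linarith
        · rw [hkx]
          have : (k0 : ℝ) + 1 ≤ (kx : ℝ) := by exact_mod_cast Int.lt_iff_add_one_le.mp hklt
          linarith
      obtain ⟨y, _, hy⟩ := hiv hmem
      obtain ⟨ky, hky⟩ := hint y
      have : ((2 * ky : ℤ) : ℝ) = ((2 * k0 + 1 : ℤ) : ℝ) := by
        push_cast; rw [← hky, hy]; ring
      have := (by exact_mod_cast this : 2 * ky = 2 * k0 + 1)
      omega
  set m := h 0 with hm
  have hstep : ∀ x : ℝ, α' (g' x) = 2 * α' x + m := by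
    intro x
    have := key x
    simp only [hh] at this
    linarith
  have hiter : ∀ (n : ℕ) (x : ℝ), α' (g'^[n] x) = 2^n * α' x + (2^n - 1) * m := by
    intro n
    induction n with
    | zero => intro x; simp
    | succ n ih =>
      intro x
      rw [Function.iterate_succ_apply', hstep, ih x, pow_succ]
      ring
  have hconj : ∀ (n : ℕ) (x : ℝ),
      g^[n] ((x : ℝ) : AddCircle (1:ℝ)) = ((g'^[n] x : ℝ) : AddCircle (1:ℝ)) := by
    intro n
    induction n with
    | zero => intro x; simp
    | succ n ih =>
      intro x
      rw [Function.iterate_succ_apply', Function.iterate_succ_apply', ih, hglift]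
  -- main argument
  intro U hUopen hUne
  obtain ⟨θ0, hθ0⟩ := hUne
  obtain ⟨x0, rfl⟩ := QuotientAddGroup.mk_surjective θ0
  set V : Set ℝ := (fun x : ℝ => ((x : ℝ) : AddCircle (1:ℝ))) ⁻¹' U with hV
  have hVopen : IsOpen V := hUopen.preimage continuous_quotient_mk'
  have hx0 : x0 ∈ V := hθ0
  obtain ⟨ε, hε, hball⟩ := Metric.isOpen_iff.mp hVopen x0 hx0
  set b := x0 + min (ε/2) (1/2) with hbdef
  have hmin : 0 < min (ε/2) (1/2) := lt_min (by linarith) (by norm_num)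
  have hminle : min (ε/2) (1/2) ≤ ε/2 := min_le_left _ _
  have hminle2 : min (ε/2) (1/2) ≤ 1/2 := min_le_right _ _
  have hx0b : x0 ≤ b := by simp only [hbdef]; linarith
  have hIccV : Icc x0 b ⊆ V := by
    intro y hy
    apply hball
    rw [Metric.mem_ball, Real.dist_eq, abs_of_nonneg (by linarith [hy.1])]
    have := hy.2
    simp only [hbdef] at this
    linarith
  -- nonconstancy of α' on [x0, b]
  have hnc : ∃ c ∈ Icc x0 b, ∃ d ∈ Icc x0 b, α' c < α' d := by
    by_contra hcon
    push_neg at hcon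
    have hconst : ∀ c ∈ Icc x0 b, α' c = α' x0 := by
      intro c hcmem
      have h1 := hcon c hcmem x0 (left_mem_Icc.mpr hx0b)
      have h2 := hcon x0 (left_mem_Icc.mpr hx0b) c hcmem
      linarith
    have hsub : (fun x : ℝ => ((x : ℝ) : AddCircle (1:ℝ))) '' Icc x0 b ⊆
        α ⁻¹' {α ((x0 : ℝ) : AddCircle (1:ℝ))} := by
      rintro _ ⟨y, hy, rfl⟩
      simp only [mem_preimage, mem_singleton_iff]
      rw [hαlift, hαlift, hconst y hy]
    have hpc : IsPreconnected ((fun x : ℝ => ((x : ℝ) : AddCircle (1:ℝ))) '' Icc x0 b) :=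
      isPreconnected_Icc.image _ continuous_quotient_mk'.continuousOn
    have hsing := hlight _ _ hsub hpc
    have heq : ((x0 : ℝ) : AddCircle (1:ℝ)) = ((b : ℝ) : AddCircle (1:ℝ)) :=
      hsing (mem_image_of_mem _ (left_mem_Icc.mpr hx0b))
        (mem_image_of_mem _ (right_mem_Icc.mpr hx0b))
    obtain ⟨k, hk⟩ := circ_eq_iff heq
    have hxb : x0 - b < 0 := by simp only [hbdef]; linarith
    have hxb2 : (-1:ℝ) < x0 - b := by simp only [hbdef]; linarith
    have h1' : k < 0 := by exact_mod_cast hk ▸ hxb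
    have h2' : (-1:ℤ) < k := by exact_mod_cast hk ▸ hxb2
    omega
  obtain ⟨c, hc, d, hd, hcd⟩ := hnc
  set δ := α' d - α' c with hδ
  have hδ0 : 0 < δ := by simp only [hδ]; linarith
  obtain ⟨N, hN⟩ := pow_unbounded_of_one_lt ((1 + 2*C)/δ) (by norm_num : (1:ℝ) < 2)
  set n := N + 1 with hn
  have h2n : (1 + 2*C)/δ < 2^n :=
    lt_of_lt_of_le hN (pow_le_pow_right₀ (by norm_num) (Nat.le_succ N))
  have hgap : 1 + 2*C < 2^n * δ := by
    rw [div_lt_iff₀ hδ0] at h2n; linarith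
  have hαuv : α' (g'^[n] d) - α' (g'^[n] c) = 2^n * δ := by
    rw [hiter n c, hiter n d, hδ]; ring
  have huv : 1 < g'^[n] d - g'^[n] c := by
    have hbu := abs_le.mp (hCb (g'^[n] c))
    have hbv := abs_le.mp (hCb (g'^[n] d))
    have h2nδ : 2^n * δ = α' (g'^[n] d) - α' (g'^[n] c) := hαuv.symm
    linarith [hbu.1, hbu.2, hbv.1, hbv.2]
  refine ⟨n, Nat.succ_pos N, ?_⟩
  rw [Set.eq_univ_iff_forall]
  intro θ
  have hθ : θ ∈ (fun x : ℝ => ((x : ℝ) : AddCircle (1:ℝ))) '' Icc (g'^[n] c) (g'^[n] c + 1) := by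
    rw [AddCircle.coe_image_Icc_eq]
    trivial
  obtain ⟨t, ht, rfl⟩ := hθ
  have htuv : t ∈ uIcc (g'^[n] c) (g'^[n] d) := by
    rw [uIcc_of_le (by linarith : g'^[n] c ≤ g'^[n] d)]
    exact ⟨ht.1, le_trans ht.2 (by linarith)⟩
  obtain ⟨w, hw, hwt⟩ := intermediate_value_uIcc ((hg'.iterate n).continuousOn) htuv
  have hwU : ((w : ℝ) : AddCircle (1:ℝ)) ∈ U := hIccV (uIcc_subset_Icc hc hd hw)
  exact ⟨_, hwU, by rw [hconj n w, hwt]⟩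
end

section
/- If g is a transitive continuous degree-two circle map (g has a dense orbit), then its semiconjugacy α to the angle-doubling map is light: there is no nontrivial closed interval J ⊆ S¹ with α(J) a single point. -/
/-- If a continuous degree-two circle map `g` is transitive, then its semiconjugacy `α`
to the doubling map is light: `α` is not constant on any nontrivial closed interval. -/
theorem stmt6
    (g : AddCircle (1 : ℝ) → AddCircle (1 : ℝ)) (hg : Continuous g)
    (g' : ℝ → ℝ) (hg' : Continuous g')
    (hglift : ∀ x : ℝ, g (x : AddCircle (1 : ℝ)) = ((g' x : ℝ) : AddCircle (1 : ℝ)))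
    (hgdeg : ∀ x : ℝ, g' (x + 1) = g' x + 2)
    (α : AddCircle (1 : ℝ) → AddCircle (1 : ℝ)) (hα : Continuous α)
    (α' : ℝ → ℝ) (hα' : Continuous α')
    (hαlift : ∀ x : ℝ, α (x : AddCircle (1 : ℝ)) = ((α' x : ℝ) : AddCircle (1 : ℝ)))
    (hαdeg : ∀ x : ℝ, α' (x + 1) = α' x + 1)
    (hsemi : ∀ θ, α (g θ) = α θ + α θ)
    (htrans : ∃ x₀ : AddCircle (1 : ℝ), Dense (Set.range fun n : ℕ => g^[n] x₀)) :
    ∀ s t : ℝ, s < t →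
      ¬ ∃ θ : AddCircle (1 : ℝ), ∀ x ∈ Set.Icc s t, α (x : AddCircle (1 : ℝ)) = θ := by
  intro s t hst
  rintro ⟨θ, hθ⟩
  obtain ⟨x₀, hx₀⟩ := htrans
  -- the semiconjugacy iterates: α (g^[m] y) = 2^m • α y
  have hiter : ∀ (m : ℕ) (y : AddCircle (1 : ℝ)), α (g^[m] y) = 2 ^ m • α y := by
    intro m
    induction m with
    | zero => intro y; simp
    | succ m ih =>
      intro y
      rw [Function.iterate_succ_apply, ih, hsemi, ← two_nsmul, smul_smul, ← pow_succ]
  -- the projected open arc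
  set V₀ : Set (AddCircle (1 : ℝ)) := ((↑) : ℝ → AddCircle (1:ℝ)) '' Set.Ioo s t with hV₀def
  have hV₀open : IsOpen V₀ := QuotientAddGroup.isOpenMap_coe _ isOpen_Ioo
  have hαV₀ : ∀ z ∈ V₀, α z = θ := by
    rintro z ⟨x, hx, rfl⟩
    exact hθ x ⟨hx.1.le, hx.2.le⟩
  -- two distinct points of V₀
  set ε : ℝ := min 1 (t - s) with hεdef
  have hε : 0 < ε := lt_min one_pos (by linarith)
  have hε1 : ε ≤ 1 := min_le_left _ _
  set u : ℝ := s + ε / 3 with hudef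
  set v : ℝ := s + 2 * ε / 3 with hvdef
  have hεts : ε ≤ t - s := min_le_right _ _
  have humem : u ∈ Set.Ioo s t := ⟨by simp [hudef]; linarith, by simp [hudef]; linarith⟩
  have hvmem : v ∈ Set.Ioo s t := ⟨by simp [hvdef]; linarith, by simp [hvdef]; linarith⟩
  have huv : (u : AddCircle (1:ℝ)) ≠ (v : AddCircle (1:ℝ)) := by
    intro h
    have h0 : ((v - u : ℝ) : AddCircle (1:ℝ)) = 0 := by
      have : ((v - u : ℝ) : AddCircle (1:ℝ)) = (v : AddCircle (1:ℝ)) - (u : AddCircle (1:ℝ)) := rfl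
      rw [this, ← h, sub_self]
    rw [AddCircle.coe_eq_zero_iff] at h0
    obtain ⟨n, hn⟩ := h0
    have hn' : (n : ℝ) = v - u := by simpa using hn
    have hvu : v - u = ε / 3 := by rw [hudef, hvdef]; ring
    have h1 : (0 : ℝ) < (n : ℝ) := by rw [hn', hvu]; linarith
    have h2 : ((n : ℝ)) < 1 := by rw [hn', hvu]; linarith
    have h3 : (1 : ℤ) ≤ n := by exact_mod_cast h1
    have h4 : ((n : ℝ)) ≥ 1 := by exact_mod_cast h3
    linarith
  -- the orbit visits V₀ at two distinct times
  obtain ⟨y₁, ⟨n₀, hn₀⟩, hy₁⟩ := hx₀.exists_mem_open hV₀open ⟨_, ⟨u, humem, rfl⟩⟩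
  have hn₀' : g^[n₀] x₀ = y₁ := hn₀
  have hn₀V : g^[n₀] x₀ ∈ V₀ := by rw [hn₀']; exact hy₁
  have hWopen : IsOpen (V₀ ∩ {g^[n₀] x₀}ᶜ) := hV₀open.inter isClosed_singleton.isOpen_compl
  have hWne : (V₀ ∩ {g^[n₀] x₀}ᶜ).Nonempty := by
    by_cases hcase : (u : AddCircle (1:ℝ)) = g^[n₀] x₀
    · exact ⟨(v : AddCircle (1:ℝ)), ⟨v, hvmem, rfl⟩, by simp [← hcase]; exact fun h => huv h.symm⟩
    · exact ⟨(u : AddCircle (1:ℝ)), ⟨u, humem, rfl⟩, by simpa using hcase⟩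
  obtain ⟨y₂, ⟨n₁, hn₁⟩, hy₂V, hy₂ne⟩ := hx₀.exists_mem_open hWopen hWne
  have hn₁' : g^[n₁] x₀ = y₂ := hn₁
  have hn₁V : g^[n₁] x₀ ∈ V₀ := by rw [hn₁']; exact hy₂V
  have hne : n₁ ≠ n₀ := by
    intro h; apply hy₂ne; rw [← hn₁', h]; exact rfl
  -- set a = min, b = max, k = b - a ≥ 1
  set a : ℕ := min n₀ n₁ with hadef
  set b : ℕ := max n₀ n₁ with hbdef
  set k : ℕ := b - a with hkdef
  have hk : 0 < k := by
    rcases Nat.lt_or_ge n₀ n₁ with h | h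
    · simp [hkdef, hadef, hbdef]; omega
    · simp [hkdef, hadef, hbdef]; omega
  have haV : g^[a] x₀ ∈ V₀ := by
    rcases min_choice n₀ n₁ with h | h
    · rw [hadef, h]; exact hn₀V
    · rw [hadef, h]; exact hn₁V
  have hbV : g^[b] x₀ ∈ V₀ := by
    rcases max_choice n₀ n₁ with h | h
    · rw [hbdef, h]; exact hn₀V
    · rw [hbdef, h]; exact hn₁V
  have ha : α (g^[a] x₀) = θ := hαV₀ _ haV
  have hb : α (g^[b] x₀) = θ := hαV₀ _ hbV
  -- periodicity of θ under doubling
  have hper : (2 : ℕ) ^ k • θ = θ := by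
    have hkab : k + a = b := by rw [hkdef, hadef, hbdef]; omega
    have : α (g^[k + a] x₀) = θ := by rw [hkab]; exact hb
    rw [Function.iterate_add_apply, hiter, ha] at this
    exact this
  have hmod : ∀ m : ℕ, (2 : ℕ) ^ m • θ = 2 ^ (m % k) • θ := by
    intro m
    induction m using Nat.strong_induction_on with
    | _ m ih =>
      by_cases h : m < k
      · rw [Nat.mod_eq_of_lt h]
      · push_neg at h
        calc (2:ℕ) ^ m • θ = ((2:ℕ) ^ (m - k) * 2 ^ k) • θ := by
              rw [← pow_add]
              have hmk : m - k + k = m := by omega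
              rw [hmk]
          _ = (2:ℕ) ^ (m - k) • ((2:ℕ) ^ k • θ) := (smul_smul _ _ _).symm
          _ = (2:ℕ) ^ (m - k) • θ := by rw [hper]
          _ = (2:ℕ) ^ ((m - k) % k) • θ := ih _ (by omega)
          _ = (2:ℕ) ^ (m % k) • θ := by rw [Nat.mod_eq_sub_mod h]
  -- orbit α-values land in a finite set S
  set S : Set (AddCircle (1:ℝ)) :=
    ((fun i : ℕ => (2:ℕ) ^ i • θ) '' Set.Iio k) ∪ ((fun n : ℕ => α (g^[n] x₀)) '' Set.Iio a)
    with hSdef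
  have hSfin : S.Finite :=
    ((Set.finite_Iio k).image _).union ((Set.finite_Iio a).image _)
  have hFS : Set.range (fun n : ℕ => α (g^[n] x₀)) ⊆ S := by
    rintro _ ⟨n, rfl⟩
    by_cases h : n < a
    · exact Or.inr ⟨n, h, rfl⟩
    · push_neg at h
      left
      refine ⟨(n - a) % k, Nat.mod_lt _ hk, ?_⟩
      have hval : α (g^[n] x₀) = 2 ^ (n - a) • θ := by
        conv_lhs => rw [← Nat.sub_add_cancel h]
        rw [Function.iterate_add_apply, hiter, ha]
      show (2:ℕ) ^ ((n - a) % k) • θ = α (g^[n] x₀)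
      rw [hval]
      exact (hmod _).symm
  -- by density and continuity, range α ⊆ S
  have hrange : Set.range α ⊆ S := by
    have h1 : Set.range α ⊆ closure (Set.range (fun n : ℕ => α (g^[n] x₀))) := by
      have h2 : Set.range α = α '' closure (Set.range fun n : ℕ => g^[n] x₀) := by
        rw [hx₀.closure_eq, Set.image_univ]
      rw [h2]
      refine (image_closure_subset_closure_image hα).trans ?_
      rw [← Set.range_comp]
      exact le_of_eq rfl
    exact h1.trans (closure_minimal hFS hSfin.isClosed)
  -- α is not constant: by IVT there is a point whose α-value differs from α 0 by 1/2
  have hα1 : α' 1 = α' 0 + 1 := by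
    have := hαdeg 0; rwa [zero_add] at this
  obtain ⟨c, hc, hcval⟩ : ∃ c ∈ Set.Icc (0:ℝ) 1, α' c = α' 0 + 1/2 := by
    have := intermediate_value_Icc (zero_le_one) hα'.continuousOn
    have hmem : α' 0 + 1/2 ∈ Set.Icc (α' 0) (α' 1) := by
      constructor
      · linarith
      · rw [hα1]; linarith
    obtain ⟨c, hc, hcv⟩ := this hmem
    exact ⟨c, hc, hcv⟩
  have hhalf : ((1/2 : ℝ) : AddCircle (1:ℝ)) ≠ 0 := by
    intro hz
    rw [AddCircle.coe_eq_zero_iff] at hz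
    obtain ⟨n, hn⟩ := hz
    have hn' : (n : ℝ) = 1/2 := by simpa using hn
    rcases lt_trichotomy n 0 with h | h | h
    · have : ((n:ℝ)) ≤ -1 := by exact_mod_cast Int.le_sub_one_of_lt h
      linarith
    · rw [h] at hn'; norm_num at hn'
    · have : (1:ℝ) ≤ (n:ℝ) := by exact_mod_cast h
      linarith
  set p : AddCircle (1:ℝ) := α ((0 : ℝ) : AddCircle (1:ℝ)) with hpdef
  set q : AddCircle (1:ℝ) := α ((c : ℝ) : AddCircle (1:ℝ)) with hqdef
  have hqp : q = p + ((1/2 : ℝ) : AddCircle (1:ℝ)) := by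
    rw [hqdef, hpdef, hαlift, hαlift, hcval]
    rfl
  have hpq : q ≠ p := by
    rw [hqp]
    intro h
    exact hhalf (by rwa [add_eq_left] at h)
  -- range of α ∘ coe is preconnected
  have hpre : IsPreconnected (Set.range (fun x : ℝ => α ((x : ℝ) : AddCircle (1:ℝ)))) :=
    isPreconnected_range (hα.comp continuous_quotient_mk')
  set R : Set (AddCircle (1:ℝ)) := Set.range (fun x : ℝ => α ((x : ℝ) : AddCircle (1:ℝ))) with hRdef
  have hRS : R ⊆ S := by
    rintro _ ⟨x, rfl⟩
    exact hrange ⟨_, rfl⟩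
  have hpR : p ∈ R := ⟨0, rfl⟩
  have hqR : q ∈ R := ⟨c, rfl⟩
  -- final contradiction via disconnection
  have hUopen : IsOpen ({p}ᶜ : Set (AddCircle (1:ℝ))) := isClosed_singleton.isOpen_compl
  have hVopen : IsOpen ((S \ {p})ᶜ : Set (AddCircle (1:ℝ))) :=
    (hSfin.subset (Set.diff_subset)).isClosed.isOpen_compl
  have hcover : R ⊆ {p}ᶜ ∪ (S \ {p})ᶜ := by
    intro x hx
    by_cases h : x = p
    · right; simp [h]
    · left; simpa using h
  have h1 : (R ∩ {p}ᶜ).Nonempty := ⟨q, hqR, by simpa using hpq⟩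
  have h2 : (R ∩ (S \ {p})ᶜ).Nonempty := ⟨p, hpR, by simp⟩
  obtain ⟨x, hxR, hx1, hx2⟩ := hpre _ _ hUopen hVopen hcover h1 h2
  exact hx2 ⟨hRS hxR, by simpa using hx1⟩
end

section
/- With p_r = min α̃⁻¹(r), one has g̃(p_r) = p_{2r} for every r ∈ ℝ. -/
/-- Property of `p r = min α̃⁻¹(r)`, where `α̃` is the degree-one semiconjugacy lift
(`α̃ ∘ g̃ = 2 α̃`) of a lift `g̃` of a continuous degree-two circle map. -/
theorem stmt13
    (g' : ℝ → ℝ) (hg' : Continuous g') (hgdeg : ∀ x : ℝ, g' (x + 1) = g' x + 2)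
    (a : ℝ → ℝ) (ha : Continuous a) (hasurj : Function.Surjective a)
    (hadeg : ∀ x : ℝ, a (x + 1) = a x + 1)
    (hsemi : ∀ x : ℝ, a (g' x) = 2 * a x)
    (p : ℝ → ℝ) (hp : ∀ r : ℝ, IsLeast {x : ℝ | a x = r} (p r)) :
    ∀ r : ℝ, g' (p r) = p (2 * r) := by
  have hsub : ∀ (x : ℝ) (n : ℕ), g' (x - n) = g' x - 2 * n := by
    intro x n
    induction n with
    | zero => simp
    | succ k ih =>
      have : g' (x - (k + 1) + 1) = g' (x - (k + 1)) + 2 := hgdeg _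
      push_cast
      push_cast at ih
      have h2 : x - (k + 1) + 1 = x - k := by ring
      rw [h2] at this
      linarith
  intro r
  obtain ⟨hPmem, hPmin⟩ := hp r
  obtain ⟨hQmem, hQmin⟩ := hp (2 * r)
  have haP : a (p r) = r := hPmem
  have haQ : a (p (2 * r)) = 2 * r := hQmem
  have hag : a (g' (p r)) = 2 * r := by rw [hsemi, haP]
  have h1 : p (2 * r) ≤ g' (p r) := hQmin hag
  rcases eq_or_lt_of_le h1 with h | h
  · exact h.symm
  · exfalso
    -- find t < p r with g' t < p (2*r)
    obtain ⟨n, hn⟩ := exists_nat_gt (max ((g' (p r) - p (2 * r)) / 2) 0)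
    have hn0 : (0 : ℝ) < n := lt_of_le_of_lt (le_max_right _ _) hn
    have hn1 : g' (p r) - 2 * n < p (2 * r) := by
      have := lt_of_le_of_lt (le_max_left ((g' (p r) - p (2 * r)) / 2) 0) hn
      linarith
    set t := p r - n with ht
    have hgt : g' t = g' (p r) - 2 * n := hsub (p r) n
    have htle : t ≤ p r := by simp [ht]
    have hcont : ContinuousOn g' (Set.Icc t (p r)) := hg'.continuousOn
    have hmem : p (2 * r) ∈ Set.Icc (g' t) (g' (p r)) := by
      constructor
      · rw [hgt]; linarith
      · linarith
    obtain ⟨x₀, hx₀mem, hx₀⟩ := intermediate_value_Icc htle hcont hmem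
    have hax₀ : a x₀ = r := by
      have : 2 * a x₀ = 2 * r := by rw [← hsemi, hx₀, haQ]
      linarith
    have : p r ≤ x₀ := hPmin hax₀
    have hx₀eq : x₀ = p r := le_antisymm hx₀mem.2 this
    rw [hx₀eq] at hx₀
    linarith
end

section
/- With p_r = min α̃⁻¹(r), if x < p_r then g̃(x) ≤ g̃(p_r) = p_{2r}. -/
lemma shift_lemma (g' : ℝ → ℝ) (hgdeg : ∀ x : ℝ, g' (x + 1) = g' x + 2) :
    ∀ (x : ℝ) (n : ℕ), g' (x - n) = g' x - 2 * n := by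
  intro x n
  induction n with
  | zero => simp
  | succ k ih =>
    have : g' (x - (k + 1) + 1) = g' (x - (k + 1)) + 2 := hgdeg _
    have h2 : x - (k + 1) + 1 = x - k := by push_cast; ring
    rw [h2] at this
    push_cast
    linarith [ih]

lemma reach_lemma (g' : ℝ → ℝ) (hg' : Continuous g')
    (hgdeg : ∀ x : ℝ, g' (x + 1) = g' x + 2) :
    ∀ c v : ℝ, v ≤ g' c → ∃ z ≤ c, g' z = v := by
  intro c v hv
  obtain ⟨n, hn⟩ := exists_nat_ge (g' c - v)
  have hlow : g' (c - n) ≤ v := by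
    rw [shift_lemma g' hgdeg]
    have : (0:ℝ) ≤ n := n.cast_nonneg
    linarith
  have hcn : c - (n:ℝ) ≤ c := by
    have : (0:ℝ) ≤ n := n.cast_nonneg
    linarith
  obtain ⟨z, hz, hgz⟩ := intermediate_value_Icc hcn hg'.continuousOn ⟨hlow, hv⟩
  exact ⟨z, hz.2, hgz⟩

/-- Property of `p r = min α̃⁻¹(r)`, where `α̃` is the degree-one semiconjugacy lift
(`α̃ ∘ g̃ = 2 α̃`) of a lift `g̃` of a continuous degree-two circle map. -/
theorem stmt14
    (g' : ℝ → ℝ) (hg' : Continuous g') (hgdeg : ∀ x : ℝ, g' (x + 1) = g' x + 2)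
    (a : ℝ → ℝ) (ha : Continuous a) (hasurj : Function.Surjective a)
    (hadeg : ∀ x : ℝ, a (x + 1) = a x + 1)
    (hsemi : ∀ x : ℝ, a (g' x) = 2 * a x)
    (p : ℝ → ℝ) (hp : ∀ r : ℝ, IsLeast {x : ℝ | a x = r} (p r)) :
    ∀ r x : ℝ, x < p r → g' x ≤ g' (p r) ∧ g' (p r) = p (2 * r) := by
  intro r x hx
  have hapr : a (p r) = r := (hp r).1
  have hmem : a (g' (p r)) = 2 * r := by rw [hsemi, hapr]
  have hle : p (2 * r) ≤ g' (p r) := (hp (2 * r)).2 hmem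
  have hap2r : a (p (2 * r)) = 2 * r := (hp (2 * r)).1
  have heq : g' (p r) = p (2 * r) := by
    by_contra hne
    have hlt : p (2 * r) < g' (p r) := lt_of_le_of_ne hle (Ne.symm hne)
    obtain ⟨z, hz, hgz⟩ := reach_lemma g' hg' hgdeg (p r) (p (2 * r)) hle
    have haz : a z = r := by
      have := hsemi z
      rw [hgz, hap2r] at this
      linarith
    have : p r ≤ z := (hp r).2 haz
    have hzeq : z = p r := le_antisymm hz this
    rw [hzeq] at hgz
    exact hne hgz
  refine ⟨?_, heq⟩
  by_contra hgt
  push_neg at hgt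
  have : p (2 * r) ≤ g' x := by rw [← heq]; exact le_of_lt hgt
  obtain ⟨z, hz, hgz⟩ := reach_lemma g' hg' hgdeg x (p (2 * r)) this
  have haz : a z = r := by
    have := hsemi z
    rw [hgz, hap2r] at this
    linarith
  have : p r ≤ z := (hp r).2 haz
  linarith
end

section
/- Let g be a continuous degree-two circle map whose semiconjugacy α to angle doubling is light but not injective, with lift g̃ normalized so that p_{0} := min α̃⁻¹(0) = 0. Then there exist N ∈ ℕ, an integer K with 0 ≤ K < 2^N, and a point x̂ with p_{K/2^N} < x̂ < p_{(K+1)/2^N} such that g̃^N(x̂) = K − 1. -/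
private lemma aux_nat {f : ℝ → ℝ} {c : ℝ} (h : ∀ x, f (x + 1) = f x + c) :
    ∀ (n : ℕ) (x : ℝ), f (x + n) = f x + n * c := by
  intro n
  induction n with
  | zero => simp
  | succ k ih =>
      intro x
      have h2 : x + ((k+1 : ℕ) : ℝ) = (x + k) + 1 := by push_cast; ring
      rw [h2, h, ih]; push_cast; ring

private lemma aux_nat' {f : ℝ → ℝ} {c : ℝ} (h : ∀ x, f (x + 1) = f x + c)
    (n : ℕ) (x : ℝ) : f (x - n) = f x - n * c := by
  have h1 := aux_nat h n (x - n)
  have h2 : x - (n:ℝ) + n = x := by ring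
  rw [h2] at h1
  linarith

private lemma aux_deg {f : ℝ → ℝ} {c : ℝ} (h : ∀ x, f (x + 1) = f x + c)
    (n : ℤ) (x : ℝ) : f (x + n) = f x + n * c := by
  cases n with
  | ofNat k =>
      have h1 := aux_nat h k x
      push_cast at h1 ⊢
      exact h1
  | negSucc k =>
      have h1 := aux_nat' h (k+1) x
      have e : ((Int.negSucc k : ℤ) : ℝ) = -((k+1 : ℕ) : ℝ) := by
        rw [Int.cast_negSucc]; try push_cast; try ring
      rw [e, show x + -((k+1:ℕ):ℝ) = x - ((k+1:ℕ):ℝ) by ring, h1]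
      push_cast; ring

/-- The fold lemma: if the semiconjugacy `α` of a degree-two circle map is light but not
injective, normalized so `p 0 = 0`, then there are `N`, `K` with `0 ≤ K < 2^N` and a
point `xh` strictly between `p (K/2^N)` and `p ((K+1)/2^N)` with `g̃^N(xh) = K - 1`. -/
theorem stmt16
    (g : AddCircle (1 : ℝ) → AddCircle (1 : ℝ)) (hg : Continuous g)
    (g' : ℝ → ℝ) (hg' : Continuous g')
    (hglift : ∀ x : ℝ, g (x : AddCircle (1 : ℝ)) = ((g' x : ℝ) : AddCircle (1 : ℝ)))
    (hgdeg : ∀ x : ℝ, g' (x + 1) = g' x + 2)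
    (α : AddCircle (1 : ℝ) → AddCircle (1 : ℝ)) (hα : Continuous α)
    (α' : ℝ → ℝ) (hα' : Continuous α')
    (hαlift : ∀ x : ℝ, α (x : AddCircle (1 : ℝ)) = ((α' x : ℝ) : AddCircle (1 : ℝ)))
    (hαdeg : ∀ x : ℝ, α' (x + 1) = α' x + 1)
    (hsemi : ∀ θ, α (g θ) = α θ + α θ)
    (hsemi' : ∀ x : ℝ, α' (g' x) = 2 * α' x)
    (hlight : ∀ θ : AddCircle (1 : ℝ), IsTotallyDisconnected (α ⁻¹' {θ}))
    (hnotinj : ¬ Function.Injective α)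
    (p : ℝ → ℝ) (hp : ∀ r : ℝ, IsLeast {x : ℝ | α' x = r} (p r))
    (hnorm : p 0 = 0) :
    ∃ (N : ℕ) (K : ℤ) (xh : ℝ), 0 ≤ K ∧ K < 2 ^ N ∧
      p ((K : ℝ) / 2 ^ N) < xh ∧ xh < p (((K : ℝ) + 1) / 2 ^ N) ∧
      g'^[N] xh = (K : ℝ) - 1 := by
  have hpval : ∀ r, α' (p r) = r := fun r => (hp r).1
  have hpmin : ∀ r x, α' x = r → p r ≤ x := fun r x h => (hp r).2 h
  have hαshift : ∀ (n : ℤ) (x : ℝ), α' (x + n) = α' x + n := by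
    intro n x; have := aux_deg hαdeg n x; rw [this]; ring
  have hgshift : ∀ (n : ℤ) (x : ℝ), g' (x + n) = g' x + 2 * n := by
    intro n x; have := aux_deg hgdeg n x; rw [this]; ring
  -- p commutes with integer shifts
  have hpshift : ∀ (n : ℤ) (r : ℝ), p (r + n) = p r + n := by
    intro n r
    have h1 : α' (p r + n) = r + n := by rw [hαshift n (p r), hpval]
    have h2 : p (r + n) ≤ p r + n := hpmin _ _ h1
    have h3 : α' (p (r + n) - n) = r := by
      have := hαshift (-n) (p (r + n))
      push_cast at this
      rw [show p (r + n) + -(n:ℝ) = p (r+n) - n by ring] at this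
      rw [this, hpval]; ring
    have h4 : p r ≤ p (r + n) - n := hpmin _ _ h3
    linarith
  have hpint : ∀ k : ℤ, p k = k := by
    intro k; have := hpshift k 0; simpa [hnorm] using this
  -- L1 : r ≤ α' x → p r ≤ x
  have hL1 : ∀ (r x : ℝ), r ≤ α' x → p r ≤ x := by
    intro r x hrx
    set n : ℕ := ⌈α' x - r⌉₊ with hn
    have hle : α' x - (n : ℝ) ≤ r := by
      have := Nat.le_ceil (α' x - r); rw [← hn] at this; linarith
    have hxn : α' (x - n) = α' x - n := by
      have := hαshift (-(n:ℤ)) x; push_cast at this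
      rw [show x + -(n:ℝ) = x - n by ring] at this; rw [this]; ring
    have hsub : x - (n:ℝ) ≤ x := by
      have : (0:ℝ) ≤ n := Nat.cast_nonneg n
      linarith
    have hIVT := intermediate_value_Icc hsub hα'.continuousOn
    have hr : r ∈ Set.Icc (α' (x - n)) (α' x) := by
      rw [hxn]; exact ⟨hle, hrx⟩
    obtain ⟨z, hz, hzr⟩ := hIVT hr
    exact le_trans (hpmin r z hzr) hz.2
  -- iterated shift and semiconjugacy
  have hGshift : ∀ (N : ℕ) (n : ℤ) (x : ℝ), g'^[N] (x + n) = g'^[N] x + 2 ^ N * n := by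
    intro N
    induction N with
    | zero => intro n x; simp
    | succ N ih =>
        intro n x
        rw [Function.iterate_succ_apply, Function.iterate_succ_apply, hgshift n x]
        have := ih (2 * n) (g' x)
        push_cast at this ⊢
        rw [this]; ring
  have hGsemi : ∀ (N : ℕ) (x : ℝ), α' (g'^[N] x) = 2 ^ N * α' x := by
    intro N
    induction N with
    | zero => intro x; simp
    | succ N ih =>
        intro x
        rw [Function.iterate_succ_apply, ih, hsemi']; ring
  have hGcont : ∀ N : ℕ, Continuous (g'^[N]) := fun N => hg'.iterate N
  -- L5 : g' (p (t/2)) = p t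
  have hL5 : ∀ t : ℝ, g' (p (t / 2)) = p t := by
    intro t
    set q := p (t / 2) with hq
    set y := g' q with hy
    have hαy : α' y = t := by rw [hy, hsemi', hpval]; ring
    have hpty : p t ≤ y := hpmin _ _ hαy
    rcases eq_or_lt_of_le hpty with heq | hlt
    · exact heq.symm
    · exfalso
      set n : ℕ := ⌈(y - p t) / 2⌉₊ with hn
      have hle : y - 2 * (n : ℝ) ≤ p t := by
        have := Nat.le_ceil ((y - p t) / 2); rw [← hn] at this; linarith
      have hgy : g' (q - n) = y - 2 * n := by
        have := hgshift (-(n:ℤ)) q; push_cast at this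
        rw [show q + -(n:ℝ) = q - n by ring] at this; rw [this, ← hy]; ring
      have hsub : q - (n:ℝ) ≤ q := by
        have : (0:ℝ) ≤ n := Nat.cast_nonneg n; linarith
      have hIVT := intermediate_value_Icc hsub hg'.continuousOn
      have hr : p t ∈ Set.Icc (g' (q - n)) (g' q) := by
        rw [hgy, ← hy]; exact ⟨hle, le_of_lt hlt⟩
      obtain ⟨z, hz, hzr⟩ := hIVT hr
      have hαz : α' z = t / 2 := by
        have := hsemi' z; rw [hzr, hpval] at this; linarith
      have : q ≤ z := hpmin _ _ hαz
      have hzq : z = q := le_antisymm hz.2 this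
      rw [hzq, ← hy] at hzr
      linarith
  -- L4 : g'^[N] (p (t / 2^N)) = p t
  have hL4 : ∀ (N : ℕ) (t : ℝ), g'^[N] (p (t / 2 ^ N)) = p t := by
    intro N
    induction N with
    | zero => intro t; simp
    | succ N ih =>
        intro t
        rw [Function.iterate_succ_apply]
        have h1 : (t / 2 ^ (N + 1) : ℝ) = (t / 2 ^ N) / 2 := by ring
        rw [h1, hL5 (t / 2 ^ N), ih]
  -- bound C : ∀ x, x - α' x ≤ C
  obtain ⟨C, hC⟩ : ∃ C : ℝ, ∀ x, x - α' x ≤ C := by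
    obtain ⟨x₀, _, hx₀⟩ := isCompact_Icc.exists_isMaxOn (⟨0, by norm_num⟩ :
      (Set.Icc (0:ℝ) 1).Nonempty) (continuous_id.sub hα').continuousOn
    refine ⟨x₀ - α' x₀, fun x => ?_⟩
    have hper : x - α' x = Int.fract x - α' (Int.fract x) := by
      have := hαshift ⌊x⌋ (Int.fract x)
      rw [Int.fract_add_floor] at this
      rw [this]
      have := Int.fract_add_floor x
      linarith
    have hmem : Int.fract x ∈ Set.Icc (0:ℝ) 1 :=
      ⟨Int.fract_nonneg x, le_of_lt (Int.fract_lt_one x)⟩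
    have := hx₀ hmem
    simp only [Function.comp] at this
    rw [hper]
    exact this
  obtain ⟨D, hD⟩ : ∃ D : ℝ, ∀ x, α' x - x ≤ D := by
    obtain ⟨x₀, _, hx₀⟩ := isCompact_Icc.exists_isMaxOn (⟨0, by norm_num⟩ :
      (Set.Icc (0:ℝ) 1).Nonempty) (hα'.sub continuous_id).continuousOn
    refine ⟨α' x₀ - x₀, fun x => ?_⟩
    have hper : α' x - x = α' (Int.fract x) - Int.fract x := by
      have := hαshift ⌊x⌋ (Int.fract x)
      rw [Int.fract_add_floor] at this
      rw [this]
      have := Int.fract_add_floor x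
      linarith
    have hmem : Int.fract x ∈ Set.Icc (0:ℝ) 1 :=
      ⟨Int.fract_nonneg x, le_of_lt (Int.fract_lt_one x)⟩
    have := hx₀ hmem
    simp only [Function.comp] at this
    rw [hper]
    exact this
  -- the non-monotone pair
  obtain ⟨u, v, huv, hαuv⟩ : ∃ u v : ℝ, u < v ∧ α' v < α' u := by
    rw [Function.Injective] at hnotinj
    push_neg at hnotinj
    obtain ⟨θ₁, θ₂, hθeq, hθne⟩ := hnotinj
    obtain ⟨x₁, hx₁⟩ := Quotient.exists_rep θ₁
    obtain ⟨x₂, hx₂⟩ := Quotient.exists_rep θ₂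
    have hx₁' : ((x₁ : ℝ) : AddCircle (1:ℝ)) = θ₁ := hx₁
    have hx₂' : ((x₂ : ℝ) : AddCircle (1:ℝ)) = θ₂ := hx₂
    -- α' x₁ - α' x₂ ∈ ℤ
    have hcirc : ((α' x₁ : ℝ) : AddCircle (1:ℝ)) = ((α' x₂ : ℝ) : AddCircle (1:ℝ)) := by
      rw [← hαlift, ← hαlift, hx₁', hx₂', hθeq]
    have hmem : (α' x₁ - α' x₂) ∈ AddSubgroup.zmultiples (1:ℝ) :=
      (QuotientAddGroup.eq_iff_sub_mem).mp hcirc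
    obtain ⟨m, hm⟩ := AddSubgroup.mem_zmultiples_iff.mp hmem
    have hm' : α' (x₂ + m) = α' x₁ := by
      rw [hαshift m x₂]
      have : (m : ℝ) = α' x₁ - α' x₂ := by
        have := hm
        push_cast [zsmul_eq_mul] at this
        linarith
      linarith
    set b := x₂ + (m : ℝ) with hb
    have hbcirc : ((b : ℝ) : AddCircle (1:ℝ)) = θ₂ := by
      rw [hb, ← hx₂']
      have : ((x₂ + (m:ℝ) : ℝ) : AddCircle (1:ℝ)) = (x₂ : ℝ) + ((m:ℝ) : AddCircle (1:ℝ)) := by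
        push_cast; rfl
      rw [this]
      have hz : (((m:ℝ)) : AddCircle (1:ℝ)) = 0 := by
        rw [AddCircle.coe_eq_zero_iff]
        exact ⟨m, by simp⟩
      rw [hz, add_zero]
    have hne : x₁ ≠ b := by
      intro h; apply hθne; rw [← hx₁', ← hbcirc, h]
    -- now the pair a < b' with equal α' values
    have key : ∀ a b : ℝ, a < b → α' a = α' b →
        ((a : ℝ) : AddCircle (1:ℝ)) ≠ ((b : ℝ) : AddCircle (1:ℝ)) →
        ∃ u v : ℝ, u < v ∧ α' v < α' u := by
      intro a b hab hval hcne
      by_cases hc : ∃ c ∈ Set.Ioo a b, α' c ≠ α' a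
      · obtain ⟨c, hcmem, hcne'⟩ := hc
        rcases lt_or_gt_of_ne hcne' with h | h
        · exact ⟨a, c, hcmem.1, h⟩
        · exact ⟨c, b, hcmem.2, by rw [← hval]; exact h⟩
      · exfalso
        push_neg at hc
        have hall : ∀ x ∈ Set.Icc a b, α' x = α' a := by
          intro x hx
          rcases eq_or_lt_of_le hx.1 with h1 | h1
          · rw [← h1]
          · rcases eq_or_lt_of_le hx.2 with h2 | h2
            · rw [h2, hval]
            · exact hc x ⟨h1, h2⟩
        set A := (fun x : ℝ => (x : AddCircle (1:ℝ))) '' Set.Icc a b with hA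
        have hconn : IsPreconnected A :=
          (isPreconnected_Icc).image _ continuous_quotient_mk'.continuousOn
        have hsub : A ⊆ α ⁻¹' {((α' a : ℝ) : AddCircle (1:ℝ))} := by
          rintro _ ⟨x, hx, rfl⟩
          simp only [Set.mem_preimage, Set.mem_singleton_iff]
          rw [hαlift, hall x hx]
        have hsing := hlight _ A hsub hconn
        apply hcne
        exact hsing ⟨a, ⟨le_refl a, le_of_lt hab⟩, rfl⟩ ⟨b, ⟨le_of_lt hab, le_refl b⟩, rfl⟩
    rcases lt_trichotomy x₁ b with h | h | h
    · exact key x₁ b h hm'.symm (by rw [hx₁', hbcirc]; exact hθne)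
    · exact absurd h hne
    · exact key b x₁ h hm' (by rw [hx₁', hbcirc]; exact fun hh => hθne hh.symm)
  set s := α' u with hs
  set w := α' v with hw
  have hsw : w < s := hαuv
  -- choose N
  obtain ⟨N, hN⟩ : ∃ N : ℕ, 2 + C < 2 ^ N * (s - w) := by
    obtain ⟨N, hN⟩ := pow_unbounded_of_one_lt ((2 + C) / (s - w)) (one_lt_two (α := ℝ))
    refine ⟨N, ?_⟩
    rw [div_lt_iff₀ (by linarith)] at hN
    linarith
  have h2N : (0:ℝ) < 2 ^ N := by positivity
  -- greatest K with p (K / 2^N) ≤ v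
  obtain ⟨K, hKmem, hKmax⟩ := Int.exists_greatest_of_bdd
    (P := fun j : ℤ => p ((j : ℝ) / 2 ^ N) ≤ v)
    (by
      refine ⟨⌈(2:ℝ) ^ N * (v + D)⌉, fun z hz => ?_⟩
      have h1 : (z : ℝ) / 2 ^ N - D ≤ p ((z:ℝ) / 2 ^ N) := by
        have := hD (p ((z:ℝ)/2^N))
        rw [hpval] at this; linarith
      have h2 : (z : ℝ) ≤ 2 ^ N * (v + D) := by
        have h2a : (z:ℝ) / 2^N ≤ v + D := by
          have : p ((z:ℝ) / 2 ^ N) ≤ v := hz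
          linarith
        calc (z:ℝ) = ((z:ℝ)/2^N) * 2^N := by field_simp
        _ ≤ (v + D) * 2^N := by nlinarith
        _ = 2^N * (v+D) := by ring
      have h3 : (z : ℝ) ≤ (⌈(2:ℝ) ^ N * (v + D)⌉ : ℝ) :=
        le_trans h2 (Int.le_ceil _)
      exact_mod_cast h3
      )
    (by
      refine ⟨⌊(2:ℝ) ^ N * (v - C)⌋, ?_⟩
      have h1 : (⌊(2:ℝ)^N * (v - C)⌋ : ℝ) ≤ 2^N * (v - C) := Int.floor_le _
      have h2 : p ((⌊(2:ℝ)^N * (v - C)⌋ : ℝ) / 2^N) ≤ (⌊(2:ℝ)^N * (v - C)⌋ : ℝ) / 2^N + C := by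
        have := hC (p ((⌊(2:ℝ)^N * (v - C)⌋ : ℝ) / 2^N))
        rw [hpval] at this; linarith
      have h3 : (⌊(2:ℝ)^N * (v - C)⌋ : ℝ) / 2^N ≤ v - C := by
        rw [div_le_iff₀ h2N]; nlinarith
      linarith)
  -- lower bound on K
  have hKlb : 2 ^ N * s - 1 ≤ (K : ℝ) := by
    have hfl : (⌊(2:ℝ)^N * s⌋ : ℝ) ≤ 2^N * s := Int.floor_le _
    have hdiv : (⌊(2:ℝ)^N * s⌋ : ℝ) / 2^N ≤ s := by
      rw [div_le_iff₀ h2N]; nlinarith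
    have hmem : p ((⌊(2:ℝ)^N * s⌋ : ℝ) / 2 ^ N) ≤ v :=
      le_trans (hL1 _ u (by rw [← hs]; exact hdiv)) (le_of_lt huv)
    have := hKmax _ hmem
    have h4 : ((⌊(2:ℝ)^N * s⌋ : ℤ) : ℝ) ≤ (K:ℝ) := by exact_mod_cast this
    have h5 : 2^N * s - 1 < (⌊(2:ℝ)^N * s⌋ : ℝ) := Int.sub_one_lt_floor _
    linarith
  have hvr : v < p (((K:ℝ) + 1) / 2 ^ N) := by
    by_contra hcon
    push_neg at hcon
    have : (K + 1 : ℤ) ≤ K := by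
      apply hKmax
      push_cast
      exact hcon
    omega
  have hGl : g'^[N] (p ((K:ℝ) / 2 ^ N)) = (K : ℝ) := by
    rw [hL4 N ((K:ℤ):ℝ)]
    exact_mod_cast hpint K
  by_cases hy : g'^[N] v ≤ (K:ℝ) - 1
  · -- the fold exists
    have hIVT := intermediate_value_Icc' hKmem (hGcont N).continuousOn
    have hmem : (K:ℝ) - 1 ∈ Set.Icc (g'^[N] v) (g'^[N] (p ((K:ℝ) / 2 ^ N))) := by
      rw [hGl]; exact ⟨hy, by linarith⟩
    obtain ⟨xh, hxhmem, hxhval⟩ := hIVT hmem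
    have hxhl : p ((K:ℝ) / 2 ^ N) < xh := by
      rcases eq_or_lt_of_le hxhmem.1 with h | h
      · exfalso; rw [← h, hGl] at hxhval; linarith
      · exact h
    have hxhr : xh < p (((K:ℝ) + 1) / 2 ^ N) := lt_of_le_of_lt hxhmem.2 hvr
    -- reduce K mod 2^N
    set K₀ : ℤ := K % (2 ^ N : ℤ) with hK₀
    set m : ℤ := K / (2 ^ N : ℤ) with hmdef
    have h2NZ : (0:ℤ) < 2 ^ N := by positivity
    have hdm : (2:ℤ) ^ N * m + K₀ = K := Int.mul_ediv_add_emod K (2 ^ N)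
    have hK₀cast : (K₀ : ℝ) = (K : ℝ) - 2 ^ N * (m : ℝ) := by
      have := hdm
      have h := congrArg (fun z : ℤ => (z : ℝ)) this
      push_cast at h
      linarith
    refine ⟨N, K₀, xh - (m:ℝ), Int.emod_nonneg K (by positivity), Int.emod_lt_of_pos K h2NZ, ?_, ?_, ?_⟩
    · have hdq : (K₀ : ℝ) / 2 ^ N = (K:ℝ) / 2 ^ N + ((-m : ℤ) : ℝ) := by
        rw [hK₀cast]; push_cast; field_simp; ring
      rw [hdq, hpshift (-m) ((K:ℝ) / 2 ^ N)]
      push_cast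
      linarith
    · have hdq : ((K₀ : ℝ) + 1) / 2 ^ N = ((K:ℝ) + 1) / 2 ^ N + ((-m : ℤ) : ℝ) := by
        rw [hK₀cast]; push_cast; field_simp; ring
      rw [hdq, hpshift (-m) (((K:ℝ) + 1) / 2 ^ N)]
      push_cast
      linarith
    · have := hGshift N (-m) xh
      push_cast at this
      rw [show xh - (m:ℝ) = xh + -(m:ℝ) by ring, this, hxhval, hK₀cast]
      ring
  · -- otherwise: contradiction with the bound
    exfalso
    push_neg at hy
    have h1 : α' (g'^[N] v) = 2 ^ N * w := by rw [hGsemi N v, ← hw]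
    have h2 : g'^[N] v - α' (g'^[N] v) ≤ C := hC _
    rw [h1] at h2
    -- g'^[N] v > K - 1 ≥ 2^N s - 2
    have : 2 ^ N * (s - w) < 2 + C := by nlinarith
    linarith
end

section
/- Let g be a continuous degree-two circle map with light, non-injective semiconjugacy α to the doubling map. Then the topological entropy of g satisfies h_top(g) ≥ log(2^N + 2)/N for some N ≥ 1; in particular h_top(g) > log 2. -/
open Set Dynamics Uniformity Filter ENNReal

/-- A continuous integer-valued function on ℝ is constant. -/
lemma stmt17_intConst {f : ℝ → ℝ} (hf : Continuous f) (hint : ∀ x, ∃ n : ℤ, f x = n)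
    (x y : ℝ) : f x = f y := by
  by_contra hne
  obtain ⟨n, hn⟩ := hint x
  obtain ⟨m, hm⟩ := hint y
  have hone : (1 : ℝ) ≤ |f x - f y| := by
    rw [hn, hm, ← Int.cast_sub, ← Int.cast_abs]
    exact_mod_cast Int.one_le_abs (fun h => hne (by rw [hn, hm]; exact_mod_cast sub_eq_zero.mp (by exact_mod_cast h)))
  have h2 : min (f x) (f y) + 1/2 ∈ uIcc (f x) (f y) := by
    rw [Set.mem_uIcc]
    rcases le_total (f x) (f y) with h | h
    · rw [abs_of_nonpos (by linarith)] at hone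
      left; rw [min_eq_left h]; constructor <;> linarith
    · rw [abs_of_nonneg (by linarith)] at hone
      right; rw [min_eq_right h]; constructor <;> linarith
  obtain ⟨z, _, hz⟩ := intermediate_value_uIcc (hf.continuousOn (s := uIcc x y)) h2
  obtain ⟨k, hk⟩ := hint z
  rcases le_total (f x) (f y) with h | h
  · rw [min_eq_left h, hn, hk] at hz
    have : (2*k : ℤ) = 2*n + 1 := by exact_mod_cast (by push_cast; linarith : (2*k : ℝ) = 2*n + 1)
    omega
  · rw [min_eq_right h, hm, hk] at hz
    have : (2*k : ℤ) = 2*m + 1 := by exact_mod_cast (by push_cast; linarith : (2*k : ℝ) = 2*m + 1)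
    omega

/-- Crossing lemma: a continuous function going from below `c` to above `d` crosses the
window `[c,d]` on a subinterval, staying inside it and covering it. -/
lemma stmt17_crossing {F : ℝ → ℝ} (hF : Continuous F) {p q c d : ℝ} (hpq : p ≤ q)
    (h1 : F p ≤ c) (h2 : d ≤ F q) (hcd : c < d) :
    ∃ p' q', p ≤ p' ∧ p' ≤ q' ∧ q' ≤ q ∧
      (∀ x ∈ Icc p' q', F x ∈ Icc c d) ∧ Icc c d ⊆ F '' Icc p' q' := by
  -- q' : first point where F = d
  set S : Set ℝ := {x | x ∈ Icc p q ∧ F x = d} with hS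
  have hSclosed : IsClosed S := by
    have : S = Icc p q ∩ F ⁻¹' {d} := by ext x; simp [hS]
    rw [this]; exact isClosed_Icc.inter (isClosed_singleton.preimage hF)
  have hSne : S.Nonempty := by
    have : d ∈ Icc (F p) (F q) := ⟨le_trans h1 hcd.le, h2⟩
    obtain ⟨z, hz, hzd⟩ := intermediate_value_Icc hpq hF.continuousOn this
    exact ⟨z, hz, hzd⟩
  have hSbdd : BddBelow S := ⟨p, fun x hx => hx.1.1⟩
  set q' := sInf S with hq'
  have hq'S : q' ∈ S := hSclosed.csInf_mem hSne hSbdd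
  have hq'le : ∀ x ∈ S, q' ≤ x := fun x hx => csInf_le hSbdd hx
  have hFq' : F q' = d := hq'S.2
  have hq'Icc : q' ∈ Icc p q := hq'S.1
  -- below q', F < d
  have hlt : ∀ x ∈ Ico p q', F x < d := by
    intro x hx
    rcases lt_trichotomy (F x) d with h | h | h
    · exact h
    · exact absurd (hq'le x ⟨⟨hx.1, le_trans hx.2.le hq'Icc.2⟩, h⟩) (not_le.mpr hx.2)
    · have : d ∈ Icc (F p) (F x) := ⟨le_trans h1 hcd.le, h.le⟩
      obtain ⟨z, hz, hzd⟩ := intermediate_value_Icc hx.1 hF.continuousOn this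
      have : q' ≤ z := hq'le z ⟨⟨hz.1, le_trans hz.2 (le_trans hx.2.le hq'Icc.2)⟩, hzd⟩
      linarith [hz.2, hx.2]
  -- p' : last point ≤ q' where F = c
  set T : Set ℝ := {x | x ∈ Icc p q' ∧ F x = c} with hT
  have hTclosed : IsClosed T := by
    have : T = Icc p q' ∩ F ⁻¹' {c} := by ext x; simp [hT]
    rw [this]; exact isClosed_Icc.inter (isClosed_singleton.preimage hF)
  have hTne : T.Nonempty := by
    have : c ∈ Icc (F p) (F q') := ⟨h1, by rw [hFq']; exact hcd.le⟩
    obtain ⟨z, hz, hzc⟩ := intermediate_value_Icc hq'Icc.1 hF.continuousOn this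
    exact ⟨z, hz, hzc⟩
  have hTbdd : BddAbove T := ⟨q', fun x hx => hx.1.2⟩
  set p' := sSup T with hp'
  have hp'T : p' ∈ T := hTclosed.csSup_mem hTne hTbdd
  have hp'ge : ∀ x ∈ T, x ≤ p' := fun x hx => le_csSup hTbdd hx
  have hFp' : F p' = c := hp'T.2
  have hp'Icc : p' ∈ Icc p q' := hp'T.1
  have hgt : ∀ x, p' < x → x ≤ q' → c < F x := by
    intro x hx1 hx2
    rcases lt_trichotomy c (F x) with h | h | h
    · exact h
    · exact absurd (hp'ge x ⟨⟨le_trans hp'Icc.1 hx1.le, hx2⟩, h.symm⟩) (not_le.mpr hx1)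
    · have : c ∈ Icc (F x) (F q') := ⟨h.le, by rw [hFq']; exact hcd.le⟩
      obtain ⟨z, hz, hzc⟩ := intermediate_value_Icc hx2 hF.continuousOn this
      have : z ≤ p' := hp'ge z ⟨⟨le_trans hp'Icc.1 (le_trans hx1.le hz.1), hz.2⟩, hzc⟩
      linarith [hz.1]
  refine ⟨p', q', hp'Icc.1, hp'Icc.2, hq'Icc.2, ?_, ?_⟩
  · intro x hx
    constructor
    · rcases eq_or_lt_of_le hx.1 with h | h
      · rw [← h, hFp']
      · exact (hgt x h hx.2).le
    · rcases eq_or_lt_of_le hx.2 with h | h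
      · rw [h, hFq']
      · exact (hlt x ⟨le_trans hp'Icc.1 hx.1, h⟩).le
  · have : Icc (F p') (F q') ⊆ F '' Icc p' q' :=
      intermediate_value_Icc hp'Icc.2 hF.continuousOn
    rw [hFp', hFq'] at this
    exact this

lemma stmt17_horseshoe (T : AddCircle (1:ℝ) → AddCircle (1:ℝ)) (N : ℕ) (hN : 1 ≤ N)
    (H : ℝ → ℝ) (hH : Continuous H)
    (hlift : ∀ x : ℝ, T^[N] (x : AddCircle (1:ℝ)) = ((H x : ℝ) : AddCircle (1:ℝ)))
    (hdeg : ∀ (x : ℝ) (n : ℤ), H (x + n) = H x + (2^N : ℤ) * n)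
    (P₀ P₂ : ℝ) (hP : P₀ < P₂) (hlen : P₂ - P₀ < 1)
    (S : Finset ℤ) (hSne : S.Nonempty)
    (hcr : ∀ m ∈ S, ∃ u v : ℝ, u ≤ v ∧ Icc u v ⊆ Icc P₀ P₂ ∧
      (∀ x ∈ Icc u v, H x ∈ Icc (P₀ + m) (P₂ + m)) ∧
      Icc (P₀ + m) (P₂ + m) ⊆ H '' Icc u v) :
    ((Real.log S.card / N : ℝ) : EReal) ≤ Dynamics.coverEntropy T Set.univ := by
  classical
  choose Kl Kr hKlv hKsub hconf hcov using hcr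
  set ι := {m : ℤ // m ∈ S}
  haveI : Nonempty ι := ⟨⟨hSne.choose, hSne.choose_spec⟩⟩
  set K : ι → Set ℝ := fun i => Icc (Kl i.1 i.2) (Kr i.1 i.2) with hK
  -- gap of the base interval on the circle
  set ρ : ℝ := 1 - (P₂ - P₀) with hρ
  have hρpos : 0 < ρ := by simp [hρ]; linarith
  -- uniform continuity of H on the base
  obtain ⟨δ, hδpos, hδ⟩ : ∃ δ > 0, ∀ x ∈ Icc P₀ P₂, ∀ y ∈ Icc P₀ P₂,
      |x - y| < δ → |H x - H y| < ρ := by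
    have := (isCompact_Icc (a := P₀) (b := P₂)).uniformContinuousOn_of_continuous
      hH.continuousOn
    rw [Metric.uniformContinuousOn_iff] at this
    obtain ⟨δ, hδpos, hδ⟩ := this ρ hρpos
    exact ⟨δ, hδpos, fun x hx y hy h => by
      simpa [Real.dist_eq] using hδ x hx y hy (by simpa [Real.dist_eq] using h)⟩
  set ε : ℝ := min δ ρ with hε
  have hεpos : 0 < ε := lt_min hδpos hρpos
  have tri : ∀ a b : ℝ, |a| - |b| ≤ |a + b| := by
    intro a b
    have h := abs_add_le (a + b) (-b)
    simp only [add_neg_cancel_right, abs_neg] at h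
    linarith
  -- separation of the branches on the circle
  have sep : ∀ (i j : ι), i ≠ j → ∀ x ∈ K i, ∀ y ∈ K j, ∀ n : ℤ, ε ≤ |x - y - n| := by
    intro i j hij x hx y hy n
    have hxP : x ∈ Icc P₀ P₂ := hKsub i.1 i.2 hx
    have hyP : y ∈ Icc P₀ P₂ := hKsub j.1 j.2 hy
    have hxy : |x - y| ≤ P₂ - P₀ := by
      rw [abs_sub_le_iff]; constructor <;> [linarith [hxP.2, hyP.1]; linarith [hxP.1, hyP.2]]
    rcases eq_or_ne n 0 with rfl | hn
    · -- use H separation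
      by_contra hcon
      push_neg at hcon
      have h1 : |x - y| < δ := by
        have : |x - y - (0:ℤ)| < ε := hcon
        simp at this
        exact lt_of_lt_of_le this (min_le_left _ _)
      have h2 : |H x - H y| < ρ := hδ x hxP y hyP h1
      have hHx := hconf i.1 i.2 x hx
      have hHy := hconf j.1 j.2 y hy
      have hmij : (i.1 : ℝ) ≠ (j.1 : ℝ) := by
        intro h
        exact hij (Subtype.ext (by exact_mod_cast h))
      have : (1:ℝ) ≤ |(i.1 : ℝ) - (j.1 : ℝ)| := by
        rw [← Int.cast_sub, ← Int.cast_abs]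
        exact_mod_cast Int.one_le_abs (sub_ne_zero.mpr (fun h => hmij (by exact_mod_cast h)))
      have : ρ ≤ |H x - H y| := by
        have e1 : H x - H y = ((i.1:ℝ) - j.1) + ((H x - i.1) - (H y - j.1)) := by ring
        have b1 : |(H x - i.1) - (H y - j.1)| ≤ P₂ - P₀ := by
          rw [abs_sub_le_iff]
          constructor <;> [linarith [hHx.2, hHy.1]; linarith [hHx.1, hHy.2]]
        calc ρ = 1 - (P₂ - P₀) := hρ
        _ ≤ |(i.1:ℝ) - j.1| - |(H x - i.1) - (H y - j.1)| := by linarith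
        _ ≤ |H x - H y| := by rw [e1]; exact tri _ _
      linarith
    · -- |n| ≥ 1
      have h1 : (1:ℝ) ≤ |(n:ℝ)| := by exact_mod_cast Int.one_le_abs hn
      have : ρ ≤ |x - y - n| := by
        have h3 := tri (-(n:ℝ)) (x - y)
        rw [abs_neg] at h3
        have h4 : -(n:ℝ) + (x - y) = x - y - n := by ring
        rw [h4] at h3
        linarith
      exact le_trans (min_le_right _ _) this
  -- iterates of H commute with integer translations, up to integers
  have hshift : ∀ (j : ℕ) (x : ℝ) (n : ℤ), ∃ n' : ℤ, H^[j] (x + n) = H^[j] x + n' := by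
    intro j
    induction j with
    | zero => exact fun x n => ⟨n, by simp⟩
    | succ j ih =>
      intro x n
      have h1 : H (x + n) = H x + ((2^N * n : ℤ) : ℝ) := by
        rw [hdeg x n]; push_cast; ring
      obtain ⟨n', hn'⟩ := ih (H x) (2^N * n)
      exact ⟨n', by rw [Function.iterate_succ_apply, Function.iterate_succ_apply, h1]; exact_mod_cast hn'⟩
  -- itineraries
  have itin : ∀ (k : ℕ) (w : ℕ → ι), ∃ x : ℝ, x ∈ K (w 0) ∧
      ∀ j ≤ k, ∃ n : ℤ, H^[j] x - n ∈ K (w j) := by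
    intro k
    induction k with
    | zero =>
      intro w
      refine ⟨Kl (w 0).1 (w 0).2, left_mem_Icc.2 (hKlv _ _), ?_⟩
      intro j hj
      interval_cases j
      refine ⟨0, ?_⟩
      simp only [Function.iterate_zero, id_eq, Int.cast_zero, sub_zero]
      exact left_mem_Icc.2 (hKlv _ _)
    | succ k ih =>
      intro w
      obtain ⟨x', hx'0, hx'⟩ := ih (fun j => w (j + 1))
      have hx'P : x' ∈ Icc P₀ P₂ := hKsub _ _ hx'0
      have hmem : x' + ((w 0).1 : ℝ) ∈ Icc (P₀ + ((w 0).1:ℝ)) (P₂ + ((w 0).1:ℝ)) := by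
        constructor <;> [linarith [hx'P.1]; linarith [hx'P.2]]
      obtain ⟨x, hxK, hHx⟩ := hcov (w 0).1 (w 0).2 hmem
      refine ⟨x, hxK, ?_⟩
      intro j hj
      rcases Nat.eq_zero_or_pos j with rfl | hjpos
      · refine ⟨0, ?_⟩
        simp only [Function.iterate_zero, id_eq, Int.cast_zero, sub_zero]
        exact hxK
      · obtain ⟨i, rfl⟩ := Nat.exists_eq_succ_of_ne_zero hjpos.ne'
        obtain ⟨n', hn'⟩ := hshift i x' (w 0).1
        obtain ⟨n, hn⟩ := hx' i (Nat.succ_le_succ_iff.mp hj)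
        refine ⟨n + n', ?_⟩
        rw [Function.iterate_succ_apply, hHx, hn']
        have : H^[i] x' + (n':ℝ) - ((n:ℤ) + (n':ℤ) : ℤ) = H^[i] x' - n := by push_cast; ring
        rw [this]
        exact hn
  -- lifting iterates to the circle
  have hliftj : ∀ (j : ℕ) (x : ℝ),
      T^[j * N] (x : AddCircle (1:ℝ)) = ((H^[j] x : ℝ) : AddCircle (1:ℝ)) := by
    intro j
    induction j with
    | zero => intro x; simp
    | succ j ih =>
      intro x
      have h1 : (j + 1) * N = N + j * N := by ring
      rw [h1, Function.iterate_add_apply, ih, hlift, Function.iterate_succ_apply']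
  -- the entourage
  set Uent : Set (AddCircle (1:ℝ) × AddCircle (1:ℝ)) :=
    {p | dist p.1 p.2 < ε/2} with hUent
  have hUmem : Uent ∈ 𝓤 (AddCircle (1:ℝ)) := Metric.dist_mem_uniformity (by linarith)
  -- key counting estimate
  have key : ∀ k : ℕ, 1 ≤ k →
      ((S.card ^ k : ℕ) : ℕ∞) ≤ netMaxcard T Set.univ Uent (k * N) := by
    intro k hk
    have hk0 : 0 < k := hk
    -- words
    set we : (Fin k → ι) → (ℕ → ι) := fun w j => if h : j < k then w ⟨j, h⟩ else w ⟨0, hk0⟩ with hwe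
    have hxw := fun w : Fin k → ι => itin k (we w)
    set xw : (Fin k → ι) → ℝ := fun w => (hxw w).choose with hxw'
    have hxwp : ∀ w : Fin k → ι, ∀ j ≤ k, ∃ n : ℤ, H^[j] (xw w) - n ∈ K (we w j) :=
      fun w => (hxw w).choose_spec.2
    set pt : (Fin k → ι) → AddCircle (1:ℝ) := fun w => ((xw w : ℝ) : AddCircle (1:ℝ)) with hpt
    -- separation of points with distinct words
    have sepPts : ∀ w w' : Fin k → ι, w ≠ w' → ∃ j : ℕ, j < k ∧
        ε ≤ dist (T^[j * N] (pt w)) (T^[j * N] (pt w')) := by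
      intro w w' hww
      obtain ⟨jf, hjf⟩ := Function.ne_iff.mp hww
      refine ⟨jf.1, jf.2, ?_⟩
      obtain ⟨n, hn⟩ := hxwp w jf.1 (le_of_lt jf.2)
      obtain ⟨n', hn'⟩ := hxwp w' jf.1 (le_of_lt jf.2)
      have hwj : we w jf.1 = w jf := by simp [hwe, jf.2]
      have hwj' : we w' jf.1 = w' jf := by simp [hwe, jf.2]
      rw [hwj] at hn
      rw [hwj'] at hn'
      rw [hpt]
      simp only
      rw [hliftj jf.1 (xw w), hliftj jf.1 (xw w')]
      set u := H^[jf.1] (xw w)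
      set v := H^[jf.1] (xw w')
      have hdist : dist ((u : ℝ) : AddCircle (1:ℝ)) ((v : ℝ) : AddCircle (1:ℝ))
          = |(u - v) - round (u - v)| := by
        rw [dist_eq_norm]
        have : ((u : ℝ) : AddCircle (1:ℝ)) - ((v : ℝ) : AddCircle (1:ℝ))
            = (((u - v : ℝ)) : AddCircle (1:ℝ)) := (QuotientAddGroup.mk_sub _ u v).symm
        rw [this, AddCircle.norm_eq]
        simp
      rw [hdist]
      have := sep (w jf) (w' jf) hjf (u - n) hn (v - n') hn' (round (u - v) - n + n')
      have heq : (u - n) - (v - n') - ((round (u - v) - n + n' : ℤ) : ℝ)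
          = (u - v) - round (u - v) := by push_cast; ring
      rw [heq] at this
      exact this
    -- injectivity
    have hptinj : Function.Injective pt := by
      intro w w' h
      by_contra hww
      obtain ⟨j, hjk, hsep⟩ := sepPts w w' hww
      rw [h] at hsep
      simp at hsep
      linarith
    -- the finset
    set s : Finset (AddCircle (1:ℝ)) := Finset.image pt Finset.univ with hs
    have hscard : s.card = S.card ^ k := by
      rw [hs, Finset.card_image_of_injective _ hptinj, Finset.card_univ]
      rw [Fintype.card_fun, Fintype.card_fin]
      congr 1
      exact Fintype.card_coe S
    have hnet : IsDynNetIn T Set.univ Uent (k * N) (s : Set (AddCircle (1:ℝ))) := by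
      constructor
      · exact Set.subset_univ _
      · intro x hx y hy hxy
        rw [hs] at hx hy
        simp only [Finset.coe_image, Finset.coe_univ, Set.image_univ, Set.mem_range] at hx hy
        obtain ⟨w, rfl⟩ := hx
        obtain ⟨w', rfl⟩ := hy
        have hww : w ≠ w' := fun h => hxy (by rw [h])
        obtain ⟨j, hjk, hsep⟩ := sepPts w w' hww
        rw [Function.onFun, Set.disjoint_left]
        intro z hz1 hz2
        rw [mem_ball_dynEntourage] at hz1 hz2
        have hjN : j * N < k * N := (Nat.mul_lt_mul_right (lt_of_lt_of_le Nat.zero_lt_one hN)).mpr hjk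
        have h1 := hz1 (j * N) hjN
        have h2 := hz2 (j * N) hjN
        simp only [UniformSpace.ball, Set.mem_preimage, hUent, Set.mem_setOf_eq] at h1 h2
        have htri := dist_triangle (T^[j*N] (pt w)) (T^[j*N] z) (T^[j*N] (pt w'))
        rw [dist_comm (T^[j*N] z) (T^[j*N] (pt w'))] at htri
        linarith
    calc ((S.card ^ k : ℕ) : ℕ∞) = (s.card : ℕ∞) := by rw [hscard]
    _ ≤ netMaxcard T Set.univ Uent (k * N) := hnet.card_le_netMaxcard
  -- conclude via the net entropy of the entourage
  refine le_trans ?_ (netEntropyEntourage_le_coverEntropy T Set.univ hUmem)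
  rw [netEntropyEntourage]
  have hcardpos : 0 < S.card := Finset.card_pos.mpr hSne
  set L : ℝ := Real.log S.card with hL
  have hfreq : ∃ᶠ n in Filter.atTop,
      ((L / N : ℝ) : EReal) ≤ ENNReal.log (netMaxcard T Set.univ Uent n) / n := by
    rw [Filter.frequently_atTop]
    intro a
    refine ⟨(max a 1) * N, le_trans (le_max_left a 1)
      (Nat.le_mul_of_pos_right _ (lt_of_lt_of_le Nat.zero_lt_one hN)), ?_⟩
    set k := max a 1 with hkdef
    have hk1 : 1 ≤ k := le_max_right a 1
    have hc1 := key k hk1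
    have hc2 : ((S.card : ENNReal)) ^ k ≤ ((netMaxcard T Set.univ Uent (k*N)) : ENNReal) := by
      have h' := ENat.toENNReal_le.2 hc1
      calc ((S.card : ENNReal)) ^ k = (((S.card ^ k : ℕ) : ℕ∞) : ENNReal) := by push_cast; ring
      _ ≤ _ := h'
    have hc3 := ENNReal.log_monotone hc2
    rw [ENNReal.log_pow] at hc3
    have hlogσ : ENNReal.log ((S.card : ENNReal)) = ((L : ℝ) : EReal) := by
      rw [ENNReal.log_pos_real' (by simp [hcardpos])]
      simp [hL]
    rw [hlogσ] at hc3
    have hdiv := EReal.div_le_div_right_of_nonneg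
      (c := ((k * N : ℕ) : EReal)) (Nat.cast_nonneg' _) hc3
    refine le_trans ?_ hdiv
    have hkR : ((k : ℕ) : EReal) = ((k : ℝ) : EReal) := by
      rw [EReal.coe_coe_eq_natCast]
    have hkNR : ((k * N : ℕ) : EReal) = (((k * N : ℕ) : ℝ) : EReal) := by
      rw [EReal.coe_coe_eq_natCast]
    rw [hkR, hkNR, ← EReal.coe_mul, ← EReal.coe_div]
    apply EReal.coe_le_coe_iff.mpr
    have hkpos : (0:ℝ) < (k:ℝ) := by exact_mod_cast hk1
    have hNpos : (0:ℝ) < (N:ℝ) := by exact_mod_cast lt_of_lt_of_le Nat.zero_lt_one hN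
    have hkN : ((k * N : ℕ) : ℝ) = (k : ℝ) * (N : ℝ) := by push_cast; ring
    rw [hkN, div_le_div_iff₀ hNpos (by positivity)]
    have : L * ((k:ℝ) * N) = (k:ℝ) * L * N := by ring
    linarith
  exact Filter.le_limsup_of_frequently_le hfreq

lemma stmt17_build
    (g : AddCircle (1 : ℝ) → AddCircle (1 : ℝ))
    (g' : ℝ → ℝ) (hg' : Continuous g')
    (hglift : ∀ x : ℝ, g (x : AddCircle (1 : ℝ)) = ((g' x : ℝ) : AddCircle (1 : ℝ)))
    (α' : ℝ → ℝ)
    (hgdegZ : ∀ (x : ℝ) (n : ℤ), g' (x + n) = g' x + 2 * n)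
    (k₀ : ℝ) (hk₀ : ∀ x, α' (g' x) = 2 * α' x + k₀)
    (C : ℝ) (hC : ∀ x, |α' x - x| ≤ C)
    (P₀ P₁ P₂ : ℝ) (h01 : P₀ < P₁) (h12 : P₁ < P₂) (hlen : P₂ - P₀ < 1)
    (η : ℝ) (hη : 0 < η) (hr1 : 0 < α' P₁ - α' P₀) (hr2 : 0 < α' P₂ - α' P₁)
    (hsum : 1 + η ≤ α' P₂ - α' P₀) :
    ∃ N : ℕ, 1 ≤ N ∧
      ((Real.log ((2:ℝ)^N + 1) / N : ℝ) : EReal) ≤ Dynamics.coverEntropy g Set.univ := by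
  classical
  have hC0 : 0 ≤ C := le_trans (abs_nonneg _) (hC 0)
  -- choose N
  obtain ⟨N₀, hN₀⟩ := pow_unbounded_of_one_lt ((4*C + 6)/η) (one_lt_two (α := ℝ))
  set N := max N₀ 1 with hNdef
  have hN1 : 1 ≤ N := le_max_right _ _
  have hNbig : 4*C + 6 ≤ 2^N * η := by
    have h1 : (2:ℝ)^N₀ ≤ 2^N := by
      apply pow_le_pow_right₀ one_le_two (le_max_left _ _)
    have := (div_lt_iff₀ hη).mp hN₀
    nlinarith
  refine ⟨N, hN1, ?_⟩
  set r₁ := α' P₁ - α' P₀ with hr₁def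
  set r₂ := α' P₂ - α' P₁ with hr₂def
  -- the iterate H
  set H : ℝ → ℝ := g'^[N] with hHdef
  have hH : Continuous H := by
    rw [hHdef]
    exact hg'.iterate N
  -- semiconjugacy for the iterate
  have hsemiN : ∃ Kc : ℝ, ∀ x, α' (H x) = 2^N * α' x + Kc := by
    rw [hHdef]
    clear hNbig hNdef hN1
    induction N with
    | zero => exact ⟨0, by simp⟩
    | succ n ih =>
      obtain ⟨Kc, hKc⟩ := ih
      refine ⟨2 * Kc + k₀, fun x => ?_⟩
      rw [Function.iterate_succ_apply', hk₀, hKc]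
      ring
  obtain ⟨Kc, hKc⟩ := hsemiN
  -- degree of the iterate
  have hdegH : ∀ (x : ℝ) (n : ℤ), H (x + n) = H x + ((2:ℤ)^N : ℤ) * n := by
    rw [hHdef]
    clear hNbig hNdef hN1 hKc
    induction N with
    | zero => intro x n; push_cast; simp
    | succ m ih =>
      intro x n
      rw [Function.iterate_succ_apply, hgdegZ x n, show g' x + 2 * (n:ℝ) = g' x + ((2 * n : ℤ) : ℝ) by push_cast; ring,
        ih (g' x) (2 * n), show m + 1 = 1 + m from Nat.add_comm m 1,
        Function.iterate_add_apply, Function.iterate_one,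
        ← Function.iterate_succ_apply g' m x, Function.iterate_succ_apply']
      push_cast
      ring
  -- lift of the iterate
  have hliftH : ∀ x : ℝ, g^[N] (x : AddCircle (1:ℝ)) = ((H x : ℝ) : AddCircle (1:ℝ)) := by
    rw [hHdef]
    clear hNbig hNdef hN1 hKc hdegH
    induction N with
    | zero => intro x; simp
    | succ m ih =>
      intro x
      rw [Function.iterate_succ_apply', Function.iterate_succ_apply', ih, hglift]
  -- value estimates for H at the three points
  have hval : ∀ x y : ℝ, H y - H x ≥ 2^N * (α' y - α' x) - 2*C := by
    intro x y
    have h1 := hKc x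
    have h2 := hKc y
    have h3 := abs_le.mp (hC (H x))
    have h4 := abs_le.mp (hC (H y))
    nlinarith [h3.1, h3.2, h4.1, h4.2]
  have hv1 : H P₁ - H P₀ ≥ 2^N * r₁ - 2*C := hval P₀ P₁
  have hv2 : H P₂ - H P₁ ≥ 2^N * r₂ - 2*C := hval P₁ P₂
  -- the window index sets
  set A₁ : ℤ := ⌈H P₀ - P₀⌉ with hA₁
  set B₁ : ℤ := ⌊H P₁ - P₂⌋ with hB₁
  set A₂ : ℤ := max (⌈H P₁ - P₀⌉) (B₁ + 1) with hA₂
  set B₂ : ℤ := ⌊H P₂ - P₂⌋ with hB₂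
  set S₁ : Finset ℤ := Finset.Icc A₁ B₁ with hS₁
  set S₂ : Finset ℤ := Finset.Icc A₂ B₂ with hS₂
  set S : Finset ℤ := S₁ ∪ S₂ with hSdef
  have hdisj : Disjoint S₁ S₂ := by
    rw [Finset.disjoint_left]
    intro m hm1 hm2
    rw [hS₁, Finset.mem_Icc] at hm1
    rw [hS₂, Finset.mem_Icc] at hm2
    have : B₁ + 1 ≤ A₂ := le_max_right _ _
    omega
  -- cardinality bounds
  have hcard1 : ((S₁.card : ℝ)) ≥ 2^N * r₁ - 2*C - 2 := by
    have h1 : (S₁.card : ℤ) = max (B₁ + 1 - A₁) 0 := by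
      rw [hS₁, Int.card_Icc]
      rcases le_or_gt A₁ (B₁ + 1) with h | h
      · rw [Int.toNat_of_nonneg (by omega)]; omega
      · rw [Int.toNat_of_nonpos (by omega)]; omega
    have h2 : ((S₁.card : ℝ)) ≥ (B₁ : ℝ) + 1 - A₁ := by
      have : ((S₁.card : ℤ) : ℝ) ≥ ((B₁ + 1 - A₁ : ℤ) : ℝ) := by
        exact_mod_cast h1 ▸ le_max_left _ _
      exact_mod_cast this
    have h3 : (B₁ : ℝ) > H P₁ - P₂ - 1 := by
      rw [hB₁]; exact_mod_cast Int.sub_one_lt_floor _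
    have h4 : (A₁ : ℝ) < H P₀ - P₀ + 1 := by
      rw [hA₁]; exact_mod_cast Int.ceil_lt_add_one _
    nlinarith [hv1]
  have hcard2 : ((S₂.card : ℝ)) ≥ 2^N * r₂ - 2*C - 3 := by
    have h1 : (S₂.card : ℤ) = max (B₂ + 1 - A₂) 0 := by
      rw [hS₂, Int.card_Icc]
      rcases le_or_gt A₂ (B₂ + 1) with h | h
      · rw [Int.toNat_of_nonneg (by omega)]; omega
      · rw [Int.toNat_of_nonpos (by omega)]; omega
    have h2 : ((S₂.card : ℝ)) ≥ (B₂ : ℝ) + 1 - A₂ := by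
      have : ((S₂.card : ℤ) : ℝ) ≥ ((B₂ + 1 - A₂ : ℤ) : ℝ) := by
        exact_mod_cast h1 ▸ le_max_left _ _
      exact_mod_cast this
    have h3 : (B₂ : ℝ) > H P₂ - P₂ - 1 := by
      rw [hB₂]; exact_mod_cast Int.sub_one_lt_floor _
    have h4 : (A₂ : ℝ) ≤ H P₁ - P₀ + 2 := by
      have ha : ((⌈H P₁ - P₀⌉ : ℤ) : ℝ) < H P₁ - P₀ + 1 := by
        exact_mod_cast Int.ceil_lt_add_one _
      have hb : ((B₁ + 1 : ℤ) : ℝ) ≤ H P₁ - P₂ + 1 := by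
        push_cast
        have : (B₁ : ℝ) ≤ H P₁ - P₂ := by rw [hB₁]; exact_mod_cast Int.floor_le _
        linarith
      have : (A₂ : ℤ) = max (⌈H P₁ - P₀⌉) (B₁ + 1) := hA₂
      rcases max_cases (⌈H P₁ - P₀⌉) (B₁ + 1) with ⟨he, _⟩ | ⟨he, _⟩ <;>
        rw [this, he]
      · linarith
      · push_cast at hb ⊢
        linarith
    nlinarith [hv2]
  have hcardS : (2:ℝ)^N + 1 ≤ (S.card : ℝ) := by
    have : S.card = S₁.card + S₂.card := by
      rw [hSdef]; exact Finset.card_union_of_disjoint hdisj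
    rw [this]
    push_cast
    have hsum' : 2^N * (r₁ + r₂) ≥ 2^N * (1 + η) := by
      have : r₁ + r₂ = α' P₂ - α' P₀ := by rw [hr₁def, hr₂def]; ring
      rw [this]
      have h2N : (0:ℝ) < 2^N := by positivity
      nlinarith
    nlinarith [hcard1, hcard2]
  have hcardSnat : 2^N + 1 ≤ S.card := by exact_mod_cast hcardS
  have hSne : S.Nonempty :=
    Finset.card_pos.mp (lt_of_lt_of_le (Nat.succ_pos _) hcardSnat)
  -- crossing data for each window
  have hcr : ∀ m ∈ S, ∃ u v : ℝ, u ≤ v ∧ Icc u v ⊆ Icc P₀ P₂ ∧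
      (∀ x ∈ Icc u v, H x ∈ Icc (P₀ + m) (P₂ + m)) ∧
      Icc (P₀ + m) (P₂ + m) ⊆ H '' Icc u v := by
    intro m hm
    rw [hSdef, Finset.mem_union] at hm
    have hwin : (P₀ : ℝ) + m < P₂ + m := by linarith
    rcases hm with hm | hm
    · rw [hS₁, Finset.mem_Icc] at hm
      have hc1 : H P₀ ≤ P₀ + m := by
        have : (H P₀ - P₀ : ℝ) ≤ (A₁ : ℝ) := by rw [hA₁]; exact_mod_cast Int.le_ceil _
        have hm' : ((A₁ : ℤ) : ℝ) ≤ (m : ℝ) := by exact_mod_cast hm.1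
        linarith
      have hc2 : P₂ + m ≤ H P₁ := by
        have : ((m : ℤ) : ℝ) ≤ (B₁ : ℝ) := by exact_mod_cast hm.2
        have hB : (B₁ : ℝ) ≤ H P₁ - P₂ := by rw [hB₁]; exact_mod_cast Int.floor_le _
        linarith
      obtain ⟨u, v, hu, huv, hv, hconf, hcov⟩ :=
        stmt17_crossing hH (le_of_lt h01) hc1 hc2 hwin
      exact ⟨u, v, huv, Icc_subset_Icc hu (le_trans hv (le_of_lt h12)), hconf, hcov⟩
    · rw [hS₂, Finset.mem_Icc] at hm
      have hc1 : H P₁ ≤ P₀ + m := by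
        have h1 : (H P₁ - P₀ : ℝ) ≤ ((⌈H P₁ - P₀⌉ : ℤ) : ℝ) := Int.le_ceil _
        have h2 : (⌈H P₁ - P₀⌉ : ℤ) ≤ A₂ := by rw [hA₂]; exact le_max_left _ _
        have h3 : ((A₂ : ℤ) : ℝ) ≤ (m : ℝ) := by exact_mod_cast hm.1
        have h4 : ((⌈H P₁ - P₀⌉ : ℤ) : ℝ) ≤ ((A₂ : ℤ) : ℝ) := by exact_mod_cast h2
        linarith
      have hc2 : P₂ + m ≤ H P₂ := by
        have : ((m : ℤ) : ℝ) ≤ (B₂ : ℝ) := by exact_mod_cast hm.2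
        have hB : (B₂ : ℝ) ≤ H P₂ - P₂ := by rw [hB₂]; exact_mod_cast Int.floor_le _
        linarith
      obtain ⟨u, v, hu, huv, hv, hconf, hcov⟩ :=
        stmt17_crossing hH (le_of_lt h12) hc1 hc2 hwin
      exact ⟨u, v, huv, Icc_subset_Icc (le_trans (le_of_lt h01) hu) hv, hconf, hcov⟩
  have := stmt17_horseshoe g N hN1 H hH hliftH
    (by intro x n; exact_mod_cast hdegH x n)
    P₀ P₂ (lt_trans h01 h12) hlen S hSne hcr
  refine le_trans ?_ this
  apply EReal.coe_le_coe_iff.mpr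
  have hNpos : (0:ℝ) < (N:ℝ) := by exact_mod_cast hN1
  apply (div_le_div_iff_of_pos_right hNpos).mpr
  exact Real.log_le_log (by positivity) hcardS

/-- Entropy: if the semiconjugacy `α` of a degree-two circle map `g` is light and not
injective, then `h_top(g) ≥ log(2^N + 2)/N` for some `N ≥ 1`; in particular
`h_top(g) > log 2`. -/
theorem stmt17
    (g : AddCircle (1 : ℝ) → AddCircle (1 : ℝ)) (hg : Continuous g)
    (g' : ℝ → ℝ) (hg' : Continuous g')
    (hglift : ∀ x : ℝ, g (x : AddCircle (1 : ℝ)) = ((g' x : ℝ) : AddCircle (1 : ℝ)))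
    (hgdeg : ∀ x : ℝ, g' (x + 1) = g' x + 2)
    (α : AddCircle (1 : ℝ) → AddCircle (1 : ℝ)) (hα : Continuous α)
    (α' : ℝ → ℝ) (hα' : Continuous α')
    (hαlift : ∀ x : ℝ, α (x : AddCircle (1 : ℝ)) = ((α' x : ℝ) : AddCircle (1 : ℝ)))
    (hαdeg : ∀ x : ℝ, α' (x + 1) = α' x + 1)
    (hsemi : ∀ θ, α (g θ) = α θ + α θ)
    (hlight : ∀ θ : AddCircle (1 : ℝ), IsTotallyDisconnected (α ⁻¹' {θ}))
    (hnotinj : ¬ Function.Injective α) :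
    (∃ N : ℕ, 1 ≤ N ∧
      (Real.log (2 ^ N + 2) / N : EReal) ≤ Dynamics.coverEntropy g Set.univ) ∧
    (Real.log 2 : EReal) < Dynamics.coverEntropy g Set.univ := by
  classical
  -- basic coercion fact
  have hcoe : ∀ u v : ℝ, ((u : AddCircle (1:ℝ)) = (v : AddCircle (1:ℝ))) ↔ ∃ n : ℤ, u - v = n := by
    intro u v
    rw [QuotientAddGroup.eq_iff_sub_mem]
    constructor
    · rintro h
      rcases AddSubgroup.mem_zmultiples_iff.mp h with ⟨n, hn⟩
      exact ⟨n, by simpa using hn.symm⟩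
    · rintro ⟨n, hn⟩
      exact AddSubgroup.mem_zmultiples_iff.mpr ⟨n, by simp [hn]⟩
  -- integer translation laws
  have hαZ : ∀ (x : ℝ) (n : ℤ), α' (x + n) = α' x + n := by
    have hsub : ∀ x : ℝ, α' (x - 1) = α' x - 1 := by
      intro x
      have := hαdeg (x - 1)
      simp at this
      linarith
    intro x n
    induction n using Int.induction_on with
    | zero => simp
    | succ k ih => push_cast
                   rw [show x + ((k:ℝ) + 1) = (x + k) + 1 by ring, hαdeg]
                   push_cast at ih
                   linarith
    | pred k ih => push_cast
                   rw [show x + (-(k:ℝ) - 1) = (x + (-k)) - 1 by ring, hsub]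
                   push_cast at ih
                   linarith
  have hgZ : ∀ (x : ℝ) (n : ℤ), g' (x + n) = g' x + 2 * n := by
    have hsub : ∀ x : ℝ, g' (x - 1) = g' x - 2 := by
      intro x
      have := hgdeg (x - 1)
      simp at this
      linarith
    intro x n
    induction n using Int.induction_on with
    | zero => simp
    | succ k ih => push_cast
                   rw [show x + ((k:ℝ) + 1) = (x + k) + 1 by ring, hgdeg]
                   push_cast at ih
                   linarith
    | pred k ih => push_cast
                   rw [show x + (-(k:ℝ) - 1) = (x + (-k)) - 1 by ring, hsub]
                   push_cast at ih
                   linarith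
  -- the semiconjugacy constant
  have hintval : ∀ x : ℝ, ∃ n : ℤ, α' (g' x) - 2 * α' x = n := by
    intro x
    have h1 := hsemi ((x : ℝ) : AddCircle (1:ℝ))
    rw [hglift, hαlift, hαlift] at h1
    have h2 : ((α' x + α' x : ℝ) : AddCircle (1:ℝ)) = ((α' x : ℝ) : AddCircle (1:ℝ)) + ((α' x : ℝ) : AddCircle (1:ℝ)) := by
      exact QuotientAddGroup.mk_add _ _ _
    rw [← h2] at h1
    obtain ⟨n, hn⟩ := (hcoe _ _).mp h1
    exact ⟨n, by linarith⟩
  set k₀ : ℝ := α' (g' 0) - 2 * α' 0 with hk₀def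
  have hk₀ : ∀ x, α' (g' x) = 2 * α' x + k₀ := by
    intro x
    have h := stmt17_intConst ((hα'.comp hg').sub (continuous_const.mul hα')) hintval x 0
    change α' (g' x) - 2 * α' x = α' (g' 0) - 2 * α' 0 at h
    rw [hk₀def]
    linarith [h]
  -- bound on α' x - x
  obtain ⟨C, hCb⟩ := (isCompact_Icc (a := (0:ℝ)) (b := 1)).exists_bound_of_continuousOn
    ((hα'.sub continuous_id).continuousOn)
  have hC : ∀ x : ℝ, |α' x - x| ≤ C := by
    intro x
    have hf : x - (⌊x⌋ : ℝ) ∈ Icc (0:ℝ) 1 := by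
      constructor
      · linarith [Int.floor_le x]
      · linarith [Int.lt_floor_add_one x]
    have h1 := hCb _ hf
    have h2 : α' (x - ⌊x⌋ + ⌊x⌋) = α' (x - ⌊x⌋) + ⌊x⌋ := hαZ _ _
    rw [show x - (⌊x⌋:ℝ) + ⌊x⌋ = x by ring] at h2
    have : α' x - x = α' (x - ⌊x⌋) - (x - ⌊x⌋) := by rw [h2]; ring
    rw [this]
    simpa [Real.norm_eq_abs] using h1
  -- STEP 1: find a < b with b - a < 1 and α' a = α' b
  have hpair : ∃ a b : ℝ, a < b ∧ b - a < 1 ∧ α' a = α' b := by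
    by_contra hno
    push_neg at hno
    -- then α' is strictly increasing on steps < 1
    have hmono : ∀ x s : ℝ, 0 < s → s < 1 → α' x < α' (x + s) := by
      intro x s hs0 hs1
      by_contra hle
      push_neg at hle
      rcases eq_or_lt_of_le hle with heq | hlt
      · exact hno x (x + s) (by linarith) (by linarith) heq.symm
      · -- IVT on [s, 1] to find exact hit
        have hc : α' x ∈ Icc (α' (x + s)) (α' (x + 1)) := by
          rw [hαdeg x]
          exact ⟨hlt.le, by linarith⟩
        obtain ⟨u, hu, huv⟩ := intermediate_value_Icc (by linarith : s ≤ 1)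
          ((hα'.comp (continuous_const.add continuous_id)).continuousOn
            (s := Icc s 1)) (by simpa using hc)
        change α' (x + u) = α' x at huv
        have hu1 : u ≠ 1 := by
          intro h
          rw [h, hαdeg x] at huv
          linarith
        have hu2 : u < 1 := lt_of_le_of_ne hu.2 hu1
        exact hno x (x + u) (by linarith [hu.1]) (by linarith) huv.symm
    -- α is injective: contradiction
    apply hnotinj
    intro θ₁ θ₂ heq
    obtain ⟨x₁, rfl⟩ := QuotientAddGroup.mk_surjective θ₁
    obtain ⟨y, rfl⟩ := QuotientAddGroup.mk_surjective θ₂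
    set x₂ : ℝ := y - ⌊y - x₁⌋ with hx₂def
    have hx₂coe : ((x₂ : ℝ) : AddCircle (1:ℝ)) = ((y : ℝ) : AddCircle (1:ℝ)) :=
      (hcoe _ _).mpr ⟨-⌊y - x₁⌋, by rw [hx₂def]; push_cast; ring⟩
    have hx₂mem : x₂ - x₁ ∈ Ico (0:ℝ) 1 := by
      constructor
      · rw [hx₂def]; linarith [Int.floor_le (y - x₁)]
      · rw [hx₂def]; linarith [Int.lt_floor_add_one (y - x₁)]
    rw [← hx₂coe]
    rw [← hx₂coe, hαlift, hαlift] at heq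
    obtain ⟨n, hn⟩ := (hcoe _ _).mp heq
    rcases eq_or_lt_of_le hx₂mem.1 with hz | hpos
    · rw [hcoe]
      exact ⟨0, by push_cast; linarith⟩
    · exfalso
      have h1 : α' x₁ < α' x₂ := by
        have := hmono x₁ (x₂ - x₁) hpos hx₂mem.2
        rw [show x₁ + (x₂ - x₁) = x₂ by ring] at this
        exact this
      have h2 : α' x₂ < α' x₁ + 1 := by
        have h3 := hmono x₂ (x₁ + 1 - x₂) (by linarith [hx₂mem.2]) (by linarith [hpos])
        rw [show x₂ + (x₁ + 1 - x₂) = x₁ + 1 by ring, hαdeg] at h3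
        linarith
      have hA : (0:ℝ) < -(n:ℝ) := by linarith
      have hB : -(n:ℝ) < 1 := by linarith
      have h4 : (0:ℤ) < -n := by exact_mod_cast hA
      have h5 : -n < (1:ℤ) := by exact_mod_cast hB
      omega
  obtain ⟨a, b, hab, hab1, hαab⟩ := hpair
  -- STEP 2: find t in (a,b) with α' t ≠ α' a, via lightness
  have ht : ∃ t ∈ Ioo a b, α' t ≠ α' a := by
    by_contra hno
    push_neg at hno
    have harc : (fun x : ℝ => (x : AddCircle (1:ℝ))) '' Icc a b ⊆ α ⁻¹' {α ((a:ℝ) : AddCircle (1:ℝ))} := by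
      rintro _ ⟨x, hx, rfl⟩
      simp only [Set.mem_preimage, Set.mem_singleton_iff]
      rw [hαlift, hαlift]
      congr 1
      rcases eq_or_lt_of_le hx.1 with h | h1
      · rw [← h]
      rcases eq_or_lt_of_le hx.2 with h | h2
      · rw [h, ← hαab]
      · exact hno x ⟨h1, h2⟩
    have hpre : IsPreconnected ((fun x : ℝ => (x : AddCircle (1:ℝ))) '' Icc a b) :=
      (isPreconnected_Icc).image _ (AddCircle.continuous_mk' 1).continuousOn
    have hsub := hlight (α ((a:ℝ) : AddCircle (1:ℝ))) _ harc hpre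
    have hmem1 : ((a:ℝ) : AddCircle (1:ℝ)) ∈ (fun x : ℝ => (x : AddCircle (1:ℝ))) '' Icc a b :=
      ⟨a, ⟨le_refl a, hab.le⟩, rfl⟩
    have hmem2 : ((b:ℝ) : AddCircle (1:ℝ)) ∈ (fun x : ℝ => (x : AddCircle (1:ℝ))) '' Icc a b :=
      ⟨b, ⟨hab.le, le_refl b⟩, rfl⟩
    have := hsub hmem1 hmem2
    obtain ⟨n, hn⟩ := (hcoe _ _).mp this
    have h1 : (-1:ℝ) < (n:ℝ) := by linarith
    have h2 : (n:ℝ) < 0 := by linarith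
    have h3 : (-1:ℤ) < n := by exact_mod_cast h1
    have h4 : n < (0:ℤ) := by exact_mod_cast h2
    omega
  obtain ⟨t, htab, hte⟩ := ht
  set e : ℝ := α' t - α' a with hedef
  have hkey : ∃ N : ℕ, 1 ≤ N ∧
      ((Real.log ((2:ℝ)^N + 1) / N : ℝ) : EReal) ≤ Dynamics.coverEntropy g Set.univ := by
    have hαa1 : α' (a + 1) = α' a + 1 := hαdeg a
    have hαt1 : α' (t + 1) = α' t + 1 := hαdeg t
    rcases lt_or_gt_of_ne (sub_ne_zero.mpr hte) with hneg | hpos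
    · -- e < 0 : use (t, b, a+1)
      exact stmt17_build g g' hg' hglift α' hgZ k₀ hk₀ C hC t b (a+1)
        htab.2 (by linarith) (by linarith [htab.1]) (α' a - α' t)
        (by linarith) (by linarith [hαab]) (by linarith [hαab]) (by linarith [hαab])
    · -- e > 0 : use (b, a+1, t+1)
      exact stmt17_build g g' hg' hglift α' hgZ k₀ hk₀ C hC b (a+1) (t+1)
        (by linarith) (by linarith [htab.1]) (by linarith [htab.2]) (α' t - α' a)
        (by linarith) (by linarith [hαab]) (by linarith) (by linarith [hαab])
  -- final numeric conversion
  obtain ⟨N, hN1, hNineq⟩ := hkey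
  have hNpos : (0:ℝ) < (N:ℝ) := by exact_mod_cast hN1
  set L : ℝ := Real.log ((2:ℝ)^N + 1) / N with hLdef
  have h2N : (0:ℝ) < 2^N := by positivity
  have hlog2L : Real.log 2 < L := by
    rw [hLdef]
    rw [lt_div_iff₀ hNpos]
    have h1 : Real.log ((2:ℝ)^N) < Real.log ((2:ℝ)^N + 1) :=
      Real.log_lt_log h2N (by linarith)
    rw [Real.log_pow] at h1
    calc Real.log 2 * N = N * Real.log 2 := by ring
    _ < Real.log (2^N + 1) := h1
  set ε : ℝ := L - Real.log 2 with hεdef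
  have hεpos : 0 < ε := by rw [hεdef]; linarith
  set M : ℕ := max 1 ⌈(2 * Real.log 2) / ε⌉₊ with hMdef
  have hM1 : 1 ≤ M := le_max_left _ _
  have hMpos : (0:ℝ) < (M:ℝ) := by exact_mod_cast hM1
  have hMge : (2 * Real.log 2) / ε ≤ (M:ℝ) := by
    calc (2 * Real.log 2) / ε ≤ (⌈(2 * Real.log 2) / ε⌉₊ : ℝ) := Nat.le_ceil _
    _ ≤ (M:ℝ) := by exact_mod_cast le_max_right 1 _
  have hlog2pos : (0:ℝ) < Real.log 2 := Real.log_pos (by norm_num)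
  have hMbound : Real.log ((2:ℝ)^M + 2) / M ≤ L := by
    have h1 : (2:ℝ)^M + 2 ≤ 2^(M+2) := by
      have : (1:ℝ) ≤ 2^M := one_le_pow₀ (by norm_num)
      rw [pow_add]
      nlinarith
    have h2 : Real.log ((2:ℝ)^M + 2) ≤ Real.log (2^(M+2)) :=
      Real.log_le_log (by positivity) h1
    rw [Real.log_pow] at h2
    rw [div_le_iff₀ hMpos]
    have h3 : 2 * Real.log 2 ≤ (M:ℝ) * ε := by
      rw [div_le_iff₀ hεpos] at hMge
      linarith [hMge]
    have h4 : ((M + 2 : ℕ) : ℝ) = (M:ℝ) + 2 := by push_cast; ring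
    calc Real.log ((2:ℝ)^M + 2) ≤ ((M + 2 : ℕ) : ℝ) * Real.log 2 := h2
    _ = (M:ℝ) * Real.log 2 + 2 * Real.log 2 := by rw [h4]; ring
    _ ≤ (M:ℝ) * Real.log 2 + (M:ℝ) * ε := by linarith
    _ = (M:ℝ) * (Real.log 2 + ε) := by ring
    _ = L * M := by rw [hεdef]; ring
  have hMstrict : Real.log 2 < Real.log ((2:ℝ)^M + 2) / M := by
    rw [lt_div_iff₀ hMpos]
    have h1 : Real.log ((2:ℝ)^M) < Real.log ((2:ℝ)^M + 2) :=
      Real.log_lt_log (by positivity) (by linarith)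
    rw [Real.log_pow] at h1
    calc Real.log 2 * M = M * Real.log 2 := by ring
    _ < Real.log (2^M + 2) := h1
  have hcast : ((Real.log ((2:ℝ) ^ M + 2) / (M:ℝ) : ℝ) : EReal)
      = (Real.log (2 ^ M + 2) / M : EReal) := by
    rw [EReal.coe_div, EReal.coe_coe_eq_natCast]
  have hfinal : (Real.log (2 ^ M + 2) / M : EReal) ≤ Dynamics.coverEntropy g Set.univ := by
    rw [← hcast]
    exact le_trans (EReal.coe_le_coe_iff.mpr hMbound) hNineq
  constructor
  · exact ⟨M, hM1, hfinal⟩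
  · refine lt_of_lt_of_le ?_ hfinal
    rw [← hcast]
    exact_mod_cast EReal.coe_lt_coe_iff.mpr hMstrict
end

section
/- Let g be a continuous degree-two circle map with light, non-injective semiconjugacy α and lift α̃. Then for every nontrivial compact interval J ⊆ ℝ, the restriction α̃|_J has unbounded variation; in particular there exist N ∈ ℕ so that var(α̃, [0,1]) ≥ (2^N + 2)^j / 2^{Nj} for all j ≥ 1. -/
open Set
open scoped ENNReal

namespace Stmt18Aux

noncomputable def hitPt (f : ℝ → ℝ) (a b y : ℝ) : ℝ :=
  sInf {r | r ∈ Set.Icc a b ∧ y ≤ f r}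

lemma hitPt_mem {f : ℝ → ℝ} (hf : Continuous f) {a b y : ℝ} (hab : a ≤ b) (hb : y ≤ f b) :
    hitPt f a b y ∈ {r | r ∈ Set.Icc a b ∧ y ≤ f r} := by
  have hne : ({r | r ∈ Set.Icc a b ∧ y ≤ f r}).Nonempty := ⟨b, ⟨hab, le_rfl⟩, hb⟩
  have hcl : IsClosed {r | r ∈ Set.Icc a b ∧ y ≤ f r} := by
    have : {r | r ∈ Set.Icc a b ∧ y ≤ f r} = Set.Icc a b ∩ f ⁻¹' (Set.Ici y) := rfl
    rw [this]; exact isClosed_Icc.inter (isClosed_Ici.preimage hf)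
  exact hcl.csInf_mem hne ⟨a, fun t ht => ht.1.1⟩

lemma hitPt_eq {f : ℝ → ℝ} (hf : Continuous f) {a b y : ℝ} (hab : a ≤ b)
    (ha : f a ≤ y) (hb : y ≤ f b) : f (hitPt f a b y) = y := by
  have hmem := hitPt_mem hf hab hb
  refine le_antisymm ?_ hmem.2
  rcases eq_or_lt_of_le hmem.1.1 with h | h
  · rw [← h]; exact ha
  · have hev : ∀ t ∈ Set.Ico a (hitPt f a b y), f t < y := by
      intro t ht
      by_contra hge
      push_neg at hge
      have htS : t ∈ {r | r ∈ Set.Icc a b ∧ y ≤ f r} :=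
        ⟨⟨ht.1, ht.2.le.trans hmem.1.2⟩, hge⟩
      exact absurd (csInf_le ⟨a, fun r hr => hr.1.1⟩ htS) (not_le.2 ht.2)
    have htd : Filter.Tendsto f (nhdsWithin (hitPt f a b y) (Set.Iio (hitPt f a b y)))
        (nhds (f (hitPt f a b y))) :=
      (hf.continuousAt).continuousWithinAt.tendsto
    refine le_of_tendsto htd ?_
    filter_upwards [Ico_mem_nhdsLT_of_mem ⟨h, le_rfl⟩] with t ht using (hev t ht).le

/-- ascending lap: variation of `β ∘ f` on `[a,b]` is at least variation of `β`
on `[f a, f b]`. -/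
lemma evar_comp_icc_le (β : ℝ → ℝ) {f : ℝ → ℝ} (hf : Continuous f) {a b : ℝ} (hab : a ≤ b)
    (hfab : f a ≤ f b) :
    eVariationOn β (Set.Icc (f a) (f b)) ≤ eVariationOn (β ∘ f) (Set.Icc a b) := by
  refine iSup_le ?_
  rintro ⟨n, u, hu, us⟩
  set v : ℕ → ℝ := fun i => hitPt f a b (u i) with hv
  have hmem : ∀ i, v i ∈ Set.Icc a b := fun i => (hitPt_mem hf hab (us i).2).1
  have hfv : ∀ i, f (v i) = u i := fun i => hitPt_eq hf hab (us i).1 (us i).2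
  have hmono : Monotone v := by
    intro i j hij
    refine csInf_le_csInf ⟨a, fun t ht => ht.1.1⟩ ⟨b, ⟨⟨hab, le_rfl⟩, (us j).2⟩⟩ ?_
    intro t ht
    exact ⟨ht.1, (hu hij).trans ht.2⟩
  have : (∑ i ∈ Finset.range n, edist (β (u (i + 1))) (β (u i)))
      = ∑ i ∈ Finset.range n, edist ((β ∘ f) (v (i + 1))) ((β ∘ f) (v i)) := by
    refine Finset.sum_congr rfl fun i _ => ?_
    simp [Function.comp, hfv]
  rw [this]
  exact eVariationOn.sum_le (f := β ∘ f) (n := n) hmono hmem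

/-- descending lap. -/
lemma evar_comp_icc_le' (β : ℝ → ℝ) {f : ℝ → ℝ} (hf : Continuous f) {a b : ℝ} (hab : a ≤ b)
    (hfab : f b ≤ f a) :
    eVariationOn β (Set.Icc (f b) (f a)) ≤ eVariationOn (β ∘ f) (Set.Icc a b) := by
  set φ : ℝ → ℝ := fun r => a + b - r with hφ
  have hφc : Continuous φ := by fun_prop
  have hφanti : AntitoneOn φ (Set.Icc a b) := fun x _ y _ hxy => by
    simp only [hφ]; linarith
  have himg : φ '' Set.Icc a b = Set.Icc a b := by
    have := image_const_sub_Icc (a + b) a b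
    simpa [hφ, show a + b - b = a by ring, show a + b - a = b by ring] using this
  have hrefl : eVariationOn ((β ∘ f) ∘ φ) (Set.Icc a b) = eVariationOn (β ∘ f) (Set.Icc a b) := by
    rw [eVariationOn.comp_eq_of_antitoneOn (β ∘ f) φ hφanti, himg]
  have h1 : (f ∘ φ) a = f b := by simp [hφ, Function.comp, show a + b - a = b by ring]
  have h2 : (f ∘ φ) b = f a := by simp [hφ, Function.comp, show a + b - b = a by ring]
  have := evar_comp_icc_le β (hf.comp hφc) hab (by rw [h1, h2]; exact hfab)
  rw [h1, h2] at this
  calc eVariationOn β (Set.Icc (f b) (f a)) ≤ eVariationOn (β ∘ (f ∘ φ)) (Set.Icc a b) := this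
    _ = eVariationOn ((β ∘ f) ∘ φ) (Set.Icc a b) := rfl
    _ = eVariationOn (β ∘ f) (Set.Icc a b) := hrefl

lemma evar_const_mul_le (c : ℝ) (hc : 0 ≤ c) (f : ℝ → ℝ) (s : Set ℝ) :
    eVariationOn (fun x => c * f x) s ≤ ENNReal.ofReal c * eVariationOn f s := by
  refine iSup_le ?_
  rintro ⟨n, u, hu, us⟩
  calc (∑ i ∈ Finset.range n, edist (c * f (u (i + 1))) (c * f (u i)))
      = ∑ i ∈ Finset.range n, ENNReal.ofReal c * edist (f (u (i + 1))) (f (u i)) := by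
        refine Finset.sum_congr rfl fun i _ => ?_
        rw [edist_dist, edist_dist, Real.dist_eq, Real.dist_eq, ← mul_sub, abs_mul,
          abs_of_nonneg hc, ENNReal.ofReal_mul hc]
    _ = ENNReal.ofReal c * ∑ i ∈ Finset.range n, edist (f (u (i + 1))) (f (u i)) := by
        rw [Finset.mul_sum]
    _ ≤ _ := mul_le_mul_right (eVariationOn.sum_le (f := f) (n := n) hu us) _

lemma icc_split (F : ℝ → ℝ) {a b c : ℝ} (hab : a ≤ b) (hbc : b ≤ c) :
    eVariationOn F (Set.Icc a b) + eVariationOn F (Set.Icc b c)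
      ≤ eVariationOn F (Set.Icc a c) := by
  have := eVariationOn.Icc_add_Icc F (s := Set.univ) hab hbc (Set.mem_univ b)
  simpa [Set.univ_inter] using this.le

lemma lap_up (β : ℝ → ℝ) (W : ℝ≥0∞) (L : ℝ) (hL : 0 < L)
    (hW : ∀ y : ℝ, W ≤ eVariationOn β (Set.Icc y (y + L))) :
    ∀ (m : ℕ) {f : ℝ → ℝ}, Continuous f → ∀ {s t : ℝ}, s ≤ t → f s + m * L ≤ f t →
      (m : ℝ≥0∞) * W ≤ eVariationOn (β ∘ f) (Set.Icc s t) := by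
  intro m
  induction m with
  | zero => intro f hf s t hst h; simp
  | succ m ih =>
    intro f hf s t hst h
    have hm0 : (0:ℝ) ≤ (m : ℝ) * L := by positivity
    have h1 : f s + L ≤ f t := by push_cast at h; nlinarith
    have hmem := hitPt_mem hf hst h1
    set u := hitPt f s t (f s + L) with hu
    have hfu : f u = f s + L := hitPt_eq hf hst (by linarith) h1
    have seg1 : W ≤ eVariationOn (β ∘ f) (Set.Icc s u) := by
      have h2 := evar_comp_icc_le β hf hmem.1.1 (by rw [hfu]; linarith)
      rw [hfu] at h2
      exact (hW (f s)).trans h2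
    have seg2 : (m : ℝ≥0∞) * W ≤ eVariationOn (β ∘ f) (Set.Icc u t) := by
      refine ih hf hmem.1.2 ?_
      rw [hfu]; push_cast at h ⊢; linarith
    calc ((m + 1 : ℕ) : ℝ≥0∞) * W = (m : ℝ≥0∞) * W + W := by push_cast; ring
      _ ≤ eVariationOn (β ∘ f) (Set.Icc u t) + eVariationOn (β ∘ f) (Set.Icc s u) :=
          add_le_add seg2 seg1
      _ = eVariationOn (β ∘ f) (Set.Icc s u) + eVariationOn (β ∘ f) (Set.Icc u t) := by
          rw [add_comm]
      _ ≤ _ := icc_split (β ∘ f) hmem.1.1 hmem.1.2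

lemma lap_down (β : ℝ → ℝ) (W : ℝ≥0∞) (L : ℝ) (hL : 0 < L)
    (hW : ∀ y : ℝ, W ≤ eVariationOn β (Set.Icc y (y + L)))
    (m : ℕ) {f : ℝ → ℝ} (hf : Continuous f) {s t : ℝ} (hst : s ≤ t)
    (h : f t + m * L ≤ f s) :
    (m : ℝ≥0∞) * W ≤ eVariationOn (β ∘ f) (Set.Icc s t) := by
  set φ : ℝ → ℝ := fun r => s + t - r with hφ
  have hφc : Continuous φ := by fun_prop
  have hφanti : AntitoneOn φ (Set.Icc s t) := fun x _ y _ hxy => by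
    simp only [hφ]; linarith
  have himg : φ '' Set.Icc s t = Set.Icc s t := by
    have := image_const_sub_Icc (s + t) s t
    simpa [hφ, show s + t - t = s by ring, show s + t - s = t by ring] using this
  have hrefl : eVariationOn ((β ∘ f) ∘ φ) (Set.Icc s t) = eVariationOn (β ∘ f) (Set.Icc s t) := by
    rw [eVariationOn.comp_eq_of_antitoneOn (β ∘ f) φ hφanti, himg]
  rw [← hrefl]
  have h1 : (f ∘ φ) s = f t := by simp [hφ, Function.comp, show s + t - s = t by ring]
  have h2 : (f ∘ φ) t = f s := by simp [hφ, Function.comp, show s + t - t = s by ring]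
  have := lap_up β W L hL hW m (hf.comp hφc) hst (by rw [h1, h2]; exact h)
  exact this

end Stmt18Aux

open Stmt18Aux

/-- Unbounded variation: if the semiconjugacy `α` of a degree-two circle map is light
and not injective, then the lift `α̃` has unbounded variation on every nontrivial
compact interval; in particular there is `N ≥ 1` with
`var(α̃,[0,1]) ≥ (2^N+2)^j / 2^(Nj)` for all `j ≥ 1`. -/
theorem stmt18
    (g : AddCircle (1 : ℝ) → AddCircle (1 : ℝ)) (hg : Continuous g)
    (g' : ℝ → ℝ) (hg' : Continuous g')
    (hglift : ∀ x : ℝ, g (x : AddCircle (1 : ℝ)) = ((g' x : ℝ) : AddCircle (1 : ℝ)))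
    (hgdeg : ∀ x : ℝ, g' (x + 1) = g' x + 2)
    (α : AddCircle (1 : ℝ) → AddCircle (1 : ℝ)) (hα : Continuous α)
    (α' : ℝ → ℝ) (hα' : Continuous α')
    (hαlift : ∀ x : ℝ, α (x : AddCircle (1 : ℝ)) = ((α' x : ℝ) : AddCircle (1 : ℝ)))
    (hαdeg : ∀ x : ℝ, α' (x + 1) = α' x + 1)
    (hsemi : ∀ θ, α (g θ) = α θ + α θ)
    (hsemi' : ∀ x : ℝ, α' (g' x) = 2 * α' x)
    (hlight : ∀ θ : AddCircle (1 : ℝ), IsTotallyDisconnected (α ⁻¹' {θ}))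
    (hnotinj : ¬ Function.Injective α) :
    (∀ s t : ℝ, s < t → ¬ BoundedVariationOn α' (Set.Icc s t)) ∧
    (∃ N : ℕ, 1 ≤ N ∧ ∀ j : ℕ, 1 ≤ j →
      ENNReal.ofReal ((2 ^ N + 2) ^ j / 2 ^ (N * j)) ≤ eVariationOn α' (Set.Icc 0 1)) := by
  classical
  -- basic translation lemmas for the lift α'
  have βnat : ∀ (n : ℕ) (y : ℝ), α' (y + n) = α' y + n := by
    intro n
    induction n with
    | zero => simp
    | succ n ih =>
      intro y
      push_cast
      rw [show y + ((n : ℝ) + 1) = (y + n) + 1 by ring, hαdeg, ih]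
      ring
  have βint : ∀ (k : ℤ) (y : ℝ), α' (y + k) = α' y + k := by
    intro k y
    induction k using Int.induction_on with
    | zero => simp
    | succ n ih =>
      push_cast at ih ⊢
      rw [show y + ((n : ℝ) + 1) = (y + n) + 1 by ring, hαdeg, ih]
      ring
    | pred n ih =>
      push_cast at ih ⊢
      have h1 := hαdeg (y + (-(n : ℝ) - 1))
      rw [show y + (-(n : ℝ) - 1) + 1 = y + -(n : ℝ) by ring, ih] at h1
      linarith
  -- translation lemmas for g' and its iterates
  have gnat : ∀ (n : ℕ) (y : ℝ), g' (y + n) = g' y + 2 * n := by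
    intro n
    induction n with
    | zero => simp
    | succ n ih =>
      intro y
      push_cast
      rw [show y + ((n : ℝ) + 1) = (y + n) + 1 by ring, hgdeg, ih]
      ring
  have hiterdeg : ∀ (N : ℕ) (y : ℝ), g'^[N] (y + 1) = g'^[N] y + 2 ^ N := by
    intro N
    induction N with
    | zero => simp
    | succ N ih =>
      intro y
      rw [Function.iterate_succ_apply', Function.iterate_succ_apply', ih]
      have h2 := gnat (2 ^ N) (g'^[N] y)
      push_cast at h2
      rw [h2]
      ring
  have hiternat : ∀ (N n : ℕ) (y : ℝ), g'^[N] (y + n) = g'^[N] y + 2 ^ N * n := by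
    intro N n
    induction n with
    | zero => simp
    | succ n ih =>
      intro y
      push_cast
      rw [show y + ((n : ℝ) + 1) = (y + n) + 1 by ring, hiterdeg, ih]
      ring
  have hsemiN : ∀ (N : ℕ) (y : ℝ), α' (g'^[N] y) = 2 ^ N * α' y := by
    intro N
    induction N with
    | zero => intro y; simp
    | succ N ih =>
      intro y
      rw [Function.iterate_succ_apply', hsemi', ih]
      ring
  -- the bounded displacement constant
  obtain ⟨C0, hC0⟩ : ∃ C0 : ℝ, ∀ x : ℝ, |α' x - x| ≤ C0 := by
    obtain ⟨C, hC⟩ := (isCompact_Icc (a := (0 : ℝ)) (b := 1)).exists_bound_of_continuousOn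
      ((hα'.sub continuous_id).continuousOn)
    refine ⟨C, fun x => ?_⟩
    have hx : α' x - x = α' (Int.fract x) - Int.fract x := by
      have h1 : Int.fract x + (⌊x⌋ : ℝ) = x := by
        rw [add_comm]; exact Int.floor_add_fract x
      have h2 := βint ⌊x⌋ (Int.fract x)
      rw [h1] at h2
      have h3 := Int.floor_add_fract x
      rw [h2]
      linarith
    rw [hx]
    have := hC (Int.fract x) ⟨Int.fract_nonneg x, (Int.fract_lt_one x).le⟩
    simpa using this
  have hC0nn : 0 ≤ C0 := le_trans (abs_nonneg _) (hC0 0)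
  -- bound |2^M α' y - g'^[M] y| ≤ C0
  have hb : ∀ (M : ℕ) (y : ℝ), |2 ^ M * α' y - g'^[M] y| ≤ C0 := by
    intro M y
    have := hC0 (g'^[M] y)
    rwa [hsemiN M y] at this
  -- lightness: α' is not constant on any nondegenerate interval of length < 1
  have nonconst : ∀ u w : ℝ, u < w → w - u < 1 → ∃ z ∈ Set.Icc u w, α' z ≠ α' u := by
    intro u w huw hlen
    by_contra hcon
    push_neg at hcon
    have hsub : ((↑) : ℝ → AddCircle (1 : ℝ)) '' Set.Icc u w
        ⊆ α ⁻¹' {((α' u : ℝ) : AddCircle (1 : ℝ))} := by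
      rintro _ ⟨z, hz, rfl⟩
      simp only [Set.mem_preimage, Set.mem_singleton_iff]
      rw [hαlift z, hcon z hz]
    have hpre : IsPreconnected (((↑) : ℝ → AddCircle (1 : ℝ)) '' Set.Icc u w) :=
      (isPreconnected_Icc).image _ (AddCircle.continuous_mk' 1).continuousOn
    have hsing := hlight _ _ hsub hpre
    have hequw := hsing (Set.mem_image_of_mem _ (Set.left_mem_Icc.2 huw.le))
      (Set.mem_image_of_mem _ (Set.right_mem_Icc.2 huw.le))
    rw [QuotientAddGroup.eq_iff_sub_mem, AddSubgroup.mem_zmultiples_iff] at hequw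
    obtain ⟨k, hk⟩ := hequw
    have hk' : (k : ℝ) = u - w := by
      simpa [zsmul_eq_mul] using hk
    have h1 : (-1 : ℤ) < k := by
      have : (-1 : ℝ) < (k : ℝ) := by rw [hk']; linarith
      exact_mod_cast this
    have h2 : k < 0 := by
      have : (k : ℝ) < 0 := by rw [hk']; linarith
      exact_mod_cast this
    omega
  -- there is a descending pair
  obtain ⟨p, q, hpq, hpqlt⟩ : ∃ p q : ℝ, p < q ∧ α' q < α' p := by
    by_contra hmon
    push_neg at hmon
    rw [Function.not_injective_iff] at hnotinj
    obtain ⟨θ1, θ2, hθeq, hθne⟩ := hnotinj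
    obtain ⟨a, rfl⟩ := QuotientAddGroup.mk_surjective θ1
    obtain ⟨b0, rfl⟩ := QuotientAddGroup.mk_surjective θ2
    set b : ℝ := a + Int.fract (b0 - a) with hbdef
    have hbb0 : ((b : ℝ) : AddCircle (1 : ℝ)) = ((b0 : ℝ) : AddCircle (1 : ℝ)) := by
      rw [QuotientAddGroup.eq_iff_sub_mem, AddSubgroup.mem_zmultiples_iff]
      refine ⟨-⌊b0 - a⌋, ?_⟩
      have := Int.self_sub_floor (b0 - a)
      push_cast [zsmul_eq_mul]
      rw [hbdef]
      linarith
    have hfr0 : Int.fract (b0 - a) ≠ 0 := by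
      intro h0
      apply hθne
      have hba : b = a := by rw [hbdef, h0, add_zero]
      rw [← hbb0, hba]
    have hab : a < b := by
      have h1 := Int.fract_nonneg (b0 - a)
      rcases eq_or_lt_of_le h1 with h | h
      · exact absurd h.symm hfr0
      · rw [hbdef]; linarith
    have hab1 : b < a + 1 := by
      have := Int.fract_lt_one (b0 - a)
      rw [hbdef]; linarith
    have hc1 : ((α' a : ℝ) : AddCircle (1 : ℝ)) = ((α' b : ℝ) : AddCircle (1 : ℝ)) := by
      rw [← hαlift, ← hαlift, hbb0]
      exact hθeq
    obtain ⟨k, hk⟩ : ∃ k : ℤ, α' b = α' a + k := by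
      rw [QuotientAddGroup.eq_iff_sub_mem, AddSubgroup.mem_zmultiples_iff] at hc1
      obtain ⟨k, hk⟩ := hc1
      refine ⟨-k, ?_⟩
      have : (k : ℝ) = α' a - α' b := by simpa [zsmul_eq_mul] using hk
      push_cast
      linarith
    have h0 : α' a ≤ α' b := hmon a b hab
    have h1 : α' b ≤ α' a + 1 := by
      have := hmon b (a + 1) hab1
      rwa [hαdeg] at this
    have hk01 : k = 0 ∨ k = 1 := by
      have e0 : (0 : ℝ) ≤ (k : ℝ) := by rw [hk] at h0; linarith
      have e1 : (k : ℝ) ≤ 1 := by rw [hk] at h1; linarith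
      have e0' : (0 : ℤ) ≤ k := by exact_mod_cast e0
      have e1' : k ≤ 1 := by exact_mod_cast e1
      omega
    have hconst : ∃ u w : ℝ, u < w ∧ w - u < 1 ∧ ∀ z ∈ Set.Icc u w, α' z = α' u := by
      rcases hk01 with rfl | rfl
      · refine ⟨a, b, hab, by linarith, fun z hz => ?_⟩
        have hba : α' b = α' a := by rw [hk]; push_cast; ring
        have h2 : α' a ≤ α' z := by
          rcases eq_or_lt_of_le hz.1 with h | h
          · rw [← h]
          · exact hmon a z h
        have h3 : α' z ≤ α' b := by
          rcases eq_or_lt_of_le hz.2 with h | h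
          · rw [h]
          · exact hmon z b h
        linarith
      · refine ⟨b, a + 1, hab1, by linarith, fun z hz => ?_⟩
        have hba : α' (a + 1) = α' b := by rw [hαdeg, hk]; push_cast; ring
        have h2 : α' b ≤ α' z := by
          rcases eq_or_lt_of_le hz.1 with h | h
          · rw [← h]
          · exact hmon b z h
        have h3 : α' z ≤ α' (a + 1) := by
          rcases eq_or_lt_of_le hz.2 with h | h
          · rw [h]
          · exact hmon z (a + 1) h
        linarith
    obtain ⟨u, w, huw, hlen, hcst⟩ := hconst
    obtain ⟨z, hz, hzne⟩ := nonconst u w huw hlen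
    exact hzne (hcst z hz)
  -- set up the window length and the infimum of variations
  set ε' : ℝ := α' p - α' q with hε'def
  have hε'0 : 0 < ε' := by rw [hε'def]; linarith
  set L : ℕ := ⌈q - p⌉₊ + 1 with hLdef
  set Lr : ℝ := (L : ℝ) with hLrdef
  have hLr0 : (0 : ℝ) < Lr := by
    rw [hLrdef]
    exact_mod_cast Nat.succ_pos _
  have hLrge : q - p + 1 ≤ Lr := by
    have := Nat.le_ceil (q - p)
    rw [hLrdef, hLdef]
    push_cast
    linarith
  set W : ℝ≥0∞ := ⨅ x : ℝ, eVariationOn α' (Set.Icc x (x + Lr)) with hWdef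
  have hWle : ∀ y : ℝ, W ≤ eVariationOn α' (Set.Icc y (y + Lr)) := fun y => iInf_le _ y
  have hWlb : ENNReal.ofReal Lr ≤ W := by
    refine le_iInf fun x => ?_
    have hmem1 : x ∈ Set.Icc x (x + Lr) := ⟨le_rfl, by linarith⟩
    have hmem2 : x + Lr ∈ Set.Icc x (x + Lr) := ⟨by linarith, le_rfl⟩
    have hedist := eVariationOn.edist_le α' hmem2 hmem1
    have hup : α' (x + Lr) = α' x + Lr := by
      rw [hLrdef]
      exact βnat L x
    rw [hup, edist_dist, Real.dist_eq] at hedist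
    simpa [abs_of_nonneg hLr0.le] using hedist
  have hW0 : W ≠ 0 := by
    intro h0
    rw [h0, le_zero_iff, ENNReal.ofReal_eq_zero] at hWlb
    linarith
  -- choose N large
  obtain ⟨N, hN⟩ : ∃ N : ℕ, 6 * C0 + 4 * Lr ≤ 2 ^ N * ε' := by
    obtain ⟨n, hn⟩ := exists_nat_ge ((6 * C0 + 4 * Lr) / ε')
    refine ⟨n, ?_⟩
    have h2 : (n : ℝ) ≤ 2 ^ n := by exact_mod_cast (Nat.lt_two_pow_self (n := n)).le
    rw [div_le_iff₀ hε'0] at hn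
    nlinarith
  -- the key window estimate
  have key : ∀ x : ℝ, ((2 ^ N + 1 : ℕ) : ℝ≥0∞) * W
      ≤ ENNReal.ofReal ((2 : ℝ) ^ N) * eVariationOn α' (Set.Icc x (x + Lr)) := by
    intro x
    have hFc : Continuous (g'^[N]) := hg'.iterate N
    -- segment counting lemmas
    have segUp : ∀ u v : ℝ, u ≤ v →
        ((⌊(g'^[N] v - g'^[N] u) / Lr⌋₊ : ℕ) : ℝ≥0∞) * W
          ≤ eVariationOn (α' ∘ g'^[N]) (Set.Icc u v) := by
      intro u v huv
      rcases le_or_gt 0 (g'^[N] v - g'^[N] u) with h0 | h0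
      · refine lap_up α' W Lr hLr0 hWle _ hFc huv ?_
        have hfl : (⌊(g'^[N] v - g'^[N] u) / Lr⌋₊ : ℝ) ≤ (g'^[N] v - g'^[N] u) / Lr :=
          Nat.floor_le (by positivity)
        rw [le_div_iff₀ hLr0] at hfl
        linarith
      · have hz : (⌊(g'^[N] v - g'^[N] u) / Lr⌋₊ : ℕ) = 0 := by
          apply Nat.floor_eq_zero.2
          exact lt_trans (div_neg_of_neg_of_pos h0 hLr0) zero_lt_one
        rw [hz]
        simp
    have segDown : ∀ u v : ℝ, u ≤ v →
        ((⌊(g'^[N] u - g'^[N] v) / Lr⌋₊ : ℕ) : ℝ≥0∞) * W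
          ≤ eVariationOn (α' ∘ g'^[N]) (Set.Icc u v) := by
      intro u v huv
      rcases le_or_gt 0 (g'^[N] u - g'^[N] v) with h0 | h0
      · refine lap_down α' W Lr hLr0 hWle _ hFc huv ?_
        have hfl : (⌊(g'^[N] u - g'^[N] v) / Lr⌋₊ : ℝ) ≤ (g'^[N] u - g'^[N] v) / Lr :=
          Nat.floor_le (by positivity)
        rw [le_div_iff₀ hLr0] at hfl
        linarith
      · have hz : (⌊(g'^[N] u - g'^[N] v) / Lr⌋₊ : ℕ) = 0 := by
          apply Nat.floor_eq_zero.2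
          exact lt_trans (div_neg_of_neg_of_pos h0 hLr0) zero_lt_one
        rw [hz]
        simp
    -- translated descending pair inside the window
    set k0 : ℤ := ⌈x - p⌉ with hk0def
    set p' : ℝ := p + (k0 : ℝ) with hp'def
    set q' : ℝ := q + (k0 : ℝ) with hq'def
    have hxp' : x ≤ p' := by
      have := Int.le_ceil (x - p)
      rw [hp'def]; linarith
    have hp'x1 : p' < x + 1 := by
      have := Int.ceil_lt_add_one (x - p)
      rw [hp'def]; linarith
    have hp'q' : p' ≤ q' := by rw [hp'def, hq'def]; linarith
    have hq'le : q' ≤ x + Lr := by rw [hq'def]; linarith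
    have hαp' : α' p' = α' p + k0 := βint k0 p
    have hαq' : α' q' = α' q + k0 := βint k0 q
    have hεp' : α' p' - α' q' = ε' := by rw [hαp', hαq', hε'def]; ring
    -- rises
    have bb1 := abs_le.1 (hb N p')
    have bb2 := abs_le.1 (hb N x)
    have bb3 := abs_le.1 (hb N q')
    have hr1 : 2 ^ N * (α' p' - α' x) - 2 * C0 ≤ g'^[N] p' - g'^[N] x := by
      have := bb1.1; have := bb2.2; linarith [bb1.1, bb2.2]
    have hr2 : 2 ^ N * ε' - 2 * C0 ≤ g'^[N] p' - g'^[N] q' := by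
      have h4 : 2 ^ N * (α' p' - α' q') - 2 * C0 ≤ g'^[N] p' - g'^[N] q' := by
        linarith [bb1.1, bb3.2]
      rw [hεp'] at h4
      exact h4
    have hiterL : g'^[N] (x + Lr) = g'^[N] x + 2 ^ N * Lr := by
      rw [hLrdef]
      exact hiternat N L x
    have hr3 : 2 ^ N * (α' x + Lr - α' q') - 2 * C0 ≤ g'^[N] (x + Lr) - g'^[N] q' := by
      rw [hiterL]
      have := bb2.1; have := bb3.2
      nlinarith [bb2.1, bb3.2]
    set m1 : ℕ := ⌊(g'^[N] p' - g'^[N] x) / Lr⌋₊ with hm1def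
    set m2 : ℕ := ⌊(g'^[N] p' - g'^[N] q') / Lr⌋₊ with hm2def
    set m3 : ℕ := ⌊(g'^[N] (x + Lr) - g'^[N] q') / Lr⌋₊ with hm3def
    have hcount : 2 ^ N + 1 ≤ m1 + m2 + m3 := by
      have f1 : (g'^[N] p' - g'^[N] x) / Lr - 1 < (m1 : ℝ) := Nat.sub_one_lt_floor _
      have f2 : (g'^[N] p' - g'^[N] q') / Lr - 1 < (m2 : ℝ) := Nat.sub_one_lt_floor _
      have f3 : (g'^[N] (x + Lr) - g'^[N] q') / Lr - 1 < (m3 : ℝ) := Nat.sub_one_lt_floor _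
      have e1 : 2 ^ N * Lr + 4 * Lr ≤ (g'^[N] p' - g'^[N] x) + (g'^[N] p' - g'^[N] q')
          + (g'^[N] (x + Lr) - g'^[N] q') := by
        have hx1 : 2 ^ N * (α' p' - α' x) + 2 ^ N * ε' + 2 ^ N * (α' x + Lr - α' q')
            = 2 ^ N * Lr + 2 * (2 ^ N * ε') := by rw [← hεp']; ring
        linarith [hr1, hr2, hr3, hx1, hN, hC0nn, hLr0]
      have e3 : (2 : ℝ) ^ N + 4 ≤ (g'^[N] p' - g'^[N] x) / Lr
          + (g'^[N] p' - g'^[N] q') / Lr + (g'^[N] (x + Lr) - g'^[N] q') / Lr := by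
        rw [← add_div, ← add_div, le_div_iff₀ hLr0]
        have hx2 : ((2 : ℝ) ^ N + 4) * Lr = 2 ^ N * Lr + 4 * Lr := by ring
        linarith [e1]
      have hsum : (2 : ℝ) ^ N + 1 < (m1 : ℝ) + m2 + m3 := by linarith
      have : ((2 ^ N + 1 : ℕ) : ℝ) < ((m1 + m2 + m3 : ℕ) : ℝ) := by push_cast; linarith
      exact_mod_cast this.le
    have hsplit : eVariationOn (α' ∘ g'^[N]) (Set.Icc x p')
        + eVariationOn (α' ∘ g'^[N]) (Set.Icc p' q')
        + eVariationOn (α' ∘ g'^[N]) (Set.Icc q' (x + Lr))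
        ≤ eVariationOn (α' ∘ g'^[N]) (Set.Icc x (x + Lr)) := by
      have A := icc_split (α' ∘ g'^[N]) hxp' hp'q'
      have B := icc_split (α' ∘ g'^[N]) (hxp'.trans hp'q') hq'le
      calc eVariationOn (α' ∘ g'^[N]) (Set.Icc x p')
          + eVariationOn (α' ∘ g'^[N]) (Set.Icc p' q')
          + eVariationOn (α' ∘ g'^[N]) (Set.Icc q' (x + Lr))
          ≤ eVariationOn (α' ∘ g'^[N]) (Set.Icc x q')
            + eVariationOn (α' ∘ g'^[N]) (Set.Icc q' (x + Lr)) := add_le_add A le_rfl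
        _ ≤ _ := B
    have htot : ((m1 + m2 + m3 : ℕ) : ℝ≥0∞) * W
        ≤ eVariationOn (α' ∘ g'^[N]) (Set.Icc x (x + Lr)) := by
      push_cast
      rw [add_mul, add_mul]
      refine le_trans (add_le_add (add_le_add (segUp x p' hxp') (segDown p' q' hp'q'))
        (segUp q' (x + Lr) hq'le)) hsplit
    have hscale : eVariationOn (α' ∘ g'^[N]) (Set.Icc x (x + Lr))
        ≤ ENNReal.ofReal ((2 : ℝ) ^ N) * eVariationOn α' (Set.Icc x (x + Lr)) := by
      rw [show α' ∘ g'^[N] = fun z => (2 : ℝ) ^ N * α' z from funext fun z => hsemiN N z]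
      exact evar_const_mul_le _ (by positivity) _ _
    calc ((2 ^ N + 1 : ℕ) : ℝ≥0∞) * W
        ≤ ((m1 + m2 + m3 : ℕ) : ℝ≥0∞) * W := by
          exact mul_le_mul_left (by exact_mod_cast Nat.cast_le.2 hcount) _
      _ ≤ eVariationOn (α' ∘ g'^[N]) (Set.Icc x (x + Lr)) := htot
      _ ≤ _ := hscale
  -- conclude W = ⊤
  have hWtop : W = ⊤ := by
    by_contra hWt
    have hD0 : ENNReal.ofReal ((2 : ℝ) ^ N) ≠ 0 := by
      rw [Ne, ENNReal.ofReal_eq_zero, not_le]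
      positivity
    have hAdivW : ((2 ^ N + 1 : ℕ) : ℝ≥0∞) * W / ENNReal.ofReal ((2 : ℝ) ^ N) ≤ W := by
      rw [hWdef]
      refine le_iInf fun x => ?_
      rw [ENNReal.div_le_iff_le_mul (Or.inl hD0) (Or.inl ENNReal.ofReal_ne_top)]
      refine le_trans ?_ (le_of_eq (mul_comm _ _))
      rw [← hWdef]
      exact key x
    rw [ENNReal.div_le_iff_le_mul (Or.inl hD0) (Or.inl ENNReal.ofReal_ne_top)] at hAdivW
    rw [mul_comm W _] at hAdivW
    have key2 : ((2 ^ N + 1 : ℕ) : ℝ≥0∞) ≤ ENNReal.ofReal ((2 : ℝ) ^ N) :=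
      (ENNReal.mul_le_mul_iff_left hW0 hWt).1 hAdivW
    have hlt : ENNReal.ofReal ((2 : ℝ) ^ N) < ((2 ^ N + 1 : ℕ) : ℝ≥0∞) := by
      have h1 : ENNReal.ofReal ((2 : ℝ) ^ N) = (2 : ℝ≥0∞) ^ N := by
        rw [ENNReal.ofReal_pow (by norm_num)]
        norm_num
      have h2 : ((2 ^ N + 1 : ℕ) : ℝ≥0∞) = (2 : ℝ≥0∞) ^ N + 1 := by push_cast; ring
      rw [h1, h2]
      exact ENNReal.lt_add_right (ENNReal.pow_ne_top ENNReal.ofNat_ne_top) one_ne_zero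
    exact absurd key2 (not_le.2 hlt)
  -- main statement: infinite variation on every nontrivial interval
  have main : ∀ s t : ℝ, s < t → eVariationOn α' (Set.Icc s t) = ⊤ := by
    intro s t hst
    by_contra hbv
    set r : ℝ := min t (s + 1 / 2) with hrdef
    have hsr : s < r := lt_min hst (by linarith)
    have hrt : r ≤ t := min_le_left _ _
    have hr1 : r - s < 1 := by
      have := min_le_right t (s + 1 / 2)
      rw [hrdef]; simp only [min_le_iff] at this ⊢
      have h2 : r ≤ s + 1 / 2 := min_le_right _ _
      linarith
    obtain ⟨z, hz, hzne⟩ := nonconst s r hsr hr1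
    set δ : ℝ := |α' z - α' s| with hδdef
    have hδ0 : 0 < δ := abs_pos.2 (sub_ne_zero.2 hzne)
    obtain ⟨K, hK⟩ : ∃ K : ℕ, Lr + 2 * C0 ≤ 2 ^ K * δ := by
      obtain ⟨n, hn⟩ := exists_nat_ge ((Lr + 2 * C0) / δ)
      refine ⟨n, ?_⟩
      have h2 : (n : ℝ) ≤ 2 ^ n := by exact_mod_cast (Nat.lt_two_pow_self (n := n)).le
      rw [div_le_iff₀ hδ0] at hn
      nlinarith
    have hsz : s ≤ z := hz.1
    have hzt : z ≤ t := hz.2.trans hrt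
    have bz := abs_le.1 (hb K z)
    have bs := abs_le.1 (hb K s)
    have hone : (1 : ℝ≥0∞) * W ≤ eVariationOn (α' ∘ g'^[K]) (Set.Icc s z) := by
      have hone' : ((1 : ℕ) : ℝ≥0∞) * W ≤ eVariationOn (α' ∘ g'^[K]) (Set.Icc s z) := by
        rcases lt_or_gt_of_ne hzne with hlt | hgt
        · refine lap_down α' W Lr hLr0 hWle 1 (hg'.iterate K) hsz ?_
          have hδeq : δ = α' s - α' z := by
            rw [hδdef, abs_of_neg (by linarith)]; ring
          have hδmul : 2 ^ K * δ = 2 ^ K * α' s - 2 ^ K * α' z := by rw [hδeq]; ring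
          push_cast
          linarith [bz.1, bz.2, bs.1, bs.2, hK, hδmul]
        · refine lap_up α' W Lr hLr0 hWle 1 (hg'.iterate K) hsz ?_
          have hδeq : δ = α' z - α' s := by
            rw [hδdef, abs_of_pos (by linarith)]
          have hδmul : 2 ^ K * δ = 2 ^ K * α' z - 2 ^ K * α' s := by rw [hδeq]; ring
          push_cast
          linarith [bz.1, bz.2, bs.1, bs.2, hK, hδmul]
      rwa [Nat.cast_one] at hone'
    have htop2 : eVariationOn (α' ∘ g'^[K]) (Set.Icc s z) = ⊤ := by
      rw [hWtop] at hone
      rw [one_mul] at hone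
      exact top_le_iff.1 hone
    have hscaleK : eVariationOn (α' ∘ g'^[K]) (Set.Icc s z)
        ≤ ENNReal.ofReal ((2 : ℝ) ^ K) * eVariationOn α' (Set.Icc s z) := by
      rw [show α' ∘ g'^[K] = fun y => (2 : ℝ) ^ K * α' y from funext fun y => hsemiN K y]
      exact evar_const_mul_le _ (by positivity) _ _
    have hsz_top : eVariationOn α' (Set.Icc s z) = ⊤ := by
      by_contra hne
      exact (ENNReal.mul_ne_top ENNReal.ofReal_ne_top hne)
        (top_le_iff.1 (htop2 ▸ hscaleK))
    have hmono := eVariationOn.mono α' (Set.Icc_subset_Icc (le_refl s) hzt)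
    rw [hsz_top] at hmono
    exact hbv (top_le_iff.1 hmono)
  constructor
  · intro s t hst hBV
    exact hBV (main s t hst)
  · refine ⟨1, le_rfl, fun j hj => ?_⟩
    rw [main 0 1 one_pos]
    exact le_top
end

section
/- For a continuous degree-two circle map g with light semiconjugacy α to angle doubling, the following are equivalent: (a) the lift g̃ is not injective; (b) α is not injective. Moreover, if α is injective then g is topologically conjugate to d and h_top(g) = log 2. -/
open Dynamics Set Function Filter Uniformity UniformSpace
open scoped ENNReal SetRel

namespace Stmt19Aux

noncomputable abbrev dmap : AddCircle (1:ℝ) → AddCircle (1:ℝ) := fun θ => θ + θ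

lemma coe_eq_iff (x y : ℝ) : (x : AddCircle (1:ℝ)) = (y : AddCircle (1:ℝ)) ↔ ∃ n : ℤ, y = x + n := by
  constructor
  · intro h
    rw [QuotientAddGroup.eq_iff_sub_mem] at h
    obtain ⟨n, hn⟩ := h
    simp only [zsmul_eq_mul, mul_one] at hn
    exact ⟨-n, by push_cast; linarith⟩
  · rintro ⟨n, rfl⟩
    rw [QuotientAddGroup.eq_iff_sub_mem]
    exact ⟨-n, by simp⟩

lemma dist_coe_le (s t : ℝ) : dist ((s: AddCircle (1:ℝ))) (t : AddCircle (1:ℝ)) ≤ |s - t| := by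
  rw [dist_eq_norm, ← AddCircle.coe_sub]
  simpa using QuotientAddGroup.norm_mk_le_norm (S := AddSubgroup.zmultiples (1:ℝ)) (m := s - t)

lemma norm_half : ‖((1/2 : ℝ) : AddCircle (1:ℝ))‖ = 1/2 := by
  rw [AddCircle.norm_eq]
  rw [show round ((1:ℝ)⁻¹ * (1/2)) = 1 by norm_num [round_eq]]
  norm_num

lemma dmap_iter_coe (i : ℕ) (t : ℝ) : dmap^[i] (t : AddCircle (1:ℝ)) = (((2:ℝ)^i * t : ℝ) : AddCircle (1:ℝ)) := by
  induction i with
  | zero => simp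
  | succ n ih =>
    rw [Function.iterate_succ_apply', ih]
    show _ + _ = _
    rw [← AddCircle.coe_add]
    congr 1
    ring

lemma dist_dmap_iter (i : ℕ) (x y : AddCircle (1:ℝ)) :
    dist (dmap^[i] x) (dmap^[i] y) ≤ 2^i * dist x y := by
  induction i with
  | zero => simp
  | succ n ih =>
    rw [Function.iterate_succ_apply', Function.iterate_succ_apply']
    calc dist (dmap (dmap^[n] x)) (dmap (dmap^[n] y))
        ≤ dist (dmap^[n] x) (dmap^[n] y) + dist (dmap^[n] x) (dmap^[n] y) :=
          dist_add_add_le _ _ _ _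
      _ ≤ 2^n * dist x y + 2^n * dist x y := by linarith
      _ = 2^(n+1) * dist x y := by ring

lemma key_sep {n k j : ℕ} (hk : k < 2^n) (hj : j < k) :
    ∃ i < n, dist (dmap^[i] (((k:ℝ)/2^n : ℝ) : AddCircle (1:ℝ)))
      (dmap^[i] (((j:ℝ)/2^n : ℝ) : AddCircle (1:ℝ))) = 1/2 := by
  set m := k - j with hm
  have hm0 : m ≠ 0 := Nat.sub_ne_zero_of_lt hj
  obtain ⟨v, q, hq, hmeq⟩ := Nat.exists_eq_pow_mul_and_not_dvd hm0 2 (by norm_num)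
  have hq0 : q ≠ 0 := by rintro rfl; simp at hmeq; exact hm0 hmeq
  have hvn : v < n := by
    by_contra hvn
    push_neg at hvn
    have : 2^n ≤ m := le_trans (Nat.pow_le_pow_right (by norm_num) hvn)
      (hmeq ▸ Nat.le_mul_of_pos_right _ (Nat.pos_of_ne_zero hq0))
    omega
  refine ⟨n - 1 - v, by omega, ?_⟩
  rw [dmap_iter_coe, dmap_iter_coe, dist_eq_norm, ← AddCircle.coe_sub]
  obtain ⟨l, hl⟩ : ∃ l, q = 2*l + 1 := ⟨q/2, by omega⟩
  have hkey : (2:ℝ)^(n-1-v) * ((k:ℝ)/2^n) - 2^(n-1-v) * ((j:ℝ)/2^n) = 1/2 + l := by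
    have h12 : (k:ℝ) - j = 2^v * (2*l+1) := by
      have : (m:ℝ) = (k:ℝ) - j := by rw [hm, Nat.cast_sub hj.le]
      rw [← this, hmeq, hl]; push_cast; ring
    have h3 : (2:ℝ)^(n-1-v) * 2^v * 2 = 2^n := by
      rw [mul_assoc, ← pow_succ, ← pow_add]
      congr 1
      omega
    have h2n : (2:ℝ)^n ≠ 0 := by positivity
    field_simp
    linear_combination (2*(2:ℝ)^(n-1-v))*h12 + ((2*(l:ℝ)+1))*h3
  rw [hkey]
  have : ((1/2 + l : ℝ) : AddCircle (1:ℝ)) = ((1/2 : ℝ) : AddCircle (1:ℝ)) := by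
    rw [coe_eq_iff]; exact ⟨-l, by push_cast; ring⟩
  rw [this, norm_half]

lemma netMaxcard_lower' {n : ℕ}
    (hsep : ∀ {k j : ℕ}, k < 2^n → j < k →
      ∃ i < n, dist (dmap^[i] (((k:ℝ)/2^n : ℝ) : AddCircle (1:ℝ)))
        (dmap^[i] (((j:ℝ)/2^n : ℝ) : AddCircle (1:ℝ))) = 1/2) :
    (2^n : ℕ∞) ≤ netMaxcard dmap Set.univ {p : (AddCircle (1:ℝ)) × (AddCircle (1:ℝ)) | dist p.1 p.2 < 1/4} n := by
  classical
  have hinj : Set.InjOn (fun k : ℕ => (((k:ℝ)/2^n : ℝ) : AddCircle (1:ℝ)))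
      (Finset.range (2^n)) := by
    intro a ha b hb hab
    have hab' : (((a:ℝ)/2^n : ℝ) : AddCircle (1:ℝ)) = (((b:ℝ)/2^n : ℝ) : AddCircle (1:ℝ)) := hab
    simp only [Finset.coe_range, Set.mem_Iio] at ha hb
    by_contra hne
    rcases Ne.lt_or_gt hne with h | h
    · obtain ⟨i, _, hd⟩ := hsep hb h
      rw [hab'] at hd; simp at hd
    · obtain ⟨i, _, hd⟩ := hsep ha h
      rw [hab'] at hd; simp at hd
  set s : Finset (AddCircle (1:ℝ)) :=
    (Finset.range (2^n)).image (fun k : ℕ => (((k:ℝ)/2^n : ℝ) : AddCircle (1:ℝ))) with hs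
  have hcard : s.card = 2^n := by
    rw [hs, Finset.card_image_of_injOn hinj, Finset.card_range]
  have hnet : IsDynNetIn dmap Set.univ
      {p : (AddCircle (1:ℝ)) × (AddCircle (1:ℝ)) | dist p.1 p.2 < 1/4} n
      (s : Set (AddCircle (1:ℝ))) := by
    refine ⟨Set.subset_univ _, ?_⟩
    intro x hx y hy hxy
    simp only [hs, Finset.coe_image, Finset.coe_range] at hx hy
    obtain ⟨a, ha, rfl⟩ := hx
    obtain ⟨b, hb, rfl⟩ := hy
    simp only [Set.mem_Iio] at ha hb
    have hne : a ≠ b := fun h => hxy (by rw [h])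
    have key : ∃ i < n, 1/2 ≤ dist (dmap^[i] (((a:ℝ)/2^n : ℝ) : AddCircle (1:ℝ)))
        (dmap^[i] (((b:ℝ)/2^n : ℝ) : AddCircle (1:ℝ))) := by
      rcases hne.lt_or_gt with h | h
      · obtain ⟨i, hi, hd⟩ := hsep hb h
        exact ⟨i, hi, by rw [dist_comm] at hd; exact hd.ge⟩
      · obtain ⟨i, hi, hd⟩ := hsep ha h
        exact ⟨i, hi, hd.ge⟩
    obtain ⟨i, hi, hd⟩ := key
    rw [Function.onFun, Set.disjoint_left]
    intro z hz hz'
    rw [mem_ball_dynEntourage] at hz hz'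
    have h1 := hz i hi
    have h2 := hz' i hi
    simp only [UniformSpace.ball, Set.mem_preimage, Set.mem_setOf_eq] at h1 h2
    have := dist_triangle (dmap^[i] (((a:ℝ)/2^n : ℝ) : AddCircle (1:ℝ))) (dmap^[i] z)
      (dmap^[i] (((b:ℝ)/2^n : ℝ) : AddCircle (1:ℝ)))
    rw [dist_comm (dmap^[i] z)] at this
    linarith
  have := hnet.card_le_netMaxcard
  rwa [hcard] at this


lemma netMaxcard_lower (n : ℕ) :
    (2^n : ℕ∞) ≤ netMaxcard dmap Set.univ
      {p : (AddCircle (1:ℝ)) × (AddCircle (1:ℝ)) | dist p.1 p.2 < 1/4} n :=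
  netMaxcard_lower' (fun {k j} hk hj => key_sep hk hj)

lemma coverMincard_upper {n : ℕ} {ε : ℝ} (hε : 0 < ε) (M : ℕ) (hM : (2:ℝ)^(n+1)/ε < M) :
    coverMincard dmap Set.univ {p : (AddCircle (1:ℝ)) × (AddCircle (1:ℝ)) | dist p.1 p.2 < ε/2} n
      ≤ (M : ℕ∞) := by
  classical
  have hM0 : 0 < (M:ℝ) := lt_trans (by positivity) hM
  set s : Finset (AddCircle (1:ℝ)) :=
    (Finset.range M).image (fun k : ℕ => (((k:ℝ)/M : ℝ) : AddCircle (1:ℝ))) with hs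
  have hcover : IsDynCoverOf dmap Set.univ
      {p : (AddCircle (1:ℝ)) × (AddCircle (1:ℝ)) | dist p.1 p.2 < ε/2} n
      (s : Set (AddCircle (1:ℝ))) := by
    intro θ _
    induction θ using QuotientAddGroup.induction_on with
    | H t =>
    set t' := Int.fract t with ht'
    have ht'0 : 0 ≤ t' := Int.fract_nonneg t
    have ht'1 : t' < 1 := Int.fract_lt_one t
    have hcoe : ((t : ℝ) : AddCircle (1:ℝ)) = ((t' : ℝ) : AddCircle (1:ℝ)) := by
      rw [coe_eq_iff]
      exact ⟨-⌊t⌋, by rw [ht', Int.fract]; push_cast; ring⟩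
    set k := ⌊t' * M⌋₊ with hk
    have h1 : (k:ℝ) ≤ t' * M := Nat.floor_le (by positivity)
    have h2 : t' * M < k + 1 := Nat.lt_floor_add_one _
    have hkM : k < M := by
      have : (k:ℝ) < M := lt_of_le_of_lt h1 (by nlinarith)
      exact_mod_cast this
    have hdist : |(k:ℝ)/M - t'| < 1/M := by
      have e1 : (k:ℝ)/M ≤ t' := (div_le_iff₀ hM0).2 (by linarith)
      have e2 : t' < ((k:ℝ)+1)/M := (lt_div_iff₀ hM0).2 (by linarith)
      have e3 : ((k:ℝ)+1)/M = (k:ℝ)/M + 1/M := add_div _ _ _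
      have h1M : (0:ℝ) < 1/M := by positivity
      exact abs_lt.2 ⟨by linarith, by linarith⟩
    refine ⟨(((k:ℝ)/M : ℝ) : AddCircle (1:ℝ)), ?_, ?_⟩
    · exact Finset.mem_coe.2 (Finset.mem_image.2 ⟨k, Finset.mem_range.2 hkM, rfl⟩)
    · rw [mem_dynEntourage]
      intro i hi
      simp only [UniformSpace.ball, Set.mem_preimage, Set.mem_setOf_eq]
      rw [hcoe, dist_comm]
      calc dist (dmap^[i] (((k:ℝ)/M : ℝ) : AddCircle (1:ℝ))) (dmap^[i] ((t' : ℝ) : AddCircle (1:ℝ)))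
          ≤ 2^i * dist ((((k:ℝ)/M : ℝ) : AddCircle (1:ℝ))) (((t' : ℝ) : AddCircle (1:ℝ))) :=
            dist_dmap_iter i _ _
        _ ≤ 2^i * |(k:ℝ)/M - t'| := by
            have := dist_coe_le ((k:ℝ)/M) t'
            have h2i : (0:ℝ) ≤ 2^i := by positivity
            nlinarith
        _ ≤ 2^n * (1/M) := by
            have hle : (2:ℝ)^i ≤ 2^n := pow_le_pow_right₀ (by norm_num) hi.le
            exact mul_le_mul hle hdist.le (abs_nonneg _) (by positivity)
        _ < ε/2 := by
            rw [div_lt_iff₀ hε] at hM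
            have : (2:ℝ)^(n+1) = 2^n * 2 := pow_succ 2 n
            rw [mul_one_div, div_lt_iff₀ hM0]
            nlinarith
  have hc := hcover.coverMincard_le_card
  refine le_trans hc ?_
  have : s.card ≤ M := le_trans Finset.card_image_le (by rw [Finset.card_range])
  exact_mod_cast this

lemma dmap_coverEntropy : coverEntropy dmap Set.univ = (Real.log 2 : EReal) := by
  apply le_antisymm
  · -- upper bound
    rw [coverEntropy_eq_iSup_basis Metric.uniformity_basis_dist dmap Set.univ]
    refine iSup₂_le fun ε hε => ?_
    have hC1 : (1:ℝ) ≤ 2/ε + 2 := by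
      have : 0 < 2/ε := by positivity
      linarith
    have hupper : ∀ n : ℕ, 1 ≤ n →
        coverEntropyEntourage dmap Set.univ
          {p : (AddCircle (1:ℝ)) × (AddCircle (1:ℝ)) | dist p.1 p.2 < ε}
          ≤ ((Real.log (2/ε + 2) / n + Real.log 2 : ℝ) : EReal) := by
      intro n hn
      set V := {p : (AddCircle (1:ℝ)) × (AddCircle (1:ℝ)) | dist p.1 p.2 < ε/2} with hV
      have hVsymm : SetRel.IsSymm V := by
        refine ⟨fun a b hab => ?_⟩
        simp only [hV, Set.mem_setOf_eq] at hab ⊢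
        rwa [dist_comm]
      have hVV : V ○ V ⊆ {p : (AddCircle (1:ℝ)) × (AddCircle (1:ℝ)) | dist p.1 p.2 < ε} := by
        rintro ⟨x, y⟩ ⟨z, hxz, hzy⟩
        simp only [Set.mem_setOf_eq, hV] at *
        calc dist x y ≤ dist x z + dist z y := dist_triangle _ _ _
          _ < ε/2 + ε/2 := add_lt_add hxz hzy
          _ = ε := by ring
      set M : ℕ := ⌈(2:ℝ)^(n+1)/ε⌉₊ + 1 with hMdef
      have hM : (2:ℝ)^(n+1)/ε < M := by
        have := Nat.le_ceil ((2:ℝ)^(n+1)/ε)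
        push_cast [hMdef]
        linarith
      have hMC : (M:ℝ) ≤ (2/ε + 2) * 2^n := by
        have h1 : (⌈(2:ℝ)^(n+1)/ε⌉₊ : ℝ) < (2:ℝ)^(n+1)/ε + 1 :=
          Nat.ceil_lt_add_one (by positivity)
        have h2 : (2:ℝ)^(n+1)/ε = (2/ε) * 2^n := by
          rw [pow_succ]; ring
        have h3 : (2:ℝ) ≤ 2 * 2^n := by
          nlinarith [one_le_pow₀ (by norm_num : (1:ℝ) ≤ 2) (n := n)]
        push_cast [hMdef]
        nlinarith [h1, h2]
      have hmc := coverMincard_upper hε M hM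
      have step1 : coverEntropyEntourage dmap Set.univ
          {p : (AddCircle (1:ℝ)) × (AddCircle (1:ℝ)) | dist p.1 p.2 < ε}
          ≤ coverEntropyEntourage dmap Set.univ (V ○ V) :=
        coverEntropyEntourage_antitone dmap Set.univ hVV
      have step2 : coverEntropyEntourage dmap Set.univ (V ○ V)
          ≤ ENNReal.log (coverMincard dmap Set.univ V n) / n :=
        coverEntropyEntourage_le_log_coverMincard_div (Set.mapsTo_univ _ _) (by omega)
      have hlogle : ENNReal.log (coverMincard dmap Set.univ V n)
          ≤ ((Real.log ((2/ε + 2) * 2^n) : EReal)) := by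
        rw [← ENNReal.log_ofReal_of_pos (by positivity : (0:ℝ) < (2/ε + 2) * 2^n)]
        apply ENNReal.log_monotone
        calc ((coverMincard dmap Set.univ V n : ℕ∞) : ℝ≥0∞) ≤ ((M : ℕ∞) : ℝ≥0∞) :=
              ENat.toENNReal_mono hmc
          _ = (M : ℝ≥0∞) := by simp
          _ = ENNReal.ofReal (M : ℝ) := (ENNReal.ofReal_natCast M).symm
          _ ≤ ENNReal.ofReal ((2/ε + 2) * 2^n) := ENNReal.ofReal_le_ofReal hMC
      have step3 : ENNReal.log (coverMincard dmap Set.univ V n) / (n : EReal)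
          ≤ ((Real.log ((2/ε + 2) * 2^n) : EReal)) / (n : EReal) := by
        exact EReal.div_le_div_right_of_nonneg (Nat.cast_nonneg' n) hlogle
      have step4 : ((Real.log ((2/ε + 2) * 2^n) : EReal)) / (n : EReal)
          = ((Real.log (2/ε + 2) / n + Real.log 2 : ℝ) : EReal) := by
        rw [← EReal.coe_coe_eq_natCast, ← EReal.coe_div]
        congr 1
        rw [Real.log_mul (by positivity) (by positivity), Real.log_pow]
        have hn0 : (n:ℝ) ≠ 0 := by positivity
        field_simp
      exact step1.trans (step2.trans (step3.trans (le_of_eq step4)))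
    have htend : Tendsto (fun n : ℕ => ((Real.log (2/ε + 2) / n + Real.log 2 : ℝ) : EReal)) atTop
        (nhds ((Real.log 2 : ℝ) : EReal)) := by
      rw [EReal.tendsto_coe]
      have : Tendsto (fun n : ℕ => Real.log (2/ε + 2) / n) atTop (nhds 0) :=
        Tendsto.div_atTop tendsto_const_nhds (tendsto_natCast_atTop_atTop)
      simpa using this.add tendsto_const_nhds
    exact ge_of_tendsto htend (eventually_atTop.2 ⟨1, hupper⟩)
  · -- lower bound
    have hU : {p : (AddCircle (1:ℝ)) × (AddCircle (1:ℝ)) | dist p.1 p.2 < 1/4} ∈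
        uniformity (AddCircle (1:ℝ)) := Metric.dist_mem_uniformity (by norm_num)
    refine le_trans ?_ (netEntropyEntourage_le_coverEntropy (T := dmap) Set.univ hU)
    rw [netEntropyEntourage]
    apply le_limsup_of_frequently_le'
    apply Eventually.frequently
    rw [eventually_atTop]
    refine ⟨1, fun n hn => ?_⟩
    have hlog : ((n : EReal)) * ((Real.log 2 : ℝ) : EReal)
        ≤ ENNReal.log (netMaxcard dmap Set.univ
          {p : (AddCircle (1:ℝ)) × (AddCircle (1:ℝ)) | dist p.1 p.2 < 1/4} n) := by
      have h1 := ENat.toENNReal_mono (netMaxcard_lower n)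
      have h2 : (((2:ℕ∞)^n : ℕ∞) : ℝ≥0∞) = (2:ℝ≥0∞)^n := by push_cast; ring
      have h3 := ENNReal.log_monotone (le_trans (le_of_eq h2.symm) h1)
      rw [ENNReal.log_pow] at h3
      have h4 : ENNReal.log 2 = ((Real.log 2 : ℝ) : EReal) := by
        rw [show (2:ℝ≥0∞) = ENNReal.ofReal 2 by simp]
        exact ENNReal.log_ofReal_of_pos (by norm_num)
      rwa [h4] at h3
    rw [EReal.le_div_iff_mul_le (Nat.cast_pos'.2 (lt_of_lt_of_le zero_lt_one hn)) (EReal.natCast_ne_top n)]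
    rwa [mul_comm] at hlog


lemma intValued_aux {f : ℝ → ℝ} (hf : Continuous f) (h : ∀ x, ∃ n : ℤ, f x = n)
    {x y : ℝ} (hlt : f x < f y) : False := by
  obtain ⟨n, hn⟩ := h x
  obtain ⟨m, hm⟩ := h y
  have hnm : n < m := by rw [hn, hm] at hlt; exact_mod_cast hlt
  have hmem : f x + 1/2 ∈ Set.uIcc (f x) (f y) := by
    rw [Set.mem_uIcc]
    left
    refine ⟨by linarith, ?_⟩
    have : (n:ℝ) + 1 ≤ m := by exact_mod_cast hnm
    rw [hn, hm]
    linarith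
  obtain ⟨z, _, hz⟩ := intermediate_value_uIcc hf.continuousOn hmem
  obtain ⟨k, hk⟩ := h z
  rw [hk, hn] at hz
  have h2 : (2*k : ℤ) = 2*n + 1 := by
    have : (2*(k:ℝ) : ℝ) = 2*(n:ℝ) + 1 := by linarith
    exact_mod_cast this
  omega

lemma intValued_const {f : ℝ → ℝ} (hf : Continuous f) (h : ∀ x, ∃ n : ℤ, f x = n)
    (x y : ℝ) : f x = f y := by
  rcases lt_trichotomy (f x) (f y) with hlt | heq | hgt
  · exact absurd hlt (fun hl => intValued_aux hf h hl)
  · exact heq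
  · exact absurd hgt (fun hl => (intValued_aux hf h hl))


end Stmt19Aux

open Dynamics Set Function Filter Stmt19Aux


/-- For a degree-two circle map `g` with light semiconjugacy `α`: the lift `g̃` is not
injective iff `α` is not injective; and if `α` is injective then `g` is topologically
conjugate to the doubling map and `h_top(g) = log 2`. -/
theorem stmt19
    (g : AddCircle (1 : ℝ) → AddCircle (1 : ℝ)) (hg : Continuous g)
    (g' : ℝ → ℝ) (hg' : Continuous g')
    (hglift : ∀ x : ℝ, g (x : AddCircle (1 : ℝ)) = ((g' x : ℝ) : AddCircle (1 : ℝ)))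
    (hgdeg : ∀ x : ℝ, g' (x + 1) = g' x + 2)
    (α : AddCircle (1 : ℝ) → AddCircle (1 : ℝ)) (hα : Continuous α)
    (α' : ℝ → ℝ) (hα' : Continuous α')
    (hαlift : ∀ x : ℝ, α (x : AddCircle (1 : ℝ)) = ((α' x : ℝ) : AddCircle (1 : ℝ)))
    (hαdeg : ∀ x : ℝ, α' (x + 1) = α' x + 1)
    (hsemi : ∀ θ, α (g θ) = α θ + α θ)
    (hlight : ∀ θ : AddCircle (1 : ℝ), IsTotallyDisconnected (α ⁻¹' {θ})) :
    (¬ Function.Injective g' ↔ ¬ Function.Injective α) ∧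
    (Function.Injective α →
      (∃ h : AddCircle (1 : ℝ) ≃ₜ AddCircle (1 : ℝ), ∀ θ, h (g θ) = h θ + h θ) ∧
      Dynamics.coverEntropy g Set.univ = (Real.log 2 : EReal)) := by
  have hcoe_surj : Function.Surjective ((↑) : ℝ → AddCircle (1:ℝ)) :=
    fun θ => QuotientAddGroup.induction_on θ (fun t => ⟨t, rfl⟩)
  -- degree relations over ℤ
  have hαdegN : ∀ (n : ℕ) (x : ℝ), α' (x + n) = α' x + n := by
    intro n
    induction n with
    | zero => simp
    | succ m ih =>
      intro x
      have h0 : ((m+1:ℕ):ℝ) = (m:ℝ) + 1 := by push_cast; ring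
      rw [h0, show x + ((m:ℝ)+1) = (x + (m:ℝ)) + 1 by ring, hαdeg, ih]
      ring
  have hαdegZ : ∀ (n : ℤ) (x : ℝ), α' (x + n) = α' x + n := by
    intro n x
    rcases le_or_gt 0 n with hn | hn
    · lift n to ℕ using hn
      exact_mod_cast hαdegN n x
    · have hneg : (0:ℤ) ≤ -n := by omega
      lift -n to ℕ using hneg with m hm
      have hmr : (m:ℝ) = -(n:ℝ) := by exact_mod_cast hm
      have h1 := hαdegN m (x + (n:ℝ))
      rw [show (x + (n:ℝ)) + (m:ℝ) = x by rw [hmr]; ring] at h1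
      linarith
  -- the constant c with α' ∘ g' = 2α' + c
  have hlift2 : ∀ x : ℝ, ∃ n : ℤ, α' (g' x) - 2 * α' x = n := by
    intro x
    have h1 : ((2 * α' x : ℝ) : AddCircle (1:ℝ)) = ((α' (g' x) : ℝ) : AddCircle (1:ℝ)) := by
      have h2 := hsemi ((x:ℝ) : AddCircle (1:ℝ))
      rw [hglift, hαlift, hαlift] at h2
      rw [show (2:ℝ) * α' x = α' x + α' x by ring, AddCircle.coe_add, ← h2]
    rw [coe_eq_iff] at h1
    obtain ⟨n, hn⟩ := h1
    exact ⟨n, by linarith⟩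
  have hc : ∀ x, α' (g' x) - 2 * α' x = α' (g' 0) - 2 * α' 0 := by
    intro x
    exact intValued_const ((hα'.comp hg').sub (continuous_const.mul hα')) hlift2 x 0
  set c : ℝ := α' (g' 0) - 2 * α' 0 with hcdef
  -- main iff (positive version)
  have main_iff : Function.Injective g' ↔ Function.Injective α := by
    constructor
    · -- hard direction
      intro hg'inj
      -- g' monotone
      have hg'mono : Monotone g' := by
        have h01 : StrictMonoOn g' (Set.Icc (0:ℝ) 1) := by
          apply ContinuousOn.strictMonoOn_of_injOn_Icc zero_le_one ?_ hg'.continuousOn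
            (hg'inj.injOn)
          rw [show (1:ℝ) = 0 + 1 by ring, hgdeg]
          linarith
        exact (hg'.strictMonoOn_of_inj_rigidity hg'inj zero_lt_one h01).monotone
      -- iterates
      have hiter : ∀ (n : ℕ) (x : ℝ), α' (g'^[n] x) = 2^n * α' x + (2^n - 1) * c := by
        intro n
        induction n with
        | zero => intro x; simp
        | succ m ih =>
          intro x
          rw [Function.iterate_succ_apply']
          have h1 := hc (g'^[m] x)
          rw [ih x] at h1
          have h2 : α' (g' (g'^[m] x)) = 2 * (2^m * α' x + (2^m - 1)*c) + c := by linarith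
          rw [h2]; ring
      -- bound on |α' t - t|
      obtain ⟨B, hB⟩ := isCompact_Icc.exists_bound_of_continuousOn
        (f := fun t => α' t - t) (s := Set.Icc (0:ℝ) 1) ((hα'.sub continuous_id).continuousOn)
      have hBall : ∀ t : ℝ, |α' t - t| ≤ B := by
        intro t
        have h1 : α' t - t = α' (Int.fract t) - Int.fract t := by
          have h2 : t = Int.fract t + (⌊t⌋ : ℤ) := by rw [Int.fract]; ring
          have h3 : α' t = α' (Int.fract t) + (⌊t⌋:ℤ) := by
            conv_lhs => rw [h2]
            rw [hαdegZ]
          rw [h3]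
          push_cast
          have : (t:ℝ) = Int.fract t + (⌊t⌋:ℝ) := by exact_mod_cast h2
          linarith
        rw [h1]
        have := hB (Int.fract t) ⟨Int.fract_nonneg t, (Int.fract_lt_one t).le⟩
        rwa [Real.norm_eq_abs] at this
      -- α' is the limit of monotone functions, hence monotone
      have hφ : ∀ (n : ℕ) (t : ℝ),
          |α' t - (g'^[n] t - (2^n - 1)*c)/2^n| ≤ B / 2^n := by
        intro n t
        have h2n : (0:ℝ) < 2^n := by positivity
        have key : α' t - (g'^[n] t - (2^n - 1)*c)/2^n
            = (α' (g'^[n] t) - g'^[n] t)/2^n := by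
          have h1 := hiter n t
          field_simp
          linarith
        rw [key, abs_div, abs_of_pos h2n, div_le_div_iff_of_pos_right h2n]
        exact hBall _
      have hmono : Monotone α' := by
        intro x y hxy
        have hGm : ∀ n : ℕ, Monotone (g'^[n]) := fun n => hg'mono.iterate n
        have hdiff : ∀ n : ℕ, α' x - α' y ≤ 2*B / 2^n := by
          intro n
          have h1 := hφ n x
          have h2 := hφ n y
          have h3 : g'^[n] x ≤ g'^[n] y := hGm n hxy
          have h2n : (0:ℝ) < 2^n := by positivity
          rw [abs_le] at h1 h2
          have h4 : (g'^[n] x - (2^n - 1)*c)/2^n ≤ (g'^[n] y - (2^n - 1)*c)/2^n := by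
            rw [div_le_div_iff_of_pos_right h2n]
            linarith
          have h5 : 2*B/2^n = B/2^n + B/2^n := by ring
          linarith
        have htend : Tendsto (fun n : ℕ => 2*B / 2^n) atTop (nhds 0) := by
          apply Tendsto.div_atTop tendsto_const_nhds
          exact tendsto_pow_atTop_atTop_of_one_lt one_lt_two
        have := ge_of_tendsto' htend hdiff
        linarith
      -- strict monotonicity from lightness
      have hsm : StrictMono α' := by
        intro a b hab
        rcases lt_or_eq_of_le (hmono hab.le) with h | heq
        · exact h
        · exfalso
          have hb1 : b < a + 1 := by
            by_contra hcon
            push_neg at hcon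
            have h2 := hmono hcon
            rw [show a + 1 = a + ((1:ℤ):ℝ) by norm_num, hαdegZ] at h2
            push_cast at h2
            linarith [heq]
          have hsub : ((↑) : ℝ → AddCircle (1:ℝ)) '' (Set.Icc a b)
              ⊆ α ⁻¹' {α ((a:ℝ) : AddCircle (1:ℝ))} := by
            rintro _ ⟨t, ht, rfl⟩
            have h1 : α' t = α' a := le_antisymm (heq ▸ hmono ht.2) (hmono ht.1)
            simp only [Set.mem_preimage, Set.mem_singleton_iff]
            rw [hαlift, hαlift, h1]
          have hconn : IsPreconnected (((↑) : ℝ → AddCircle (1:ℝ)) '' Set.Icc a b) :=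
            isPreconnected_Icc.image _ (AddCircle.continuous_mk' 1).continuousOn
          have hsing := hlight (α ((a:ℝ) : AddCircle (1:ℝ))) _ hsub hconn
          have hab' : ((a:ℝ) : AddCircle (1:ℝ)) = ((b:ℝ) : AddCircle (1:ℝ)) :=
            hsing (Set.mem_image_of_mem _ (Set.left_mem_Icc.2 hab.le))
              (Set.mem_image_of_mem _ (Set.right_mem_Icc.2 hab.le))
          rw [coe_eq_iff] at hab'
          obtain ⟨n, hn⟩ := hab'
          have e1 : (0:ℝ) < n := by linarith
          have e2 : (n:ℝ) < 1 := by linarith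
          have e3 : (0:ℤ) < n := by exact_mod_cast e1
          have e4 : (n:ℤ) < 1 := by exact_mod_cast e2
          omega
      -- injectivity of α
      have main : ∀ u v : ℝ, 0 ≤ u → u ≤ v → v < 1 →
          α ((u:ℝ) : AddCircle (1:ℝ)) = α ((v:ℝ) : AddCircle (1:ℝ)) →
          ((u:ℝ) : AddCircle (1:ℝ)) = ((v:ℝ) : AddCircle (1:ℝ)) := by
        intro u v hu huv hv1 hav
        rw [hαlift, hαlift, coe_eq_iff] at hav
        obtain ⟨n, hn⟩ := hav
        have h1 : α' u ≤ α' v := hmono huv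
        have h2 : α' v < α' u + 1 := by
          have h3 : v < u + 1 := by linarith
          have h4 := hsm h3
          rw [show u + 1 = u + ((1:ℤ):ℝ) by norm_num, hαdegZ] at h4
          push_cast at h4
          linarith
        have e3 : (0:ℤ) ≤ n := by
          have : (0:ℝ) ≤ n := by linarith
          exact_mod_cast this
        have e4 : (n:ℤ) < 1 := by
          have : (n:ℝ) < 1 := by linarith
          exact_mod_cast this
        have hn0 : n = 0 := by omega
        have : u = v := hsm.injective (by rw [hn, hn0]; push_cast; ring)
        rw [this]
      intro θ₁ θ₂ hθ
      obtain ⟨x, rfl⟩ := hcoe_surj θ₁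
      obtain ⟨y, rfl⟩ := hcoe_surj θ₂
      have hx : ((x:ℝ) : AddCircle (1:ℝ)) = ((Int.fract x : ℝ) : AddCircle (1:ℝ)) := by
        rw [coe_eq_iff]; exact ⟨-⌊x⌋, by rw [Int.fract]; push_cast; ring⟩
      have hy : ((y:ℝ) : AddCircle (1:ℝ)) = ((Int.fract y : ℝ) : AddCircle (1:ℝ)) := by
        rw [coe_eq_iff]; exact ⟨-⌊y⌋, by rw [Int.fract]; push_cast; ring⟩
      rw [hx, hy] at hθ ⊢
      rcases le_total (Int.fract x) (Int.fract y) with hle | hle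
      · exact main _ _ (Int.fract_nonneg x) hle (Int.fract_lt_one y) hθ
      · exact (main _ _ (Int.fract_nonneg y) hle (Int.fract_lt_one x) hθ.symm).symm
    · -- easy direction
      intro hinj
      have hα'inj : Function.Injective α' := by
        intro x y hxy
        have h1 : ((x:ℝ) : AddCircle (1:ℝ)) = ((y:ℝ) : AddCircle (1:ℝ)) :=
          hinj (by rw [hαlift, hαlift, hxy])
        rw [coe_eq_iff] at h1
        obtain ⟨n, rfl⟩ := h1
        have h2 := hαdegZ n x
        rw [h2] at hxy
        have : (n:ℝ) = 0 := by linarith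
        have : n = 0 := by exact_mod_cast this
        rw [this]; push_cast; ring
      intro x y hxy
      have h1 := hc x
      have h2 := hc y
      apply hα'inj
      rw [hxy] at h1
      linarith
  refine ⟨not_iff_not.mpr main_iff, ?_⟩
  intro hinj
  -- surjectivity of α
  have hα'surj : ∀ r : ℝ, ∃ x : ℝ, α' x = r := by
    intro r
    set n1 : ℤ := ⌊r - α' 0⌋ with hn1
    have h1 : α' ((n1:ℝ)) ≤ r := by
      have := hαdegZ n1 0
      rw [zero_add] at this
      rw [this]
      have := Int.floor_le (r - α' 0)
      linarith
    have h2 : r ≤ α' ((n1:ℝ) + 1) := by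
      rw [show (n1:ℝ) + 1 = ((n1:ℝ)) + ((1:ℤ):ℝ) by norm_num, hαdegZ]
      have := Int.lt_floor_add_one (r - α' 0)
      have h3 := hαdegZ n1 0
      rw [zero_add] at h3
      push_cast
      linarith [h3]
    have hsub := intermediate_value_Icc (by linarith : (n1:ℝ) ≤ (n1:ℝ)+1) hα'.continuousOn
    obtain ⟨x, _, hx⟩ := hsub ⟨h1, h2⟩
    exact ⟨x, hx⟩
  have hsurj : Function.Surjective α := by
    intro θ
    obtain ⟨r, rfl⟩ := hcoe_surj θ
    obtain ⟨x, hx⟩ := hα'surj r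
    exact ⟨((x:ℝ) : AddCircle (1:ℝ)), by rw [hαlift, hx]⟩
  -- homeomorphism
  let e : AddCircle (1:ℝ) ≃ AddCircle (1:ℝ) := Equiv.ofBijective α ⟨hinj, hsurj⟩
  have hecont : Continuous e := hα
  let h : AddCircle (1:ℝ) ≃ₜ AddCircle (1:ℝ) := hecont.homeoOfEquivCompactToT2
  have hh : ∀ z, h z = α z := fun z => rfl
  constructor
  · exact ⟨h, fun θ => by simp only [hh]; exact hsemi θ⟩
  · -- entropy
    have hconj : coverEntropy g Set.univ = coverEntropy dmap Set.univ := by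
      apply le_antisymm
      · have hsc : Function.Semiconj (⇑h.symm) dmap g := by
          intro y
          apply hinj
          have e1 : α (h.symm (dmap y)) = dmap y := by
            rw [← hh, Homeomorph.apply_symm_apply]
          have e2 : α (h.symm y) = y := by rw [← hh, Homeomorph.apply_symm_apply]
          rw [e1, hsemi, e2]
        have := coverEntropy_image_le_of_uniformContinuous hsc
          (CompactSpace.uniformContinuous_of_continuous h.symm.continuous) Set.univ
        rwa [Set.image_univ, Set.range_eq_univ.mpr h.symm.surjective] at this
      · have hsc : Function.Semiconj α g dmap := fun θ => hsemi θ
        have := coverEntropy_image_le_of_uniformContinuous hsc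
          (CompactSpace.uniformContinuous_of_continuous hα) Set.univ
        rwa [Set.image_univ, Set.range_eq_univ.mpr hsurj] at this
    rw [hconj]
    exact dmap_coverEntropy
end
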